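/- arXiv:1603.00430 — 5 statements merged into one kernel-verified Lean document; each statement's English description precedes it below -/
import Mathlib

section
/- Let a, q : ℝ → ℝ be continuous and bounded with inf_{x∈ℝ} a(x) > 0, let R ∈ ℝ and ε > 0. Then there exists no function z that is C² on (R,∞) and C¹ on [R,∞), with z > 0 on [R,∞), (1/x)·ln z(x) → 0 as x → +∞, and satisfying the differential inequality −a(x) z''(x) − q(x) z'(x) ≥ ε z(x) for all x ∈ (R,∞). -/
open Real Filter Set

private lemma eventually_gt_left {f : ℝ → ℝ} {d s : ℝ} (h : HasDerivAt f d s) (hd : d < 0) :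
    ∀ᶠ x in nhdsWithin s (Iio s), f s < f x := by
  have h1 : Tendsto (slope f s) (nhdsWithin s {s}ᶜ) (nhds d) :=
    hasDerivAt_iff_tendsto_slope.mp h
  have h2 : Tendsto (slope f s) (nhdsWithin s (Iio s)) (nhds d) :=
    h1.mono_left (nhdsWithin_mono s (fun x hx => ne_of_lt hx))
  have h3 : ∀ᶠ x in nhdsWithin s (Iio s), slope f s x < 0 :=
    h2.eventually_lt_const hd
  have h4 : ∀ᶠ x in nhdsWithin s (Iio s), x < s := eventually_mem_nhdsWithin
  filter_upwards [h3, h4] with x hx1 hx2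
  rw [slope_def_field] at hx1
  rcases div_neg_iff.mp hx1 with ⟨h5, h6⟩ | ⟨h5, h6⟩
  · linarith
  · linarith

private lemma stays_below {f g : ℝ → ℝ} {b x₀ : ℝ}
    (hf : ∀ x, x₀ ≤ x → HasDerivAt f (g x) x)
    (hneg : ∀ x, x₀ ≤ x → f x = b → g x < 0)
    (h0 : f x₀ < b) : ∀ x, x₀ ≤ x → f x < b := by
  intro x₁ hx₁
  by_contra hcon
  push_neg at hcon
  have hcont : ContinuousOn f (Icc x₀ x₁) := fun x hx =>
    ((hf x hx.1).continuousAt).continuousWithinAt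
  have hSclosed : IsClosed (Icc x₀ x₁ ∩ f ⁻¹' Ici b) :=
    hcont.preimage_isClosed_of_isClosed isClosed_Icc isClosed_Ici
  have hne : x₁ ∈ Icc x₀ x₁ ∩ f ⁻¹' Ici b := ⟨⟨hx₁, le_refl _⟩, hcon⟩
  have hbdd : BddBelow (Icc x₀ x₁ ∩ f ⁻¹' Ici b) := ⟨x₀, fun x hx => hx.1.1⟩
  set s := sInf (Icc x₀ x₁ ∩ f ⁻¹' Ici b) with hs_def
  have hs_mem : s ∈ Icc x₀ x₁ ∩ f ⁻¹' Ici b := hSclosed.csInf_mem ⟨x₁, hne⟩ hbdd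
  have hlt : ∀ x, x₀ ≤ x → x < s → f x < b := by
    intro x hx hxs
    by_contra h
    push_neg at h
    exact absurd (csInf_le hbdd ⟨⟨hx, hxs.le.trans hs_mem.1.2⟩, h⟩) (not_le.mpr hxs)
  have hs0 : x₀ < s := by
    rcases eq_or_lt_of_le hs_mem.1.1 with h | h
    · have hb : b ≤ f x₀ := by rw [h]; exact hs_mem.2
      linarith
    · exact h
  have hev : ∀ᶠ x in nhdsWithin s (Iio s), b < f x := by
    have hbs : b ≤ f s := hs_mem.2
    rcases eq_or_lt_of_le hbs with h | h
    · have hh := eventually_gt_left (hf s hs_mem.1.1) (hneg s hs_mem.1.1 h.symm)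
      filter_upwards [hh] with x hx
      rw [h]; exact hx
    · have hh : ∀ᶠ x in nhds s, b < f x :=
        ((hf s hs_mem.1.1).continuousAt).eventually_const_lt h
      exact hh.filter_mono nhdsWithin_le_nhds
  have hIoo : Ioo x₀ s ∈ nhdsWithin s (Iio s) := Ioo_mem_nhdsLT_of_mem ⟨hs0, le_refl s⟩
  obtain ⟨x, hx1, hx2⟩ := (hev.and (eventually_of_mem hIoo (fun x hx => hx))).exists
  exact absurd (hlt x hx2.1.le hx2.2) (not_lt.mpr hx1.le)

set_option maxHeartbeats 2000000 in
/-- Lemma 3.2 in Berestycki–Nadin. -/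
theorem no_positive_strict_supersolution
    (a q : ℝ → ℝ)
    (ha_cont : Continuous a) (hq_cont : Continuous q)
    (ha_bdd : ∃ M, ∀ x, |a x| ≤ M) (hq_bdd : ∃ M, ∀ x, |q x| ≤ M)
    (ha_pos : ∃ m > 0, ∀ x, m ≤ a x)
    (R ε : ℝ) (hε : 0 < ε) :
    ¬ ∃ z : ℝ → ℝ,
        ContDiffOn ℝ 2 z (Set.Ioi R) ∧
        ContDiffOn ℝ 1 z (Set.Ici R) ∧
        (∀ x ∈ Set.Ici R, 0 < z x) ∧
        Filter.Tendsto (fun x => Real.log (z x) / x) Filter.atTop (nhds 0) ∧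
        (∀ x ∈ Set.Ioi R, ε * z x ≤ -(a x * deriv (deriv z) x) - q x * deriv z x) := by
  rintro ⟨z, hz2, hz1, hzpos, hlim, hineq⟩
  obtain ⟨Ma, hMa⟩ := ha_bdd
  obtain ⟨Mq, hMq⟩ := hq_bdd
  obtain ⟨m, hm, ham⟩ := ha_pos
  have haMa : ∀ x, a x ≤ Ma := fun x => (le_abs_self _).trans (hMa x)
  have hmMa : m ≤ Ma := (ham 0).trans (haMa 0)
  have hMa0 : 0 < Ma := lt_of_lt_of_le hm hmMa
  have hMq0 : 0 ≤ Mq := (abs_nonneg _).trans (hMq 0)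
  set δ := ε / Ma with hδdef
  set Q := Mq / m with hQdef
  set c := δ / (2 * (Q + 1)) with hcdef
  have hδ : 0 < δ := div_pos hε hMa0
  have hQ0 : 0 ≤ Q := div_nonneg hMq0 hm.le
  have hc : 0 < c := div_pos hδ (by linarith)
  have hmQ : m * Q = Mq := by rw [hQdef]; field_simp
  have hMaδ : Ma * δ = ε := by rw [hδdef]; field_simp
  have hQc : Q * c ≤ δ / 2 := by
    have h01 : Q + 1 ≠ 0 := by positivity
    have h1 : (Q + 1) * c = δ / 2 := by rw [hcdef]; field_simp
    nlinarith [hc.le]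
  -- derivatives of z
  have hzd : ∀ x ∈ Ioi R, HasDerivAt z (deriv z x) x := fun x hx =>
    ((hz2.differentiableOn (by norm_num)).differentiableAt (Ioi_mem_nhds hx)).hasDerivAt
  have hz2' : ContDiffOn ℝ 1 (deriv z) (Ioi R) :=
    hz2.deriv_of_isOpen isOpen_Ioi (by norm_num)
  have hzdd : ∀ x ∈ Ioi R, HasDerivAt (deriv z) (deriv (deriv z) x) x := fun x hx =>
    ((hz2'.differentiableOn (by norm_num)).differentiableAt (Ioi_mem_nhds hx)).hasDerivAt
  set φ : ℝ → ℝ := fun x => deriv z x / z x with hφdef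
  set ψ : ℝ → ℝ := fun x => (deriv (deriv z) x * z x - deriv z x * deriv z x) / z x ^ 2
    with hψdef
  have hφd : ∀ x ∈ Ioi R, HasDerivAt φ (ψ x) x := fun x hx =>
    (hzdd x hx).div (hzd x hx) (ne_of_gt (hzpos x (mem_Ici.mpr (le_of_lt hx))))
  -- the key Riccati estimate
  have hA : ∀ x ∈ Ioi R, |φ x| ≤ c → ψ x ≤ -(δ / 2) := by
    intro x hx hφx
    have hu : 0 < z x := hzpos x (mem_Ici.mpr (le_of_lt hx))
    have h1 : ε * z x ≤ -(a x * deriv (deriv z) x) - q x * deriv z x := hineq x hx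
    have hu' : |deriv z x| ≤ c * z x := by
      have h2 : |deriv z x| / z x ≤ c := by
        have := hφx
        rw [hφdef] at this
        simpa [abs_div, abs_of_pos hu] using this
      calc |deriv z x| = |deriv z x| / z x * z x := by field_simp
        _ ≤ c * z x := mul_le_mul_of_nonneg_right h2 hu.le
    have h2 : -(q x * deriv z x) ≤ Mq * (c * z x) := by
      calc -(q x * deriv z x) ≤ |q x * deriv z x| := neg_le_abs _
        _ = |q x| * |deriv z x| := abs_mul _ _
        _ ≤ Mq * (c * z x) := mul_le_mul (hMq x) hu' (abs_nonneg _) hMq0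
    have e1 : Mq * (c * z x) ≤ a x * (Q * c) * z x := by
      rw [← hmQ]
      nlinarith [ham x, mul_nonneg (mul_nonneg hQ0 hc.le) hu.le]
    have e2 : a x * δ * z x ≤ ε * z x := by
      rw [← hMaδ]
      nlinarith [haMa x, mul_nonneg hδ.le hu.le]
    have h3 : a x * deriv (deriv z) x ≤ a x * ((Q * c - δ) * z x) := by nlinarith
    have h4 : deriv (deriv z) x ≤ (Q * c - δ) * z x :=
      le_of_mul_le_mul_left h3 (lt_of_lt_of_le hm (ham x))
    have h5 : deriv (deriv z) x ≤ -(δ / 2) * z x := by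
      nlinarith [mul_le_mul_of_nonneg_right (show Q * c - δ ≤ -(δ / 2) by linarith) hu.le]
    rw [hψdef]
    simp only
    rw [div_le_iff₀ (by positivity)]
    nlinarith [sq_nonneg (deriv z x), mul_le_mul_of_nonneg_right h5 hu.le]
  -- logarithmic derivative
  have hlogd : ∀ x ∈ Ioi R, HasDerivAt (fun y => Real.log (z y)) (φ x) x := fun x hx =>
    (hzd x hx).log (ne_of_gt (hzpos x (mem_Ici.mpr (le_of_lt hx))))
  clear_value φ ψ
  clear hφdef hψdef
  clear_value δ Q c
  clear hδdef hQdef hcdef hmQ hMaδ hineq hzd hzdd hz2' hMa hMq ham haMa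
  by_cases hcase : ∃ x₀, R < x₀ ∧ φ x₀ < c
  · -- φ eventually stays below c, then drops below -c, giving exponential decay
    obtain ⟨x₀, hx₀R, hφx₀⟩ := hcase
    have hb1 : ∀ x, x₀ ≤ x → φ x < c := by
      refine stays_below (fun x hx => hφd x (lt_of_lt_of_le hx₀R hx)) ?_ hφx₀
      intro x hx hfx
      have h := hA x (lt_of_lt_of_le hx₀R hx) (by rw [hfx, abs_of_pos hc])
      linarith
    have hx₂ : ∃ x₂, x₀ ≤ x₂ ∧ φ x₂ < -c := by
      by_contra hcon
      push_neg at hcon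
      have hstrip : ∀ x, x₀ ≤ x → ψ x ≤ -(δ / 2) := fun x hx =>
        hA x (lt_of_lt_of_le hx₀R hx) (abs_le.mpr ⟨hcon x hx, (hb1 x hx).le⟩)
      have hanti : AntitoneOn (fun x => φ x + δ / 2 * x) (Ici x₀) := by
        have hdg : ∀ x ∈ Ici x₀, HasDerivAt (fun y => φ y + δ / 2 * y) (ψ x + δ / 2) x := by
          intro x hx
          have h1 := hφd x (lt_of_lt_of_le hx₀R hx)
          have h2 : HasDerivAt (fun y : ℝ => δ / 2 * y) (δ / 2) x := by
            simpa using (hasDerivAt_id x).const_mul (δ / 2)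
          exact h1.add h2
        apply antitoneOn_of_deriv_nonpos (convex_Ici x₀)
        · exact fun x hx => ((hdg x hx).continuousAt).continuousWithinAt
        · rw [interior_Ici]
          exact fun x hx => ((hdg x (mem_Ici.mpr (le_of_lt hx))).differentiableAt).differentiableWithinAt
        · rw [interior_Ici]
          intro x hx
          rw [(hdg x (mem_Ici.mpr (le_of_lt hx))).deriv]
          have := hstrip x (le_of_lt hx)
          linarith
      set x₃ := x₀ + 2 / δ * (φ x₀ + c) + 1 with hx₃def
      have hφ₀ : -c ≤ φ x₀ := hcon x₀ le_rfl
      have hx₃ : x₀ ≤ x₃ := by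
        have h1 : 0 ≤ φ x₀ + c := by linarith
        have h2 : 0 ≤ 2 / δ * (φ x₀ + c) := by positivity
        rw [hx₃def]; linarith
      have hmono := hanti (mem_Ici.mpr le_rfl) (mem_Ici.mpr hx₃) hx₃
      simp only at hmono
      have hexp : δ / 2 * x₃ = δ / 2 * x₀ + (φ x₀ + c) + δ / 2 := by
        rw [hx₃def]; field_simp
      have hlb := hcon x₃ hx₃
      linarith
    obtain ⟨x₂, hx₂0, hφx₂⟩ := hx₂
    have hx₂R : R < x₂ := lt_of_lt_of_le hx₀R hx₂0
    have hb2 : ∀ x, x₂ ≤ x → φ x < -c := by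
      refine stays_below (fun x hx => hφd x (lt_of_lt_of_le hx₂R hx)) ?_ hφx₂
      intro x hx hfx
      have habs : |φ x| ≤ c := by rw [hfx, abs_neg, abs_of_pos hc]
      have h := hA x (lt_of_lt_of_le hx₂R hx) habs
      linarith
    have hanti : AntitoneOn (fun x => Real.log (z x) + c * x) (Ici x₂) := by
      have hdg : ∀ x ∈ Ici x₂, HasDerivAt (fun y => Real.log (z y) + c * y) (φ x + c) x := by
        intro x hx
        have h1 := hlogd x (lt_of_lt_of_le hx₂R hx)
        have h2 : HasDerivAt (fun y : ℝ => c * y) c x := by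
          simpa using (hasDerivAt_id x).const_mul c
        exact h1.add h2
      apply antitoneOn_of_deriv_nonpos (convex_Ici x₂)
      · exact fun x hx => ((hdg x hx).continuousAt).continuousWithinAt
      · rw [interior_Ici]
        exact fun x hx => ((hdg x (mem_Ici.mpr (le_of_lt hx))).differentiableAt).differentiableWithinAt
      · rw [interior_Ici]
        intro x hx
        rw [(hdg x (mem_Ici.mpr (le_of_lt hx))).deriv]
        have := hb2 x (le_of_lt hx)
        linarith
    set A := Real.log (z x₂) + c * x₂ with hAdef
    have hdecay : ∀ x, x₂ ≤ x → Real.log (z x) ≤ A - c * x := by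
      intro x hx
      have := hanti (mem_Ici.mpr le_rfl) (mem_Ici.mpr hx) hx
      simp only at this
      rw [hAdef]; linarith
    have hev1 : ∀ᶠ x in atTop, -(c / 2) < Real.log (z x) / x :=
      hlim.eventually_const_lt (by linarith)
    obtain ⟨x, hxlt, hxge⟩ :=
      (hev1.and (eventually_ge_atTop (max x₂ (max 1 (2 * |A| / c + 1))))).exists
    have hx₂' : x₂ ≤ x := le_trans (le_max_left _ _) hxge
    have hx1 : (1 : ℝ) ≤ x := le_trans (le_trans (le_max_left _ _) (le_max_right _ _)) hxge
    have hxA : 2 * |A| / c + 1 ≤ x :=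
      le_trans (le_trans (le_max_right _ _) (le_max_right _ _)) hxge
    have hxpos : 0 < x := by linarith
    have h1 : Real.log (z x) ≤ A - c * x := hdecay x hx₂'
    have h2 : -(c / 2) * x < Real.log (z x) := (lt_div_iff₀ hxpos).mp hxlt
    have h4 : c * (2 * |A| / c + 1) ≤ c * x := mul_le_mul_of_nonneg_left hxA hc.le
    have h5 : c * (2 * |A| / c + 1) = 2 * |A| + c := by field_simp
    have h6 : A ≤ |A| := le_abs_self A
    linarith
  · -- φ ≥ c everywhere beyond R: exponential growth
    push_neg at hcase
    set x₁ := R + 1 with hx₁def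
    have hx₁R : R < x₁ := by rw [hx₁def]; linarith
    have hmono : MonotoneOn (fun x => Real.log (z x) - c * x) (Ici x₁) := by
      have hdg : ∀ x ∈ Ici x₁, HasDerivAt (fun y => Real.log (z y) - c * y) (φ x - c) x := by
        intro x hx
        have h1 := hlogd x (lt_of_lt_of_le hx₁R hx)
        have h2 : HasDerivAt (fun y : ℝ => c * y) c x := by
          simpa using (hasDerivAt_id x).const_mul c
        exact h1.sub h2
      apply monotoneOn_of_deriv_nonneg (convex_Ici x₁)
      · exact fun x hx => ((hdg x hx).continuousAt).continuousWithinAt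
      · rw [interior_Ici]
        exact fun x hx => ((hdg x (mem_Ici.mpr (le_of_lt hx))).differentiableAt).differentiableWithinAt
      · rw [interior_Ici]
        intro x hx
        rw [(hdg x (mem_Ici.mpr (le_of_lt hx))).deriv]
        have := hcase x (lt_of_lt_of_le hx₁R (le_of_lt hx))
        linarith
    set A := Real.log (z x₁) - c * x₁ with hAdef
    have hgrow : ∀ x, x₁ ≤ x → A + c * x ≤ Real.log (z x) := by
      intro x hx
      have := hmono (mem_Ici.mpr le_rfl) (mem_Ici.mpr hx) hx
      simp only at this
      rw [hAdef]; linarith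
    have hev1 : ∀ᶠ x in atTop, Real.log (z x) / x < c / 2 :=
      hlim.eventually_lt_const (by linarith)
    obtain ⟨x, hxlt, hxge⟩ :=
      (hev1.and (eventually_ge_atTop (max x₁ (max 1 (2 * |A| / c + 1))))).exists
    have hx₁' : x₁ ≤ x := le_trans (le_max_left _ _) hxge
    have hx1 : (1 : ℝ) ≤ x := le_trans (le_trans (le_max_left _ _) (le_max_right _ _)) hxge
    have hxA : 2 * |A| / c + 1 ≤ x :=
      le_trans (le_trans (le_max_right _ _) (le_max_right _ _)) hxge
    have hxpos : 0 < x := by linarith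
    have h1 : A + c * x ≤ Real.log (z x) := hgrow x hx₁'
    have h2 : Real.log (z x) < c / 2 * x := by
      have := (div_lt_iff₀ hxpos).mp hxlt
      linarith
    have h4 : c * (2 * |A| / c + 1) ≤ c * x := mul_le_mul_of_nonneg_left hxA hc.le
    have h5 : c * (2 * |A| / c + 1) = 2 * |A| + c := by field_simp
    have h6 : -A ≤ |A| := neg_le_abs A
    linarith
end

section
/- Let Lφ = a φ'' + q φ' + c φ with a, q, c : ℝ → ℝ continuous and bounded and inf_ℝ a > 0. Then for every R ∈ {−∞} ∪ ℝ one has λ̄₁(L,(R,∞)) ≥ λ̲₁(L,(R,∞)), where (R,∞) = ℝ when R = −∞. -/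
open Real Filter Set

/-- The second order elliptic operator `L φ = a φ'' + q φ' + c φ`. -/
noncomputable def Lop (a q c φ : ℝ → ℝ) (x : ℝ) : ℝ :=
  a x * deriv (deriv φ) x + q x * deriv φ x + c x * φ x

/-- The set `A_R` of admissible test functions on `(R,∞)`:
`C¹` on `[R,∞)`, `C²` on `(R,∞)`, positive on `[R,∞)`, with `φ'/φ` bounded on `(R,∞)`
and `(1/x) log φ(x) → 0` as `x → +∞`. -/
def AdmissibleOn (R : ℝ) (φ : ℝ → ℝ) : Prop :=
  ContDiffOn ℝ 1 φ (Set.Ici R) ∧ ContDiffOn ℝ 2 φ (Set.Ioi R) ∧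
  (∀ x ∈ Set.Ici R, 0 < φ x) ∧
  (∃ M, ∀ x ∈ Set.Ioi R, |deriv φ x / φ x| ≤ M) ∧
  Filter.Tendsto (fun x => Real.log (φ x) / x) Filter.atTop (nhds 0)

/-- The set `A_{-∞}` of admissible test functions on `ℝ`:
`C²` on `ℝ`, positive, with `φ'/φ` bounded and `(1/x) log φ(x) → 0` as `|x| → +∞`. -/
def AdmissibleAll (φ : ℝ → ℝ) : Prop :=
  ContDiff ℝ 2 φ ∧ (∀ x, 0 < φ x) ∧
  (∃ M, ∀ x, |deriv φ x / φ x| ≤ M) ∧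
  Filter.Tendsto (fun x => Real.log (φ x) / x) Filter.atTop (nhds 0) ∧
  Filter.Tendsto (fun x => Real.log (φ x) / x) Filter.atBot (nhds 0)

/-- The generalized principal eigenvalue `λ̲₁(L,(R,∞))`. -/
noncomputable def lamLower (a q c : ℝ → ℝ) (R : ℝ) : ℝ :=
  sSup {lam : ℝ | ∃ φ, AdmissibleOn R φ ∧ ∀ x ∈ Set.Ioi R, lam * φ x ≤ Lop a q c φ x}

/-- The generalized principal eigenvalue `λ̄₁(L,(R,∞))`. -/
noncomputable def lamUpper (a q c : ℝ → ℝ) (R : ℝ) : ℝ :=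
  sInf {lam : ℝ | ∃ φ, AdmissibleOn R φ ∧ ∀ x ∈ Set.Ioi R, Lop a q c φ x ≤ lam * φ x}

/-- The generalized principal eigenvalue `λ̲₁(L,ℝ)`. -/
noncomputable def lamLowerAll (a q c : ℝ → ℝ) : ℝ :=
  sSup {lam : ℝ | ∃ φ, AdmissibleAll φ ∧ ∀ x : ℝ, lam * φ x ≤ Lop a q c φ x}

/-- The generalized principal eigenvalue `λ̄₁(L,ℝ)`. -/
noncomputable def lamUpperAll (a q c : ℝ → ℝ) : ℝ :=
  sInf {lam : ℝ | ∃ φ, AdmissibleAll φ ∧ ∀ x : ℝ, Lop a q c φ x ≤ lam * φ x}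

private lemma bothDerivs {R : ℝ} {φ : ℝ → ℝ} (hφ : ContDiffOn ℝ 2 φ (Set.Ioi R))
    {x : ℝ} (hx : x ∈ Set.Ioi R) :
    HasDerivAt φ (deriv φ x) x ∧ HasDerivAt (deriv φ) (deriv (deriv φ) x) x := by
  have hopen : IsOpen (Set.Ioi R) := isOpen_Ioi
  have h1 : DifferentiableOn ℝ φ (Set.Ioi R) := hφ.differentiableOn (by norm_num)
  have hd : ContDiffOn ℝ 1 (deriv φ) (Set.Ioi R) :=
    hφ.deriv_of_isOpen hopen (by norm_num : (1:WithTop ℕ∞)+1 ≤ 2)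
  constructor
  · exact (h1.differentiableAt (hopen.mem_nhds hx)).hasDerivAt
  · exact ((hd.differentiableOn (by norm_num)).differentiableAt (hopen.mem_nhds hx)).hasDerivAt

private lemma linGrow {f f' : ℝ → ℝ} {r x₀ : ℝ} (hd : ∀ x ∈ Set.Ici x₀, HasDerivAt f (f' x) x)
    (hge : ∀ x ∈ Set.Ici x₀, r ≤ f' x) : ∀ x, x₀ ≤ x → f x₀ + r * (x - x₀) ≤ f x := by
  have hg : ∀ x ∈ Set.Ici x₀, HasDerivAt (fun y => f y - r * y) (f' x - r) x := by
    intro x hx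
    exact (hd x hx).sub (by simpa using (hasDerivAt_id x).const_mul r)
  have hmono : MonotoneOn (fun y => f y - r * y) (Set.Ici x₀) := by
    apply monotoneOn_of_deriv_nonneg (convex_Ici x₀)
    · exact fun x hx => (hg x hx).continuousAt.continuousWithinAt
    · intro x hx
      rw [interior_Ici] at hx
      exact (hg x (Set.mem_Ici.mpr (le_of_lt hx))).differentiableAt.differentiableWithinAt
    · intro x hx
      rw [interior_Ici] at hx
      rw [(hg x (Set.mem_Ici.mpr (le_of_lt hx))).deriv]
      linarith [hge x (Set.mem_Ici.mpr (le_of_lt hx))]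
  intro x hx
  have := hmono self_mem_Ici (Set.mem_Ici.mpr hx) (Set.mem_Ici.mpr hx)
  simp only at this
  linarith

private lemma limit_helper {F : ℝ → ℝ} {r C x₀ : ℝ}
    (hF : Filter.Tendsto (fun x => F x / x) Filter.atTop (nhds 0))
    (h : ∀ x, x₀ ≤ x → C + r * x ≤ F x) : r ≤ 0 := by
  have hg : Filter.Tendsto (fun x : ℝ => C / x + r) Filter.atTop (nhds (0 + r)) :=
    (tendsto_const_nhds.div_atTop tendsto_id).add tendsto_const_nhds
  rw [zero_add] at hg
  have hev : ∀ᶠ x in Filter.atTop, C / x + r ≤ F x / x := by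
    filter_upwards [Filter.eventually_ge_atTop (max x₀ 1)] with x hx
    have hx0 : (0:ℝ) < x := lt_of_lt_of_le one_pos (le_trans (le_max_right _ _) hx)
    have h1 : C + r * x ≤ F x := h x (le_trans (le_max_left _ _) hx)
    have h2 : (C + r * x) / x ≤ F x / x := by gcongr
    rw [add_div, mul_div_assoc, div_self hx0.ne', mul_one] at h2
    exact h2
  simpa using le_of_tendsto_of_tendsto hg hF hev

private lemma coreComp (a q c : ℝ → ℝ) (A Q Mb : ℝ)
    (hapos : ∀ x, 0 < a x) (hA : ∀ x, a x ≤ A) (hQ : ∀ x, |q x| ≤ Q)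
    (R lam mu : ℝ) (φ ψ : ℝ → ℝ)
    (hφ : ContDiffOn ℝ 2 φ (Set.Ioi R)) (hψ : ContDiffOn ℝ 2 ψ (Set.Ioi R))
    (hφpos : ∀ x ∈ Set.Ioi R, 0 < φ x) (hψpos : ∀ x ∈ Set.Ioi R, 0 < ψ x)
    (hφM : ∀ x ∈ Set.Ioi R, |deriv φ x / φ x| ≤ Mb)
    (hψM : ∀ x ∈ Set.Ioi R, |deriv ψ x / ψ x| ≤ Mb)
    (hφlim : Filter.Tendsto (fun x => Real.log (φ x) / x) Filter.atTop (nhds 0))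
    (hψlim : Filter.Tendsto (fun x => Real.log (ψ x) / x) Filter.atTop (nhds 0))
    (hlφ : ∀ x ∈ Set.Ioi R, lam * φ x ≤ Lop a q c φ x)
    (hmψ : ∀ x ∈ Set.Ioi R, Lop a q c ψ x ≤ mu * ψ x) : lam ≤ mu := by
  by_contra hlt
  push_neg at hlt
  set δ := lam - mu with hδdef
  have hδpos : 0 < δ := sub_pos.mpr hlt
  have hApos : 0 < A := lt_of_lt_of_le (hapos 0) (hA 0)
  set u := fun x => deriv φ x / φ x with hu
  set v := fun x => deriv ψ x / ψ x with hv
  set z := fun x => u x - v x with hz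
  set K := |2 * A * Mb + Q| + 1 with hK
  have hKpos : 0 < K := by positivity
  set ε := δ / (4 * K) with hε
  have hεpos : 0 < ε := by positivity
  set ρ := δ / (2 * A) with hρ
  have hρpos : 0 < ρ := by positivity
  set z' := fun x => (deriv (deriv φ) x / φ x - u x ^ 2) - (deriv (deriv ψ) x / ψ x - v x ^ 2)
    with hz'
  -- z has derivative z'
  have hzd : ∀ x ∈ Set.Ioi R, HasDerivAt z (z' x) x := by
    intro x hx
    obtain ⟨hφ1, hφ2⟩ := bothDerivs hφ hx
    obtain ⟨hψ1, hψ2⟩ := bothDerivs hψ hx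
    have hφ0 := (hφpos x hx).ne'
    have hψ0 := (hψpos x hx).ne'
    have h1 : HasDerivAt u ((deriv (deriv φ) x * φ x - deriv φ x * deriv φ x) / φ x ^ 2) x :=
      hφ2.div hφ1 hφ0
    have h2 : HasDerivAt v ((deriv (deriv ψ) x * ψ x - deriv ψ x * deriv ψ x) / ψ x ^ 2) x :=
      hψ2.div hψ1 hψ0
    have := h1.sub h2
    convert this using 1
    any_goals rfl
    simp only [hz', hu, hv]
    field_simp
  -- main differential inequality
  have hineq : ∀ x ∈ Set.Ioi R, δ ≤ a x * z' x + (a x * (u x + v x) + q x) * z x := by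
    intro x hx
    have hφ0 := (hφpos x hx).ne'
    have hψ0 := (hψpos x hx).ne'
    have h1 : lam ≤ a x * (deriv (deriv φ) x / φ x) + q x * u x + c x := by
      have := hlφ x hx
      rw [show Lop a q c φ x = (a x * (deriv (deriv φ) x / φ x) + q x * u x + c x) * φ x by
        simp only [Lop, hu]; field_simp] at this
      exact le_of_mul_le_mul_right this (hφpos x hx)
    have h2 : a x * (deriv (deriv ψ) x / ψ x) + q x * v x + c x ≤ mu := by
      have := hmψ x hx
      rw [show Lop a q c ψ x = (a x * (deriv (deriv ψ) x / ψ x) + q x * v x + c x) * ψ x by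
        simp only [Lop, hv]; field_simp] at this
      exact le_of_mul_le_mul_right this (hψpos x hx)
    have key : a x * z' x + (a x * (u x + v x) + q x) * z x =
        (a x * (deriv (deriv φ) x / φ x) + q x * u x) -
        (a x * (deriv (deriv ψ) x / ψ x) + q x * v x) := by
      simp only [hz', hz]; ring
    rw [key]; simp only [hδdef]; linarith
  have huM : ∀ x ∈ Set.Ioi R, |u x| ≤ Mb := hφM
  have hvM : ∀ x ∈ Set.Ioi R, |v x| ≤ Mb := hψM
  set F := fun x => Real.log (φ x) - Real.log (ψ x) with hFdef
  have hFd : ∀ x ∈ Set.Ioi R, HasDerivAt F (z x) x := by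
    intro x hx
    obtain ⟨hφ1, _⟩ := bothDerivs hφ hx
    obtain ⟨hψ1, _⟩ := bothDerivs hψ hx
    exact (hφ1.log (hφpos x hx).ne').sub (hψ1.log (hψpos x hx).ne')
  have hFlim : Filter.Tendsto (fun x => F x / x) Filter.atTop (nhds 0) := by
    have := hφlim.sub hψlim
    rw [sub_zero] at this
    refine this.congr (fun x => ?_)
    simp only [hFdef]
    rw [sub_div]
  clear_value u v z z' F
  clear_value δ K ε ρ
  -- in the small-z region the derivative is at least ρ
  have hz'pos : ∀ x ∈ Set.Ioi R, |z x| ≤ 2 * ε → ρ ≤ z' x := by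
    intro x hx hzx
    have h3 : |a x * (u x + v x) + q x| ≤ K := by
      calc |a x * (u x + v x) + q x| ≤ |a x * (u x + v x)| + |q x| := abs_add_le _ _
        _ ≤ a x * (|u x| + |v x|) + Q := by
            rw [abs_mul, abs_of_pos (hapos x)]
            have habs := abs_add_le (u x) (v x)
            have hq := hQ x
            have := mul_le_mul_of_nonneg_left habs (hapos x).le
            linarith
        _ ≤ A * (Mb + Mb) + Q := by
            have h1 := huM x hx
            have h2 := hvM x hx
            have := mul_le_mul (hA x) (add_le_add h1 h2) (by positivity) hApos.le
            linarith
        _ ≤ K := by rw [hK]; have := le_abs_self (2 * A * Mb + Q); linarith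
    have h4 : (a x * (u x + v x) + q x) * z x ≤ K * (2 * ε) := by
      calc (a x * (u x + v x) + q x) * z x ≤ |(a x * (u x + v x) + q x) * z x| := le_abs_self _
        _ = |a x * (u x + v x) + q x| * |z x| := abs_mul _ _
        _ ≤ K * (2 * ε) := mul_le_mul h3 hzx (abs_nonneg _) hKpos.le
    have hK2 : K * (2 * ε) = δ / 2 := by rw [hε]; field_simp; ring
    have h5 : δ / 2 ≤ a x * z' x := by
      have := hineq x hx; rw [hK2] at h4; linarith
    have hz'0 : 0 < z' x := by
      by_contra h
      push_neg at h
      nlinarith [mul_nonpos_of_nonneg_of_nonpos (hapos x).le h]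
    rw [hρ, div_le_iff₀ (by positivity : (0:ℝ) < 2 * A)]
    nlinarith [mul_nonneg (sub_nonneg.mpr (hA x)) hz'0.le]
  -- continuity of z on Ioi R
  have hzc : ∀ x ∈ Set.Ioi R, ContinuousAt z x := fun x hx => (hzd x hx).continuousAt
  -- barrier crossing lemma
  have cross : ∀ θ : ℝ, |θ| ≤ ε → ∀ x₁ ∈ Set.Ioi R, θ ≤ z x₁ → ∀ x, x₁ ≤ x → θ ≤ z x := by
    intro θ hθ x₁ hx₁ hzx₁ x hxx
    by_contra hzx
    push_neg at hzx
    have hx₁x : x₁ < x := by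
      rcases eq_or_lt_of_le hxx with h | h
      · exfalso; rw [← h] at hzx; linarith
      · exact h
    set S := {y : ℝ | y ∈ Set.Icc x₁ x ∧ θ ≤ z y} with hS
    have hSne : S.Nonempty := ⟨x₁, ⟨le_refl _, hxx⟩, hzx₁⟩
    have hSbdd : BddAbove S := BddAbove.mono (fun y hy => hy.1) (bddAbove_Icc)
    have hIccR : Set.Icc x₁ x ⊆ Set.Ioi R := fun y hy => lt_of_lt_of_le hx₁ hy.1
    have hScl : IsClosed S := by
      have h1 : IsClosed {y : ℝ | y ∈ Set.Icc x₁ x ∧ θ ≤ z y} := by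
        apply ContinuousOn.preimage_isClosed_of_isClosed
          (fun y hy => ((hzc y (hIccR hy)).continuousWithinAt)) isClosed_Icc isClosed_Ici
      exact h1
    set s := sSup S with hs
    have hsS : s ∈ S := hScl.csSup_mem hSne hSbdd
    obtain ⟨⟨hs1, hs2⟩, hs3⟩ := hsS
    have hsR : s ∈ Set.Ioi R := hIccR ⟨hs1, hs2⟩
    have hsx : s < x := lt_of_le_of_ne hs2 (fun h => by rw [h] at hs3; linarith)
    -- z s = θ
    have hzs : z s = θ := by
      rcases eq_or_lt_of_le hs3 with h | h
      · exact h.symm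
      exfalso
      have hev : ∀ᶠ y in nhds s, θ < z y :=
        (hzc s hsR).eventually_const_lt h
      have hne : (nhdsWithin s (Set.Ioi s)).NeBot := nhdsGT_neBot s
      have hmem : Set.Ioc s x ∈ nhdsWithin s (Set.Ioi s) := Ioc_mem_nhdsGT_of_mem ⟨le_refl s, hsx⟩
      obtain ⟨y, hy1, hy2⟩ := ((hev.filter_mono nhdsWithin_le_nhds).and
        (eventually_of_mem hmem (fun y hy => hy))).exists
      have : y ∈ S := ⟨⟨hs1.trans hy2.1.le, hy2.2⟩, hy1.le⟩
      have := le_csSup hSbdd this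
      linarith [hy2.1]
    -- a small interval to the right of s where |z| < 2ε
    have hev : {y : ℝ | z y ∈ Set.Ioo (θ - ε) (θ + ε)} ∈ nhds s := by
      apply (hzc s hsR)
      rw [hzs]
      exact Ioo_mem_nhds (by linarith) (by linarith)
    obtain ⟨h, hh0, hball⟩ := Metric.mem_nhds_iff.mp hev
    set t := min (s + h / 2) x with ht
    have hst : s < t := lt_min (by linarith) hsx
    have htx : t ≤ x := min_le_right _ _
    have hsub : Set.Icc s t ⊆ Metric.ball s h := by
      intro y hy
      rw [Metric.mem_ball, Real.dist_eq, abs_of_nonneg (by linarith [hy.1])]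
      have : y ≤ s + h / 2 := hy.2.trans (min_le_left _ _)
      linarith
    have hIccR2 : Set.Icc s t ⊆ Set.Ioi R := fun y hy => lt_of_lt_of_le hsR (hy.1)
    have hzsmall : ∀ y ∈ Set.Icc s t, |z y| ≤ 2 * ε := by
      intro y hy
      have := hball (hsub hy)
      simp only [Set.mem_setOf_eq, Set.mem_Ioo] at this
      rw [abs_le]
      rcases abs_le.mp hθ with ⟨hθ1, hθ2⟩
      constructor <;> [linarith [this.1]; linarith [this.2]]
    have hmono : StrictMonoOn z (Set.Icc s t) := by
      apply strictMonoOn_of_deriv_pos (convex_Icc s t)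
      · exact fun y hy => (hzc y (hIccR2 hy)).continuousWithinAt
      · intro y hy
        rw [interior_Icc] at hy
        have hyI : y ∈ Set.Icc s t := ⟨hy.1.le, hy.2.le⟩
        rw [(hzd y (hIccR2 hyI)).deriv]
        exact lt_of_lt_of_le hρpos (hz'pos y (hIccR2 hyI) (hzsmall y hyI))
    have h1 : z s < z t := hmono (left_mem_Icc.mpr hst.le) (right_mem_Icc.mpr hst.le) hst
    have : t ∈ S := ⟨⟨hs1.trans hst.le, htx⟩, by linarith [hzs ▸ h1]⟩
    have := le_csSup hSbdd this
    linarith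
  -- Step 1: somewhere z ≥ -ε
  have step1 : ∃ x₁ ∈ Set.Ioi R, -ε ≤ z x₁ := by
    by_contra hcon
    push_neg at hcon
    set x₀ := R + 1 with hx₀
    have hx₀R : x₀ ∈ Set.Ioi R := by simp [hx₀]
    have hIci : Set.Ici x₀ ⊆ Set.Ioi R := fun y hy => Set.mem_Ioi.mpr (lt_of_lt_of_le hx₀R hy)
    have hgrow : ∀ x, x₀ ≤ x → (-F) x₀ + ε * (x - x₀) ≤ (-F) x := by
      apply linGrow (f' := fun x => -z x)
      · exact fun y hy => ((hFd y (hIci hy)).neg)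
      · intro y hy
        have := hcon y (hIci hy)
        linarith
    have hnegFlim : Filter.Tendsto (fun x => (-F) x / x) Filter.atTop (nhds 0) := by
      have := hFlim.neg
      rw [neg_zero] at this
      refine this.congr (fun x => ?_)
      simp [neg_div]
    have : ε ≤ 0 := by
      apply limit_helper (C := (-F) x₀ - ε * x₀) (x₀ := x₀) hnegFlim
      intro x hx
      have := hgrow x hx
      simp only [Pi.neg_apply] at *
      linarith
    linarith
  obtain ⟨x₁, hx₁, hzx₁⟩ := step1
  -- Step 2: somewhere z ≥ ε
  have step2 : ∃ x₃ ∈ Set.Ioi R, ε ≤ z x₃ := by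
    by_contra hcon
    push_neg at hcon
    have hlow : ∀ x, x₁ ≤ x → -ε ≤ z x :=
      cross (-ε) (by rw [abs_neg, abs_of_pos hεpos]) x₁ hx₁ hzx₁
    have hIci : Set.Ici x₁ ⊆ Set.Ioi R := fun y hy => Set.mem_Ioi.mpr (lt_of_lt_of_le hx₁ hy)
    have hgrow : ∀ x, x₁ ≤ x → z x₁ + ρ * (x - x₁) ≤ z x := by
      apply linGrow (f' := z')
      · exact fun y hy => hzd y (hIci hy)
      · intro y hy
        apply hz'pos y (hIci hy)
        rw [abs_le]
        exact ⟨by linarith [hlow y hy], by linarith [(hcon y (hIci hy)).le]⟩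
    obtain ⟨X, hX⟩ : ∃ X : ℝ, X = x₁ + 2 * ε / ρ + 1 := ⟨_, rfl⟩
    have hXx₁ : x₁ ≤ X := by
      have : 0 ≤ 2 * ε / ρ := by positivity
      rw [hX]; linarith
    have h1 := hgrow X hXx₁
    have h2 : ρ * (X - x₁) = 2 * ε + ρ := by
      rw [hX]
      field_simp
      ring
    have := hcon X (hIci hXx₁)
    have := hlow x₁ (le_refl x₁)
    nlinarith
  obtain ⟨x₃, hx₃, hzx₃⟩ := step2
  have hge : ∀ x, x₃ ≤ x → ε ≤ z x := cross ε (by rw [abs_of_pos hεpos]) x₃ hx₃ hzx₃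
  have hIci : Set.Ici x₃ ⊆ Set.Ioi R := fun y hy => Set.mem_Ioi.mpr (lt_of_lt_of_le hx₃ hy)
  have hgrow : ∀ x, x₃ ≤ x → F x₃ + ε * (x - x₃) ≤ F x := by
    apply linGrow (f' := z)
    · exact fun y hy => hFd y (hIci hy)
    · exact fun y hy => hge y hy
  have : ε ≤ 0 := by
    apply limit_helper (C := F x₃ - ε * x₃) (x₀ := x₃) hFlim
    intro x hx
    have := hgrow x hx
    linarith
  linarith


/-- Proposition 3.1. For the operator `Lφ = a φ'' + q φ' + c φ` with
continuous bounded coefficients and `inf a > 0`, one has `λ̄₁(L,(R,∞)) ≥ λ̲₁(L,(R,∞))`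
for every `R ∈ {-∞} ∪ ℝ`. -/
theorem lamLower_le_lamUpper
    (a q c : ℝ → ℝ)
    (ha_cont : Continuous a) (hq_cont : Continuous q) (hc_cont : Continuous c)
    (ha_bdd : ∃ M, ∀ x, |a x| ≤ M) (hq_bdd : ∃ M, ∀ x, |q x| ≤ M)
    (hc_bdd : ∃ M, ∀ x, |c x| ≤ M)
    (ha_pos : ∃ m > 0, ∀ x, m ≤ a x) :
    (∀ R : ℝ, lamLower a q c R ≤ lamUpper a q c R) ∧
      lamLowerAll a q c ≤ lamUpperAll a q c := by
  obtain ⟨Ma, hMa⟩ := ha_bdd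
  obtain ⟨Mq, hMq⟩ := hq_bdd
  obtain ⟨Mc, hMc⟩ := hc_bdd
  obtain ⟨m, hm, hma⟩ := ha_pos
  have hapos : ∀ x, 0 < a x := fun x => lt_of_lt_of_le hm (hma x)
  have hA : ∀ x, a x ≤ Ma := fun x => (le_abs_self _).trans (hMa x)
  have hLone : ∀ x, Lop a q c (fun _ => (1:ℝ)) x = c x := by
    intro x
    simp [Lop, deriv_const']
  have hadm1 : ∀ R : ℝ, AdmissibleOn R (fun _ => (1:ℝ)) := by
    intro R
    refine ⟨contDiffOn_const, contDiffOn_const, fun x _ => one_pos,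
      ⟨0, fun x _ => by simp⟩, ?_⟩
    simp only [Real.log_one, zero_div]
    exact tendsto_const_nhds
  have hadm1All : AdmissibleAll (fun _ => (1:ℝ)) := by
    refine ⟨contDiff_const, fun _ => one_pos, ⟨0, fun x => by simp⟩, ?_, ?_⟩ <;>
      · simp only [Real.log_one, zero_div]
        exact tendsto_const_nhds
  constructor
  · intro R
    have hSne : (-Mc) ∈ {lam : ℝ | ∃ φ, AdmissibleOn R φ ∧
        ∀ x ∈ Set.Ioi R, lam * φ x ≤ Lop a q c φ x} := by
      refine ⟨fun _ => 1, hadm1 R, fun x _ => ?_⟩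
      rw [hLone, mul_one]
      linarith [neg_abs_le (c x), hMc x]
    have hTne : Mc ∈ {lam : ℝ | ∃ φ, AdmissibleOn R φ ∧
        ∀ x ∈ Set.Ioi R, Lop a q c φ x ≤ lam * φ x} := by
      refine ⟨fun _ => 1, hadm1 R, fun x _ => ?_⟩
      rw [hLone, mul_one]
      linarith [le_abs_self (c x), hMc x]
    apply csSup_le ⟨-Mc, hSne⟩
    rintro lam ⟨φ, ⟨_, hφ2, hφ3, ⟨Mφ, hφ4⟩, hφ5⟩, hφineq⟩
    apply le_csInf ⟨Mc, hTne⟩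
    rintro mu ⟨ψ, ⟨_, hψ2, hψ3, ⟨Mψ, hψ4⟩, hψ5⟩, hψineq⟩
    exact coreComp a q c Ma Mq (max Mφ Mψ) hapos hA hMq R lam mu φ ψ hφ2 hψ2
      (fun x hx => hφ3 x (Set.mem_Ici.mpr (le_of_lt hx))) (fun x hx => hψ3 x (Set.mem_Ici.mpr (le_of_lt hx)))
      (fun x hx => (hφ4 x hx).trans (le_max_left _ _))
      (fun x hx => (hψ4 x hx).trans (le_max_right _ _))
      hφ5 hψ5 hφineq hψineq
  · have hSne : (-Mc) ∈ {lam : ℝ | ∃ φ, AdmissibleAll φ ∧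
        ∀ x : ℝ, lam * φ x ≤ Lop a q c φ x} := by
      refine ⟨fun _ => 1, hadm1All, fun x => ?_⟩
      rw [hLone, mul_one]
      linarith [neg_abs_le (c x), hMc x]
    have hTne : Mc ∈ {lam : ℝ | ∃ φ, AdmissibleAll φ ∧
        ∀ x : ℝ, Lop a q c φ x ≤ lam * φ x} := by
      refine ⟨fun _ => 1, hadm1All, fun x => ?_⟩
      rw [hLone, mul_one]
      linarith [le_abs_self (c x), hMc x]
    apply csSup_le ⟨-Mc, hSne⟩
    rintro lam ⟨φ, ⟨hφ1, hφ3, ⟨Mφ, hφ4⟩, hφ5, _⟩, hφineq⟩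
    apply le_csInf ⟨Mc, hTne⟩
    rintro mu ⟨ψ, ⟨hψ1, hψ3, ⟨Mψ, hψ4⟩, hψ5, _⟩, hψineq⟩
    exact coreComp a q c Ma Mq (max Mφ Mψ) hapos hA hMq 0 lam mu φ ψ
      (hφ1.contDiffOn) (hψ1.contDiffOn)
      (fun x _ => hφ3 x) (fun x _ => hψ3 x)
      (fun x _ => (hφ4 x).trans (le_max_left _ _))
      (fun x _ => (hψ4 x).trans (le_max_right _ _))
      hφ5 hψ5 (fun x _ => hφineq x) (fun x _ => hψineq x)
end

section
/- Let Lφ = a φ'' + q φ' + c φ with a, q, c : ℝ → ℝ continuous and bounded and inf_ℝ a > 0. Assume there exist λ ∈ ℝ, R ∈ {−∞} ∪ ℝ and φ ∈ A_R such that Lφ = λφ on (R,∞). Then λ = λ̲₁(L,(R,∞)) = λ̄₁(L,(R,∞)). -/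
open Real Filter Set

/-- Linear growth lower bound from a derivative lower bound. -/
private lemma growth_aux (x₁ c₀ : ℝ) (f df : ℝ → ℝ)
    (hf : ∀ x, x₁ ≤ x → HasDerivAt f (df x) x)
    (hd : ∀ x, x₁ ≤ x → c₀ ≤ df x) :
    ∀ x, x₁ ≤ x → f x₁ + c₀ * (x - x₁) ≤ f x := by
  intro x hx
  have hmono : MonotoneOn (fun y => f y - c₀ * y) (Set.Ici x₁) := by
    apply monotoneOn_of_deriv_nonneg (convex_Ici x₁)
    · exact fun y hy => ((hf y hy).continuousAt.sub (continuousAt_const.mul continuousAt_id)).continuousWithinAt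
    · intro y hy
      rw [interior_Ici] at hy
      have h : HasDerivAt (fun y => f y - c₀ * y) (df y - c₀) y := by
        have h' := (hf y hy.le).sub ((hasDerivAt_id' y).const_mul c₀)
        rw [mul_one] at h'
        exact h'
      exact h.differentiableAt.differentiableWithinAt
    · intro y hy
      rw [interior_Ici] at hy
      have h : HasDerivAt (fun y => f y - c₀ * y) (df y - c₀) y := by
        have h' := (hf y hy.le).sub ((hasDerivAt_id' y).const_mul c₀)
        rw [mul_one] at h'
        exact h'
      rw [h.deriv]
      have := hd y hy.le
      linarith
  have := hmono (Set.self_mem_Ici) (Set.mem_Ici.mpr hx) hx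
  simp only at this
  linarith

private lemma limit_contra_aux (x₁ κ : ℝ) (hκ : 0 < κ) (v : ℝ → ℝ)
    (hg : ∀ x, x₁ ≤ x → v x₁ + κ * (x - x₁) ≤ v x)
    (hlim : Filter.Tendsto (fun x => v x / x) Filter.atTop (nhds 0)) : False := by
  have h1 : Filter.Tendsto (fun x : ℝ => (v x₁ - κ * x₁) * x⁻¹ + κ) Filter.atTop
      (nhds ((v x₁ - κ * x₁) * 0 + κ)) :=
    ((tendsto_inv_atTop_zero).const_mul _).add_const κ
  have hev : (fun x : ℝ => (v x₁ - κ * x₁) * x⁻¹ + κ) ≤ᶠ[Filter.atTop]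
      (fun x => v x / x) := by
    filter_upwards [Filter.eventually_ge_atTop (max x₁ 1)] with x hx
    have hx1 : x₁ ≤ x := le_trans (le_max_left _ _) hx
    have hxpos : (0:ℝ) < x := lt_of_lt_of_le one_pos (le_trans (le_max_right _ _) hx)
    have hvx := hg x hx1
    have key : (v x₁ - κ * x₁) * x⁻¹ + κ = (v x₁ + κ * (x - x₁)) / x := by
      field_simp
      ring
    rw [key]
    exact div_le_div_of_nonneg_right hvx hxpos.le
  have h2 : (v x₁ - κ * x₁) * 0 + κ ≤ (0:ℝ) := le_of_tendsto_of_tendsto h1 hlim hev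
  linarith

/-- No downward crossing of level `θ` inside the band `(-δ,δ)`. -/
private lemma noCross_aux (R δ c₀ θ : ℝ) (hc₀ : 0 < c₀) (s ds : ℝ → ℝ)
    (hs : ∀ x ∈ Set.Ioi R, HasDerivAt s (ds x) x)
    (hkey : ∀ x ∈ Set.Ioi R, -δ < s x → s x < δ → c₀ ≤ ds x)
    (hθ₁ : -δ < θ) (hθ₂ : θ < δ) {x₁ : ℝ} (hx₁ : R < x₁) (h1 : θ ≤ s x₁) :
    ∀ x, x₁ ≤ x → θ ≤ s x := by
  intro x₂ hx₂
  by_contra hcon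
  push_neg at hcon
  have hscont : ContinuousOn s (Set.Ioi R) :=
    fun y hy => (hs y hy).continuousAt.continuousWithinAt
  have hIcc : Set.Icc x₁ x₂ ⊆ Set.Ioi R := fun y hy => lt_of_lt_of_le hx₁ hy.1
  set K := Set.Icc x₁ x₂ ∩ s ⁻¹' Set.Ici θ with hK
  have hKne : K.Nonempty := ⟨x₁, ⟨le_refl _, hx₂⟩, h1⟩
  have hKbdd : BddAbove K := (BddAbove.mono (Set.inter_subset_left)) bddAbove_Icc
  have hKclosed : IsClosed K :=
    (hscont.mono hIcc).preimage_isClosed_of_isClosed isClosed_Icc isClosed_Ici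
  set x₃ := sSup K with hx₃
  have hx₃K : x₃ ∈ K := hKclosed.csSup_mem hKne hKbdd
  have hx₃R : x₃ ∈ Set.Ioi R := hIcc hx₃K.1
  have hx₃lt : x₃ < x₂ := by
    rcases lt_or_eq_of_le hx₃K.1.2 with h | h
    · exact h
    · exact absurd hx₃K.2 (by simpa [h] using not_le.mpr hcon)
  have hright : ∀ y, x₃ < y → y ≤ x₂ → s y < θ := by
    intro y hy hy2
    by_contra hsy
    push_neg at hsy
    have : y ∈ K := ⟨⟨le_trans hx₃K.1.1 hy.le, hy2⟩, hsy⟩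
    exact absurd (le_csSup hKbdd this) (not_le.mpr hy)
  -- s x₃ = θ
  have hle : s x₃ ≤ θ := by
    have htends : Filter.Tendsto s (nhdsWithin x₃ (Set.Ioi x₃)) (nhds (s x₃)) :=
      ((hs x₃ hx₃R).continuousAt.continuousWithinAt)
    refine le_of_tendsto htends ?_
    filter_upwards [Ioc_mem_nhdsGT_of_mem ⟨le_refl x₃, hx₃lt⟩] with y hy
    exact (hright y hy.1 hy.2).le
  have hsx₃ : s x₃ = θ := le_antisymm hle hx₃K.2
  -- find a small interval to the right where s stays in the band
  have hband : ∀ᶠ y in nhds x₃, s y ∈ Set.Ioo (-δ) δ := by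
    have : ContinuousAt s x₃ := (hs x₃ hx₃R).continuousAt
    apply this.eventually_mem
    rw [hsx₃]
    exact isOpen_Ioo.mem_nhds ⟨hθ₁, hθ₂⟩
  rw [Metric.eventually_nhds_iff] at hband
  obtain ⟨η, hη, hball⟩ := hband
  set x₄ := min (x₃ + η / 2) x₂ with hx₄
  have hx₄gt : x₃ < x₄ := lt_min (by linarith) hx₃lt
  have hx₄le : x₄ ≤ x₂ := min_le_right _ _
  have hsub : Set.Icc x₃ x₄ ⊆ Set.Ioi R := fun y hy =>
    lt_of_lt_of_le hx₃R hy.1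
  have hinband : ∀ y ∈ Set.Icc x₃ x₄, s y ∈ Set.Ioo (-δ) δ := by
    intro y hy
    apply hball
    rw [Real.dist_eq, abs_lt]
    constructor
    · linarith [hy.1]
    · have : y ≤ x₃ + η / 2 := le_trans hy.2 (min_le_left _ _)
      linarith
  have hmono : StrictMonoOn s (Set.Icc x₃ x₄) := by
    apply strictMonoOn_of_deriv_pos (convex_Icc x₃ x₄)
    · exact hscont.mono hsub
    · intro y hy
      rw [interior_Icc] at hy
      have hyR : y ∈ Set.Ioi R := hsub ⟨hy.1.le, hy.2.le⟩
      rw [(hs y hyR).deriv]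
      have hband := hinband y ⟨hy.1.le, hy.2.le⟩
      exact lt_of_lt_of_le hc₀ (hkey y hyR hband.1 hband.2)
  have : s x₃ < s x₄ := hmono ⟨le_refl _, hx₄gt.le⟩ ⟨hx₄gt.le, le_refl _⟩ hx₄gt
  have := hright x₄ hx₄gt hx₄le
  rw [hsx₃] at *
  linarith

/-- The core ODE lemma: no bounded-slope Riccati supersolution compatible with sublinear `v`. -/
private lemma core_aux (R δ c₀ : ℝ) (hδ : 0 < δ) (hc₀ : 0 < c₀)
    (v s ds : ℝ → ℝ)
    (hv : ∀ x ∈ Set.Ioi R, HasDerivAt v (s x) x)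
    (hs : ∀ x ∈ Set.Ioi R, HasDerivAt s (ds x) x)
    (hkey : ∀ x ∈ Set.Ioi R, -δ < s x → s x < δ → c₀ ≤ ds x)
    (hlim : Filter.Tendsto (fun x => v x / x) Filter.atTop (nhds 0)) : False := by
  by_cases hA : ∃ x₁ ∈ Set.Ioi R, δ / 2 ≤ s x₁
  · obtain ⟨x₁, hx₁, hsx₁⟩ := hA
    have hfrom := noCross_aux R δ c₀ (δ / 2) hc₀ s ds hs hkey (by linarith) (by linarith)
      hx₁ hsx₁
    have hgrow := growth_aux x₁ (δ / 2) v s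
      (fun x hx => hv x (lt_of_lt_of_le hx₁ hx)) hfrom
    exact limit_contra_aux x₁ (δ / 2) (by linarith) v hgrow hlim
  · push_neg at hA
    by_cases hB : ∃ x₁ ∈ Set.Ioi R, -δ < s x₁
    · obtain ⟨x₁, hx₁, hsx₁⟩ := hB
      set θ := s x₁ with hθ
      have hθlt : θ < δ / 2 := hA x₁ hx₁
      have hfrom := noCross_aux R δ c₀ θ hc₀ s ds hs hkey hsx₁ (by linarith)
        hx₁ (le_refl _)
      have hds : ∀ x, x₁ ≤ x → c₀ ≤ ds x := by
        intro x hx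
        have hxR : x ∈ Set.Ioi R := lt_of_lt_of_le hx₁ hx
        have h1 := hfrom x hx
        have h2 := hA x hxR
        exact hkey x hxR (by linarith) (by linarith)
      have hgrow := growth_aux x₁ c₀ s ds
        (fun x hx => hs x (lt_of_lt_of_le hx₁ hx)) hds
      have hpos : 0 < 3 * δ / (2 * c₀) := by positivity
      have hx₅ge : x₁ ≤ x₁ + 3 * δ / (2 * c₀) := by linarith
      have h1 := hgrow (x₁ + 3 * δ / (2 * c₀)) hx₅ge
      have h2 := hA (x₁ + 3 * δ / (2 * c₀)) (lt_of_lt_of_le hx₁ hx₅ge)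
      have hkey2 : c₀ * (x₁ + 3 * δ / (2 * c₀) - x₁) = 3 * δ / 2 := by
        field_simp
        ring
      rw [hkey2] at h1
      linarith
    · push_neg at hB
      set x₁ := R + 1 with hx₁def
      have hx₁ : x₁ ∈ Set.Ioi R := by simp [hx₁def]
      have hgrow := growth_aux x₁ δ (fun x => -v x) (fun x => -s x)
        (fun x hx => (hv x (lt_of_lt_of_le hx₁ hx)).neg)
        (fun x hx => by
          have := hB x (lt_of_lt_of_le hx₁ hx)
          show δ ≤ -s x
          linarith)
      have hlim' : Filter.Tendsto (fun x => (-v x) / x) Filter.atTop (nhds 0) := by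
        have := hlim.neg
        simpa [neg_div] using this
      exact limit_contra_aux x₁ δ hδ (fun x => -v x) hgrow hlim'


private lemma pointwise_aux (A' B' ε av b dsv sv : ℝ) (hB' : 0 < B') (hε : 0 < ε)
    (hax : 0 < av) (haA : av ≤ A') (hb : |b| ≤ B')
    (hge : ε ≤ av * dsv + b * sv) (habs : |sv| ≤ ε / (2 * B')) :
    ε / (2 * A') ≤ dsv := by
  have h4 : |b * sv| ≤ B' * (ε / (2 * B')) := by
    rw [abs_mul]
    exact mul_le_mul hb habs (abs_nonneg _) hB'.le
  have h5 : B' * (ε / (2 * B')) = ε / 2 := by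
    field_simp
  have hbs : b * sv ≤ ε / 2 := le_trans (le_abs_self _) (h4.trans_eq h5)
  have hads : ε / 2 ≤ av * dsv := by linarith
  have hds0 : 0 ≤ dsv := by nlinarith
  have hA' : 0 < A' := lt_of_lt_of_le hax haA
  rw [div_le_iff₀ (by linarith : (0:ℝ) < 2 * A')]
  nlinarith [mul_le_mul_of_nonneg_left haA hds0]

private lemma comparison_aux (a q c : ℝ → ℝ)
    (ha_bdd : ∃ M, ∀ x, |a x| ≤ M) (hq_bdd : ∃ M, ∀ x, |q x| ≤ M)
    (ha_pos : ∃ m > 0, ∀ x, m ≤ a x)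
    (R μ lam : ℝ) (ψ φ : ℝ → ℝ)
    (hψ2 : ContDiffOn ℝ 2 ψ (Set.Ioi R)) (hψpos : ∀ x ∈ Set.Ioi R, 0 < ψ x)
    (hψM : ∃ M, ∀ x ∈ Set.Ioi R, |deriv ψ x / ψ x| ≤ M)
    (hψlim : Filter.Tendsto (fun x => Real.log (ψ x) / x) Filter.atTop (nhds 0))
    (hφ2 : ContDiffOn ℝ 2 φ (Set.Ioi R)) (hφpos : ∀ x ∈ Set.Ioi R, 0 < φ x)
    (hφM : ∃ M, ∀ x ∈ Set.Ioi R, |deriv φ x / φ x| ≤ M)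
    (hφlim : Filter.Tendsto (fun x => Real.log (φ x) / x) Filter.atTop (nhds 0))
    (hsub : ∀ x ∈ Set.Ioi R, μ * ψ x ≤ a x * deriv (deriv ψ) x + q x * deriv ψ x + c x * ψ x)
    (hsup : ∀ x ∈ Set.Ioi R, a x * deriv (deriv φ) x + q x * deriv φ x + c x * φ x ≤ lam * φ x) :
    μ ≤ lam := by
  by_contra hcon
  push_neg at hcon
  have hε : 0 < μ - lam := by linarith
  obtain ⟨Ma, hMa⟩ := ha_bdd
  obtain ⟨Mq, hMq⟩ := hq_bdd
  obtain ⟨m, hm, ham⟩ := ha_pos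
  obtain ⟨Mp, hMp⟩ := hψM
  obtain ⟨Mr, hMr⟩ := hφM
  have hMa0 : 0 ≤ Ma := le_trans (abs_nonneg _) (hMa 0)
  have hMq0 : 0 ≤ Mq := le_trans (abs_nonneg _) (hMq 0)
  have hR1 : (R + 1) ∈ Set.Ioi R := by simp
  have hMp0 : 0 ≤ Mp := le_trans (abs_nonneg _) (hMp (R + 1) hR1)
  have hMr0 : 0 ≤ Mr := le_trans (abs_nonneg _) (hMr (R + 1) hR1)
  have hB' : 0 < Ma * (Mp + Mr) + Mq + 1 := by nlinarith
  have hA' : 0 < Ma + 1 := by linarith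
  have hδ : 0 < (μ - lam) / (2 * (Ma * (Mp + Mr) + Mq + 1)) := div_pos hε (by linarith)
  have hc₀ : 0 < (μ - lam) / (2 * (Ma + 1)) := div_pos hε (by linarith)
  -- derivative facts
  have hψd : ∀ x ∈ Set.Ioi R, HasDerivAt ψ (deriv ψ x) x := fun x hx =>
    ((hψ2.differentiableOn (by norm_num)).differentiableAt (isOpen_Ioi.mem_nhds hx)).hasDerivAt
  have hφd : ∀ x ∈ Set.Ioi R, HasDerivAt φ (deriv φ x) x := fun x hx =>
    ((hφ2.differentiableOn (by norm_num)).differentiableAt (isOpen_Ioi.mem_nhds hx)).hasDerivAt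
  have hdψc : ContDiffOn ℝ 1 (deriv ψ) (Set.Ioi R) :=
    hψ2.deriv_of_isOpen isOpen_Ioi (by norm_num)
  have hdφc : ContDiffOn ℝ 1 (deriv φ) (Set.Ioi R) :=
    hφ2.deriv_of_isOpen isOpen_Ioi (by norm_num)
  have hψd2 : ∀ x ∈ Set.Ioi R, HasDerivAt (deriv ψ) (deriv (deriv ψ) x) x := fun x hx =>
    ((hdψc.differentiableOn (by norm_num)).differentiableAt (isOpen_Ioi.mem_nhds hx)).hasDerivAt
  have hφd2 : ∀ x ∈ Set.Ioi R, HasDerivAt (deriv φ) (deriv (deriv φ) x) x := fun x hx =>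
    ((hdφc.differentiableOn (by norm_num)).differentiableAt (isOpen_Ioi.mem_nhds hx)).hasDerivAt
  refine core_aux R ((μ - lam) / (2 * (Ma * (Mp + Mr) + Mq + 1)))
      ((μ - lam) / (2 * (Ma + 1))) hδ hc₀
      (fun x => Real.log (ψ x) - Real.log (φ x))
      (fun x => deriv ψ x / ψ x - deriv φ x / φ x)
      (fun x => (deriv (deriv ψ) x * ψ x - deriv ψ x * deriv ψ x) / ψ x ^ 2
        - (deriv (deriv φ) x * φ x - deriv φ x * deriv φ x) / φ x ^ 2)
      (fun x hx => ((hψd x hx).log (hψpos x hx).ne').sub ((hφd x hx).log (hφpos x hx).ne'))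
      (fun x hx => ((hψd2 x hx).div (hψd x hx) (hψpos x hx).ne').sub
        ((hφd2 x hx).div (hφd x hx) (hφpos x hx).ne'))
      ?_ ?_
  · -- key Riccati inequality
    intro x hx h1 h2
    have hψx : 0 < ψ x := hψpos x hx
    have hφx : 0 < φ x := hφpos x hx
    have hax : 0 < a x := lt_of_lt_of_le hm (ham x)
    have haA : a x ≤ Ma + 1 := by
      have h6 := le_abs_self (a x)
      have h7 := hMa x
      linarith
    have hbabs : |a x * (deriv ψ x / ψ x + deriv φ x / φ x) + q x|
        ≤ Ma * (Mp + Mr) + Mq + 1 := by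
      have h3 : |a x * (deriv ψ x / ψ x + deriv φ x / φ x)| ≤ Ma * (Mp + Mr) := by
        rw [abs_mul]
        apply mul_le_mul (hMa x) _ (abs_nonneg _) hMa0
        exact le_trans (abs_add_le _ _) (add_le_add (hMp x hx) (hMr x hx))
      calc |a x * (deriv ψ x / ψ x + deriv φ x / φ x) + q x|
          ≤ |a x * (deriv ψ x / ψ x + deriv φ x / φ x)| + |q x| := abs_add_le _ _
        _ ≤ Ma * (Mp + Mr) + Mq := add_le_add h3 (hMq x)
        _ ≤ Ma * (Mp + Mr) + Mq + 1 := by linarith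
    have hid : a x * ((deriv (deriv ψ) x * ψ x - deriv ψ x * deriv ψ x) / ψ x ^ 2
          - (deriv (deriv φ) x * φ x - deriv φ x * deriv φ x) / φ x ^ 2)
        + (a x * (deriv ψ x / ψ x + deriv φ x / φ x) + q x)
          * (deriv ψ x / ψ x - deriv φ x / φ x) =
        (a x * deriv (deriv ψ) x + q x * deriv ψ x + c x * ψ x) / ψ x
          - (a x * deriv (deriv φ) x + q x * deriv φ x + c x * φ x) / φ x := by
      field_simp
      ring
    have hge : μ - lam ≤ a x * ((deriv (deriv ψ) x * ψ x - deriv ψ x * deriv ψ x) / ψ x ^ 2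
          - (deriv (deriv φ) x * φ x - deriv φ x * deriv φ x) / φ x ^ 2)
        + (a x * (deriv ψ x / ψ x + deriv φ x / φ x) + q x)
          * (deriv ψ x / ψ x - deriv φ x / φ x) := by
      rw [hid]
      have hmu : μ ≤ (a x * deriv (deriv ψ) x + q x * deriv ψ x + c x * ψ x) / ψ x :=
        (le_div_iff₀ hψx).mpr (hsub x hx)
      have hlm : (a x * deriv (deriv φ) x + q x * deriv φ x + c x * φ x) / φ x ≤ lam :=
        (div_le_iff₀ hφx).mpr (hsup x hx)
      linarith
    exact pointwise_aux (Ma + 1) (Ma * (Mp + Mr) + Mq + 1) (μ - lam) (a x)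
      (a x * (deriv ψ x / ψ x + deriv φ x / φ x) + q x) _ _ hB' hε hax haA hbabs hge
      (abs_le.mpr ⟨h1.le, h2.le⟩)
  · -- sublinearity of v
    have := hψlim.sub hφlim
    simpa [sub_div] using this

/-- Proposition 2.2. If there exist `λ ∈ ℝ`, `R ∈ {-∞} ∪ ℝ` and an
admissible `φ ∈ A_R` with `Lφ = λφ` on `(R,∞)`, then
`λ = λ̲₁(L,(R,∞)) = λ̄₁(L,(R,∞))`. -/
theorem eigenvalue_eq_generalized_principal_eigenvalues
    (a q c : ℝ → ℝ)
    (ha_cont : Continuous a) (hq_cont : Continuous q) (hc_cont : Continuous c)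
    (ha_bdd : ∃ M, ∀ x, |a x| ≤ M) (hq_bdd : ∃ M, ∀ x, |q x| ≤ M)
    (hc_bdd : ∃ M, ∀ x, |c x| ≤ M)
    (ha_pos : ∃ m > 0, ∀ x, m ≤ a x)
    (lam : ℝ) :
    (∀ R : ℝ,
      (∃ φ, AdmissibleOn R φ ∧ ∀ x ∈ Set.Ioi R, Lop a q c φ x = lam * φ x) →
        lamLower a q c R = lam ∧ lamUpper a q c R = lam) ∧
    ((∃ φ, AdmissibleAll φ ∧ ∀ x : ℝ, Lop a q c φ x = lam * φ x) →
        lamLowerAll a q c = lam ∧ lamUpperAll a q c = lam) := by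
  constructor
  · rintro R ⟨φ, hadm, heq⟩
    obtain ⟨hφ1, hφ2, hφpos, hφM, hφlim⟩ := hadm
    have hφpos' : ∀ x ∈ Set.Ioi R, 0 < φ x := fun x hx => hφpos x (Set.mem_Ici.mpr (le_of_lt hx))
    constructor
    · have hgt : IsGreatest
          {μ : ℝ | ∃ ψ, AdmissibleOn R ψ ∧ ∀ x ∈ Set.Ioi R, μ * ψ x ≤ Lop a q c ψ x} lam := by
        constructor
        · exact ⟨φ, ⟨hφ1, hφ2, hφpos, hφM, hφlim⟩, fun x hx => (heq x hx).symm.le⟩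
        · rintro μ ⟨ψ, ⟨hψ1, hψ2, hψpos, hψM, hψlim⟩, hψineq⟩
          exact comparison_aux a q c ha_bdd hq_bdd ha_pos R μ lam ψ φ hψ2
            (fun x hx => hψpos x (Set.mem_Ici.mpr (le_of_lt hx))) hψM hψlim hφ2 hφpos' hφM hφlim
            (fun x hx => hψineq x hx) (fun x hx => (heq x hx).le)
      exact hgt.csSup_eq
    · have hls : IsLeast
          {ν : ℝ | ∃ ψ, AdmissibleOn R ψ ∧ ∀ x ∈ Set.Ioi R, Lop a q c ψ x ≤ ν * ψ x} lam := by
        constructor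
        · exact ⟨φ, ⟨hφ1, hφ2, hφpos, hφM, hφlim⟩, fun x hx => (heq x hx).le⟩
        · rintro ν ⟨ψ, ⟨hψ1, hψ2, hψpos, hψM, hψlim⟩, hψineq⟩
          exact comparison_aux a q c ha_bdd hq_bdd ha_pos R lam ν φ ψ hφ2 hφpos' hφM hφlim
            hψ2 (fun x hx => hψpos x (Set.mem_Ici.mpr (le_of_lt hx))) hψM hψlim
            (fun x hx => (heq x hx).symm.le) (fun x hx => hψineq x hx)
      exact hls.csInf_eq
  · rintro ⟨φ, hadm, heq⟩
    obtain ⟨hφ2, hφpos, hφM, hφlim, hadm5⟩ := hadm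
    have hφ2' : ContDiffOn ℝ 2 φ (Set.Ioi (0:ℝ)) := hφ2.contDiffOn
    have hφpos' : ∀ x ∈ Set.Ioi (0:ℝ), 0 < φ x := fun x _ => hφpos x
    obtain ⟨Mφ, hMφ⟩ := hφM
    constructor
    · have hgt : IsGreatest
          {μ : ℝ | ∃ ψ, AdmissibleAll ψ ∧ ∀ x : ℝ, μ * ψ x ≤ Lop a q c ψ x} lam := by
        constructor
        · exact ⟨φ, ⟨hφ2, hφpos, ⟨Mφ, hMφ⟩, hφlim, hadm5⟩, fun x => (heq x).symm.le⟩
        · rintro μ ⟨ψ, ⟨hψ2, hψpos, ⟨Mψ, hMψ⟩, hψlim, _⟩, hψineq⟩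
          exact comparison_aux a q c ha_bdd hq_bdd ha_pos 0 μ lam ψ φ hψ2.contDiffOn
            (fun x _ => hψpos x) ⟨Mψ, fun x _ => hMψ x⟩ hψlim hφ2' hφpos'
            ⟨Mφ, fun x _ => hMφ x⟩ hφlim (fun x _ => hψineq x) (fun x _ => (heq x).le)
      exact hgt.csSup_eq
    · have hls : IsLeast
          {ν : ℝ | ∃ ψ, AdmissibleAll ψ ∧ ∀ x : ℝ, Lop a q c ψ x ≤ ν * ψ x} lam := by
        constructor
        · exact ⟨φ, ⟨hφ2, hφpos, ⟨Mφ, hMφ⟩, hφlim, hadm5⟩, fun x => (heq x).le⟩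
        · rintro ν ⟨ψ, ⟨hψ2, hψpos, ⟨Mψ, hMψ⟩, hψlim, _⟩, hψineq⟩
          exact comparison_aux a q c ha_bdd hq_bdd ha_pos 0 lam ν φ ψ hφ2' hφpos'
            ⟨Mφ, fun x _ => hMφ x⟩ hφlim hψ2.contDiffOn (fun x _ => hψpos x)
            ⟨Mψ, fun x _ => hMψ x⟩ hψlim (fun x _ => (heq x).symm.le) (fun x _ => hψineq x)
      exact hls.csInf_eq
end

section
/- Let a, q, c : ℝ → ℝ be continuous and bounded, inf_ℝ a > 0, and assume liminf_{|x|→∞} (4 c(x) a(x) − q(x)²) > 0. For p ∈ ℝ let L_p φ = a φ'' + (2pa + q)φ' + (ap² + qp + c)φ, and define H̄(p) := lim_{R→+∞} λ̄₁(L_p,(R,∞)) and H̲(p) := lim_{R→+∞} λ̲₁(L_p,(R,∞)). Then H̄ and H̲ are locally Lipschitz-continuous on ℝ, and there exist constants C ≥ c₀ > 0 such that c₀(1 + |p|²) ≤ H̲(p) ≤ H̄(p) ≤ C(1 + |p|²) for all p ∈ ℝ. -/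
open Real Filter Set

/-- Growth: derivative bounded below on an interval gives linear growth. -/
lemma growth_aux_s6 {m y z : ℝ} {f f' : ℝ → ℝ} (hyz : y ≤ z)
    (hf : ∀ t ∈ Set.Icc y z, HasDerivAt f (f' t) t)
    (hm : ∀ t ∈ Set.Icc y z, m ≤ f' t) :
    m * (z - y) ≤ f z - f y := by
  have hD : Convex ℝ (Set.Icc y z) := convex_Icc y z
  have hcont : ContinuousOn f (Set.Icc y z) := fun t ht =>
    ((hf t ht).continuousAt).continuousWithinAt
  have hdiff : DifferentiableOn ℝ f (interior (Set.Icc y z)) := fun t ht =>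
    ((hf t (interior_subset ht)).differentiableAt).differentiableWithinAt
  have hge : ∀ t ∈ interior (Set.Icc y z), m ≤ deriv f t := by
    intro t ht
    have ht' := interior_subset ht
    rw [(hf t ht').deriv]
    exact hm t ht'
  exact hD.mul_sub_le_image_sub_of_le_deriv hcont hdiff hge y
    (Set.left_mem_Icc.2 hyz) z (Set.right_mem_Icc.2 hyz) hyz

/-- Barrier lemma: if `g' ≥ δ > 0` wherever `|g| ≤ V`, then any level
`ℓ ∈ [-V,V]` is a lower barrier for `g`. -/
lemma barrier_aux {R δ V ℓ : ℝ} (hδ : 0 < δ) (habs : |ℓ| ≤ V) {g : ℝ → ℝ}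
    (hg : ContinuousOn g (Set.Ioi R))
    (hband : ∀ x ∈ Set.Ioi R, |g x| ≤ V → ∃ g', HasDerivAt g g' x ∧ δ ≤ g')
    {y : ℝ} (hy : R < y) (hgy : ℓ ≤ g y) : ∀ x, y ≤ x → ℓ ≤ g x := by
  intro x hx
  by_contra hgx
  push_neg at hgx
  have hyx : y < x := by
    rcases eq_or_lt_of_le hx with h | h
    · exact absurd hgy (by rw [h]; exact not_le.2 hgx)
    · exact h
  set K : Set ℝ := {t ∈ Set.Icc y x | ℓ ≤ g t} with hK
  have hKne : K.Nonempty := ⟨y, ⟨Set.left_mem_Icc.2 hx, hgy⟩⟩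
  have hKbdd : BddAbove K := ⟨x, fun t ht => ht.1.2⟩
  have hsubI : Set.Icc y x ⊆ Set.Ioi R := fun t ht => lt_of_lt_of_le hy ht.1
  have hKclosed : IsClosed K := by
    have : K = Set.Icc y x ∩ g ⁻¹' (Set.Ici ℓ) := by
      ext t; simp [hK, Set.mem_sep_iff, and_comm]
    rw [this]
    exact ContinuousOn.preimage_isClosed_of_isClosed (hg.mono hsubI) isClosed_Icc isClosed_Ici
  set s := sSup K with hs
  have hsK : s ∈ K := hKclosed.csSup_mem hKne hKbdd
  have hsle : s ≤ x := hsK.1.2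
  have hys : y ≤ s := hsK.1.1
  have hgs : ℓ ≤ g s := hsK.2
  have hsx : s < x := by
    rcases lt_or_eq_of_le hsle with h | h
    · exact h
    · exact absurd (h ▸ hgs) (not_le.2 hgx)
  have hafter : ∀ t, s < t → t ≤ x → g t < ℓ := by
    intro t hst htx
    by_contra h
    push_neg at h
    have : t ∈ K := ⟨⟨hys.trans hst.le, htx⟩, h⟩
    exact absurd (le_csSup hKbdd this) (not_le.2 hst)
  have hsIoi : s ∈ Set.Ioi R := hsubI ⟨hys, hsle⟩
  -- g s = ℓ
  have hgseq : g s = ℓ := by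
    by_contra hne
    have hlt : ℓ < g s := lt_of_le_of_ne hgs (Ne.symm hne)
    have hc : ContinuousAt g s := hg.continuousAt (Ioi_mem_nhds hsIoi)
    have hev : ∀ᶠ t in nhds s, ℓ < g t := hc.eventually_const_lt hlt
    have hev2 : ∀ᶠ t in nhdsWithin s (Set.Ioi s), ℓ < g t :=
      nhdsWithin_le_nhds hev
    have hne2 : (nhdsWithin s (Set.Ioo s x)).NeBot := by
      exact left_nhdsWithin_Ioo_neBot hsx
    have hev3 : ∀ᶠ t in nhdsWithin s (Set.Ioo s x), ℓ < g t :=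
      nhdsWithin_mono s Set.Ioo_subset_Ioi_self hev2
    rcases (hev3.and (eventually_mem_nhdsWithin)).exists with ⟨t, ht1, ht2⟩
    exact absurd ht1 (not_lt.2 (hafter t ht2.1 ht2.2.le).le)
  -- derivative at s is ≥ δ > 0, so g increases to the right, contradiction
  have habs' : |g s| ≤ V := by rw [hgseq]; exact habs
  obtain ⟨g', hd, hδg⟩ := hband s hsIoi habs'
  have hslope : Filter.Tendsto (slope g s) (nhdsWithin s {s}ᶜ) (nhds g') :=
    hasDerivAt_iff_tendsto_slope.1 hd
  have hpos : ∀ᶠ t in nhdsWithin s {s}ᶜ, 0 < slope g s t :=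
    hslope.eventually_const_lt (lt_of_lt_of_le hδ hδg) |>.mono (fun t ht => ht)
  have hne2 : (nhdsWithin s (Set.Ioo s x)).NeBot := left_nhdsWithin_Ioo_neBot hsx
  have hsub : Set.Ioo s x ⊆ {s}ᶜ := fun t ht => (ne_of_gt ht.1)
  have hpos2 : ∀ᶠ t in nhdsWithin s (Set.Ioo s x), 0 < slope g s t :=
    nhdsWithin_mono s hsub hpos
  rcases (hpos2.and eventually_mem_nhdsWithin).exists with ⟨t, ht1, ht2⟩
  have : 0 < (g t - g s) / (t - s) := by
    simpa [slope_def_field, div_eq_iff] using ht1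
  have htgt : g s < g t := by
    have hts : 0 < t - s := sub_pos.2 ht2.1
    nlinarith [mul_pos this hts, div_mul_cancel₀ (g t - g s) (ne_of_gt hts)]
  rw [hgseq] at htgt
  exact absurd htgt (not_lt.2 (hafter t ht2.1 ht2.2.le).le)


/-- If eventually `w' ≥ V > 0` then `w x / x` cannot tend to `0`. -/
lemma tail_growth_aux {R V t : ℝ} (hV : 0 < V) {w g : ℝ → ℝ} (hRt : R < t)
    (hw : ∀ x ∈ Set.Ioi R, HasDerivAt w (g x) x)
    (hge : ∀ x, t ≤ x → V ≤ g x)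
    (hlim : Filter.Tendsto (fun x => w x / x) Filter.atTop (nhds 0)) : False := by
  have hgrow : ∀ x, t ≤ x → V * (x - t) ≤ w x - w t := by
    intro x hx
    refine growth_aux_s6 hx (fun s hs => hw s (lt_of_lt_of_le hRt hs.1)) (fun s hs => hge s hs.1)
  have hlow : Filter.Tendsto (fun x : ℝ => (w t - V * t) / x + V) Filter.atTop
      (nhds (0 + V)) := by
    exact (tendsto_const_nhds.div_atTop tendsto_id).add tendsto_const_nhds
  rw [zero_add] at hlow
  have hle : ∀ᶠ x : ℝ in Filter.atTop, (w t - V * t) / x + V ≤ w x / x := by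
    filter_upwards [Filter.eventually_ge_atTop (max t 1)] with x hx
    have hxt : t ≤ x := le_trans (le_max_left _ _) hx
    have hx1 : (1:ℝ) ≤ x := le_trans (le_max_right _ _) hx
    have hx0 : 0 < x := lt_of_lt_of_le one_pos hx1
    have h1 : w t - V * t + V * x ≤ w x := by nlinarith [hgrow x hxt]
    rw [div_add' _ _ _ (ne_of_gt hx0), div_le_div_iff₀ hx0 hx0]
    nlinarith
  have := le_of_tendsto_of_tendsto hlow hlim hle
  linarith

/-- Key lemma: if `g' ≥ δ` on the band `|g| ≤ V` and `w' = g`, then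
`w x / x → 0` is impossible. -/
lemma key_aux {R δ V : ℝ} (hδ : 0 < δ) (hV : 0 < V) {w g : ℝ → ℝ}
    (hw : ∀ x ∈ Set.Ioi R, HasDerivAt w (g x) x)
    (hg : ContinuousOn g (Set.Ioi R))
    (hband : ∀ x ∈ Set.Ioi R, |g x| ≤ V → ∃ g', HasDerivAt g g' x ∧ δ ≤ g')
    (hlim : Filter.Tendsto (fun x => w x / x) Filter.atTop (nhds 0)) : False := by
  set x₀ := R + 1 with hx₀
  have hRx₀ : R < x₀ := by linarith
  by_cases hcase : ∃ y, x₀ ≤ y ∧ -V ≤ g y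
  · obtain ⟨y, hy₀, hgy⟩ := hcase
    have hRy : R < y := lt_of_lt_of_le hRx₀ hy₀
    have hbar : ∀ x, y ≤ x → -V ≤ g x :=
      barrier_aux hδ (by rw [abs_neg, abs_of_pos hV]) hg hband hRy hgy
    -- find a point where g ≥ V
    set T := 2 * V / δ + 1 with hT
    have hTpos : 0 < T := by positivity
    have hexists : ∃ s, s ∈ Set.Icc y (y + T) ∧ V ≤ g s := by
      by_contra hno
      push_neg at hno
      have hin : ∀ s ∈ Set.Icc y (y + T), |g s| ≤ V := by
        intro s hs
        have h1 : -V ≤ g s := hbar s hs.1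
        have h2 : g s < V := hno s hs
        rw [abs_le]; exact ⟨h1, h2.le⟩
      have hIoi : ∀ s ∈ Set.Icc y (y + T), s ∈ Set.Ioi R :=
        fun s hs => lt_of_lt_of_le hRy hs.1
      have hder : ∀ s ∈ Set.Icc y (y + T), HasDerivAt g (deriv g s) s := by
        intro s hs
        obtain ⟨g', hd, _⟩ := hband s (hIoi s hs) (hin s hs)
        rw [hd.deriv]; exact hd
      have hdge : ∀ s ∈ Set.Icc y (y + T), δ ≤ deriv g s := by
        intro s hs
        obtain ⟨g', hd, hδ'⟩ := hband s (hIoi s hs) (hin s hs)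
        rw [hd.deriv]; exact hδ'
      have := growth_aux_s6 (by linarith : y ≤ y + T) hder hdge
      have h1 : |g (y + T)| ≤ V := hin _ (Set.right_mem_Icc.2 (by linarith))
      have h2 : |g y| ≤ V := hin _ (Set.left_mem_Icc.2 (by linarith))
      rw [abs_le] at h1 h2
      have hδT : δ * T = 2 * V + δ := by rw [hT, mul_add, mul_one]; congr 1; field_simp
      simp only [add_sub_cancel_left] at this
      linarith [this, h1.2, h2.1]
    obtain ⟨s, hs, hgs⟩ := hexists
    have hRs : R < s := lt_of_lt_of_le hRy hs.1
    have hbar2 : ∀ x, s ≤ x → V ≤ g x :=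
      barrier_aux hδ (by rw [abs_of_pos hV]) hg hband hRs hgs
    exact tail_growth_aux hV hRs hw hbar2 hlim
  · push_neg at hcase
    have hle : ∀ x, x₀ ≤ x → V ≤ -g x := by
      intro x hx
      have := hcase x hx
      linarith
    have hw' : ∀ x ∈ Set.Ioi R, HasDerivAt (fun y => -w y) (-g x) x :=
      fun x hx => (hw x hx).neg
    have hlim' : Filter.Tendsto (fun x => (-w x) / x) Filter.atTop (nhds 0) := by
      have := hlim.neg
      rw [neg_zero] at this
      simpa [neg_div] using this
    exact tail_growth_aux hV hRx₀ (g := fun y => -g y) hw' hle hlim'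


namespace AdmissibleOn

variable {R : ℝ} {φ : ℝ → ℝ}

lemma pos (h : AdmissibleOn R φ) {x : ℝ} (hx : x ∈ Set.Ioi R) : 0 < φ x :=
  h.2.2.1 x (Set.mem_Ici.2 (le_of_lt hx))

lemma hasDeriv (h : AdmissibleOn R φ) {x : ℝ} (hx : x ∈ Set.Ioi R) :
    HasDerivAt φ (deriv φ x) x :=
  (((h.2.1.differentiableOn (by norm_num)).differentiableAt
    (isOpen_Ioi.mem_nhds hx))).hasDerivAt

lemma contDiffOn_deriv (h : AdmissibleOn R φ) :
    ContDiffOn ℝ 1 (deriv φ) (Set.Ioi R) :=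
  h.2.1.deriv_of_isOpen isOpen_Ioi (by norm_num)

lemma hasDeriv2 (h : AdmissibleOn R φ) {x : ℝ} (hx : x ∈ Set.Ioi R) :
    HasDerivAt (deriv φ) (deriv (deriv φ) x) x :=
  (((h.contDiffOn_deriv.differentiableOn (by norm_num)).differentiableAt
    (isOpen_Ioi.mem_nhds hx))).hasDerivAt

lemma continuousOn_deriv (h : AdmissibleOn R φ) :
    ContinuousOn (deriv φ) (Set.Ioi R) := h.contDiffOn_deriv.continuousOn

/-- continuity of `φ'/φ` on `(R,∞)` -/
lemma continuousOn_U (h : AdmissibleOn R φ) :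
    ContinuousOn (fun y => deriv φ y / φ y) (Set.Ioi R) :=
  h.continuousOn_deriv.div (h.2.1.continuousOn) (fun x hx => (h.pos hx).ne')

/-- derivative of `log φ` -/
lemma hasDeriv_log (h : AdmissibleOn R φ) {x : ℝ} (hx : x ∈ Set.Ioi R) :
    HasDerivAt (fun y => Real.log (φ y)) (deriv φ x / φ x) x :=
  (h.hasDeriv hx).log (h.pos hx).ne'

/-- derivative of `U = φ'/φ` -/
lemma hasDeriv_U (h : AdmissibleOn R φ) {x : ℝ} (hx : x ∈ Set.Ioi R) :
    HasDerivAt (fun y => deriv φ y / φ y)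
      (deriv (deriv φ) x / φ x - (deriv φ x / φ x) ^ 2) x := by
  have h1 := (h.hasDeriv2 hx).div (h.hasDeriv hx) (h.pos hx).ne'
  refine h1.congr_deriv ?_
  have := (h.pos hx).ne'
  field_simp

/-- ratio form of the operator -/
lemma lop_eq (h : AdmissibleOn R φ) (a q c : ℝ → ℝ) {x : ℝ} (hx : x ∈ Set.Ioi R) :
    Lop a q c φ x = φ x * (a x * (deriv (deriv φ) x / φ x)
      + q x * (deriv φ x / φ x) + c x) := by
  have := (h.pos hx).ne'
  rw [Lop]
  field_simp

end AdmissibleOn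


/-- ratio-form of the eigen-inequalities -/
lemma ratio_lower {R lam : ℝ} {a qf cf φ : ℝ → ℝ} (hφ : AdmissibleOn R φ)
    (h : ∀ x ∈ Set.Ioi R, lam * φ x ≤ Lop a qf cf φ x) {x : ℝ} (hx : x ∈ Set.Ioi R) :
    lam ≤ a x * (deriv (deriv φ) x / φ x) + qf x * (deriv φ x / φ x) + cf x := by
  have h1 := h x hx
  rw [hφ.lop_eq a qf cf hx] at h1
  have h2 := hφ.pos hx
  nlinarith

lemma ratio_upper {R mu : ℝ} {a qf cf φ : ℝ → ℝ} (hφ : AdmissibleOn R φ)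
    (h : ∀ x ∈ Set.Ioi R, Lop a qf cf φ x ≤ mu * φ x) {x : ℝ} (hx : x ∈ Set.Ioi R) :
    a x * (deriv (deriv φ) x / φ x) + qf x * (deriv φ x / φ x) + cf x ≤ mu := by
  have h1 := h x hx
  rw [hφ.lop_eq a qf cf hx] at h1
  have h2 := hφ.pos hx
  nlinarith

/-- Comparison: any lower eigenvalue is at most any upper eigenvalue. -/
lemma comparison_aux_s6 {R al CA MQ lam mu : ℝ} {a qf cf φ ψ : ℝ → ℝ}
    (hal : 0 < al)
    (ha : ∀ x ∈ Set.Ioi R, al ≤ a x ∧ a x ≤ CA)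
    (hq : ∀ x ∈ Set.Ioi R, |qf x| ≤ MQ)
    (hφ : AdmissibleOn R φ) (hψ : AdmissibleOn R ψ)
    (hlam : ∀ x ∈ Set.Ioi R, lam * φ x ≤ Lop a qf cf φ x)
    (hmu : ∀ x ∈ Set.Ioi R, Lop a qf cf ψ x ≤ mu * ψ x) : lam ≤ mu := by
  by_contra hlt
  push_neg at hlt
  -- constants
  obtain ⟨Mφ, hMφ⟩ := hφ.2.2.2.1
  obtain ⟨Mψ, hMψ⟩ := hψ.2.2.2.1
  set MQ' := max MQ 0 with hMQ'
  set Mφ' := max Mφ 0 with hMφ'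
  set Mψ' := max Mψ 0 with hMψ'
  have hmem : R + 1 ∈ Set.Ioi R := Set.mem_Ioi.mpr (by linarith)
  have hCA : 0 < CA := lt_of_lt_of_le hal (le_trans (ha (R+1) hmem).1 (ha (R+1) hmem).2)
  set B := CA * (Mφ' + Mψ') + MQ' + 1 with hB
  have hBpos : 0 < B := by
    have h1 : (0:ℝ) ≤ Mφ' := le_max_right _ _
    have h2 : (0:ℝ) ≤ Mψ' := le_max_right _ _
    have h3 : (0:ℝ) ≤ MQ' := le_max_right _ _
    nlinarith
  set V := (lam - mu) / (2 * B) with hV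
  set δ := (lam - mu) / (2 * CA) with hδdef
  have hVpos : 0 < V := by apply div_pos; linarith; linarith
  have hδpos : 0 < δ := by apply div_pos; linarith; linarith
  set U₁ := fun y => deriv φ y / φ y with hU₁
  set U₂ := fun y => deriv ψ y / ψ y with hU₂
  set g := fun y => U₁ y - U₂ y with hg
  set w := fun y => Real.log (φ y) - Real.log (ψ y) with hw
  apply key_aux hδpos hVpos (R := R) (w := w) (g := g)
  · intro x hx
    exact ((hφ.hasDeriv_log hx).sub (hψ.hasDeriv_log hx))
  · exact (hφ.continuousOn_U).sub (hψ.continuousOn_U)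
  · intro x hx hgV
    have hpφ := hφ.pos hx
    have hpψ := hψ.pos hx
    have hd1 := hφ.hasDeriv_U hx
    have hd2 := hψ.hasDeriv_U hx
    refine ⟨_, (hd1.sub hd2), ?_⟩
    -- the analytic estimate
    have h1 := ratio_lower hφ hlam hx
    have h2 := ratio_upper hψ hmu hx
    have haxl := (ha x hx).1
    have haxu := (ha x hx).2
    have hqx : |qf x| ≤ MQ' := le_trans (hq x hx) (le_max_left _ _)
    have hU1 : |U₁ x| ≤ Mφ' := le_trans (hMφ x hx) (le_max_left _ _)
    have hU2 : |U₂ x| ≤ Mψ' := le_trans (hMψ x hx) (le_max_left _ _)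
    set D₁ := deriv (deriv φ) x / φ x with hD₁
    set D₂ := deriv (deriv ψ) x / ψ x with hD₂
    -- a (D₁ - D₂) ≥ (lam - mu) - qf g - a g (U₁+U₂)
    have hstep : (lam - mu) - |g x| * (MQ' + CA * (Mφ' + Mψ')) ≤
        a x * ((D₁ - U₁ x ^ 2) - (D₂ - U₂ x ^ 2)) := by
      have e1 : a x * ((D₁ - U₁ x ^ 2) - (D₂ - U₂ x ^ 2)) =
          (a x * D₁ + qf x * U₁ x + cf x) - (a x * D₂ + qf x * U₂ x + cf x)
          - qf x * g x - a x * (g x * (U₁ x + U₂ x)) := by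
        simp only [hg]; ring
      rw [e1]
      have hq1 : qf x * g x ≤ |g x| * MQ' := by
        calc qf x * g x ≤ |qf x * g x| := le_abs_self _
        _ = |qf x| * |g x| := abs_mul _ _
        _ ≤ MQ' * |g x| := mul_le_mul_of_nonneg_right hqx (abs_nonneg _)
        _ = |g x| * MQ' := mul_comm _ _
      have hq2 : a x * (g x * (U₁ x + U₂ x)) ≤ |g x| * (CA * (Mφ' + Mψ')) := by
        calc a x * (g x * (U₁ x + U₂ x)) ≤ |a x * (g x * (U₁ x + U₂ x))| := le_abs_self _
        _ = |a x| * (|g x| * |U₁ x + U₂ x|) := by rw [abs_mul, abs_mul]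
        _ ≤ CA * (|g x| * (Mφ' + Mψ')) := by
            apply mul_le_mul
            · rw [abs_of_pos (lt_of_lt_of_le hal haxl)]; exact haxu
            · apply mul_le_mul_of_nonneg_left _ (abs_nonneg _)
              exact le_trans (abs_add_le _ _) (add_le_add hU1 hU2)
            · positivity
            · linarith
        _ = |g x| * (CA * (Mφ' + Mψ')) := by ring
      linarith
    have hVB : |g x| * (MQ' + CA * (Mφ' + Mψ')) ≤ (lam - mu) / 2 := by
      have h3 : MQ' + CA * (Mφ' + Mψ') ≤ B := by rw [hB]; linarith
      have h4 : (0:ℝ) ≤ MQ' + CA * (Mφ' + Mψ') := by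
        have h1 : (0:ℝ) ≤ Mφ' := le_max_right _ _
        have h2 : (0:ℝ) ≤ Mψ' := le_max_right _ _
        have h5 : (0:ℝ) ≤ MQ' := le_max_right _ _
        nlinarith
      have h6 : |g x| * (MQ' + CA * (Mφ' + Mψ')) ≤ V * B :=
        mul_le_mul hgV h3 h4 (le_of_lt hVpos)
      have h7 : V * B = (lam - mu) / 2 := by
        rw [hV]; field_simp
      exact le_of_le_of_eq h6 h7
    have hfin : (lam - mu) / 2 ≤ a x * ((D₁ - U₁ x ^ 2) - (D₂ - U₂ x ^ 2)) := by
      linarith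
    -- divide by a x
    have hapos : 0 < a x := lt_of_lt_of_le hal haxl
    have hgpos : 0 < (D₁ - U₁ x ^ 2) - (D₂ - U₂ x ^ 2) := by
      by_contra hng
      push_neg at hng
      have : a x * ((D₁ - U₁ x ^ 2) - (D₂ - U₂ x ^ 2)) ≤ 0 :=
        mul_nonpos_of_nonneg_of_nonpos (le_of_lt hapos) hng
      linarith
    have hCAG : a x * ((D₁ - U₁ x ^ 2) - (D₂ - U₂ x ^ 2)) ≤
        CA * ((D₁ - U₁ x ^ 2) - (D₂ - U₂ x ^ 2)) :=
      mul_le_mul_of_nonneg_right haxu (le_of_lt hgpos)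
    have hG2 : (lam - mu) / 2 ≤ CA * ((D₁ - U₁ x ^ 2) - (D₂ - U₂ x ^ 2)) :=
      le_trans hfin hCAG
    rw [hδdef, div_le_iff₀ (by linarith : (0:ℝ) < 2 * CA)]
    linarith [hG2]
  · have l1 := hφ.2.2.2.2
    have l2 := hψ.2.2.2.2
    have := l1.sub l2
    rw [sub_zero] at this
    simpa [hw, sub_div] using this


/-- The constant function 1 is admissible. -/
lemma admissible_one {R : ℝ} : AdmissibleOn R (fun _ => (1:ℝ)) := by
  refine ⟨contDiffOn_const, contDiffOn_const, fun x _ => one_pos, ⟨0, fun x _ => ?_⟩, ?_⟩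
  · simp
  · simpa using tendsto_const_nhds

lemma lop_one (a q c : ℝ → ℝ) (x : ℝ) : Lop a q c (fun _ => (1:ℝ)) x = c x := by
  simp [Lop]

/-- powers of admissible functions -/
lemma admissible_pow {R θ : ℝ} (hθ : 0 < θ) {φ : ℝ → ℝ} (hφ : AdmissibleOn R φ) :
    AdmissibleOn R (fun x => Real.exp (θ * Real.log (φ x))) ∧
    (∀ x ∈ Set.Ioi R,
      deriv (fun y => Real.exp (θ * Real.log (φ y))) x
        / Real.exp (θ * Real.log (φ x)) = θ * (deriv φ x / φ x) ∧
      deriv (deriv (fun y => Real.exp (θ * Real.log (φ y)))) x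
        / Real.exp (θ * Real.log (φ x)) =
        θ * (deriv (deriv φ) x / φ x) + (θ^2 - θ) * (deriv φ x / φ x)^2) := by
  set ψ := fun x => Real.exp (θ * Real.log (φ x)) with hψdef
  have hψpos : ∀ x, 0 < ψ x := fun x => Real.exp_pos _
  -- derivative of ψ on Ioi R
  have hψd : ∀ x ∈ Set.Ioi R, HasDerivAt ψ (ψ x * (θ * (deriv φ x / φ x))) x := by
    intro x hx
    have h1 : HasDerivAt (fun y => θ * Real.log (φ y)) (θ * (deriv φ x / φ x)) x :=
      (hφ.hasDeriv_log hx).const_mul θ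
    exact h1.exp
  have hderiv_eq : ∀ x ∈ Set.Ioi R, deriv ψ x = ψ x * (θ * (deriv φ x / φ x)) :=
    fun x hx => (hψd x hx).deriv
  obtain ⟨M, hM⟩ := hφ.2.2.2.1
  constructor
  · refine ⟨?_, ?_, fun x _ => hψpos x, ⟨θ * M, fun x hx => ?_⟩, ?_⟩
    · have hlog : ContDiffOn ℝ 1 (fun x => Real.log (φ x)) (Set.Ici R) :=
        hφ.1.log (fun x hx => (hφ.2.2.1 x hx).ne')
      exact (hlog.const_smul θ).exp
    · have hlog : ContDiffOn ℝ 2 (fun x => Real.log (φ x)) (Set.Ioi R) :=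
        hφ.2.1.log (fun x hx => (hφ.pos hx).ne')
      exact (hlog.const_smul θ).exp
    · rw [hderiv_eq x hx]
      have he : ψ x * (θ * (deriv φ x / φ x)) / ψ x = θ * (deriv φ x / φ x) := by
        rw [mul_comm, mul_div_assoc, div_self (hψpos x).ne', mul_one]
      rw [he, abs_mul, abs_of_pos hθ]
      exact mul_le_mul_of_nonneg_left (hM x hx) hθ.le
    · have hle : (fun x => Real.log (ψ x) / x) = fun x => θ * (Real.log (φ x) / x) := by
        funext y
        rw [hψdef]
        simp [Real.log_exp, mul_div_assoc]
      rw [hle]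
      have := (hφ.2.2.2.2).const_mul θ
      simpa using this
  · intro x hx
    have hUj := hφ.hasDeriv_U hx
    constructor
    · rw [hderiv_eq x hx]
      rw [mul_comm, mul_div_assoc, div_self (hψpos x).ne', mul_one]
    · -- second derivative
      have hev : deriv ψ =ᶠ[nhds x] (fun y => ψ y * (θ * (deriv φ y / φ y))) := by
        filter_upwards [isOpen_Ioi.mem_nhds hx] with y hy
        exact hderiv_eq y hy
      rw [hev.deriv_eq]
      have hprod : HasDerivAt (fun y => ψ y * (θ * (deriv φ y / φ y)))
          ((ψ x * (θ * (deriv φ x / φ x))) * (θ * (deriv φ x / φ x))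
            + ψ x * (θ * (deriv (deriv φ) x / φ x - (deriv φ x / φ x) ^ 2))) x :=
        (hψd x hx).mul (hUj.const_mul θ)
      rw [hprod.deriv]
      field_simp
      ring
  -- tendsto


set_option maxHeartbeats 1000000 in
/-- Pointwise quadratic lower bound under monostability. -/
lemma quad_lower_pt {al CA CQ m s qq cc p : ℝ} (hal : 0 < al) (h1 : al ≤ s)
    (h2 : s ≤ CA) (hq : |qq| ≤ CQ) (hm : 0 < m) (hmono : m ≤ 4 * cc * s - qq ^ 2) :
    (min m (al ^ 2) / (4 * CA * (1 + (CQ / al) ^ 2))) * (1 + p ^ 2)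
      ≤ s * p ^ 2 + qq * p + cc := by
  have hCA : 0 < CA := lt_of_lt_of_le hal h1 |>.trans_le h2
  have hCQ : 0 ≤ CQ := le_trans (abs_nonneg _) hq
  set c0 := min m (al ^ 2) / (4 * CA * (1 + (CQ / al) ^ 2)) with hc0
  have hden : 0 < 4 * CA * (1 + (CQ / al) ^ 2) := by positivity
  have hc0pos : 0 < c0 := by
    apply div_pos _ hden
    exact lt_min hm (by positivity)
  have hkey : 4 * s * (s * p ^ 2 + qq * p + cc) = (2 * s * p + qq) ^ 2 + (4 * cc * s - qq ^ 2) := by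
    ring
  have hq2 : qq ^ 2 ≤ CQ ^ 2 := by
    rw [← sq_abs qq]
    exact pow_le_pow_left₀ (abs_nonneg _) hq 2
  rcases le_or_gt (|p|) (CQ / al) with hple | hpgt
  · -- small p: use s p² + qq p + cc ≥ m / (4 CA)
    have hp2 : p ^ 2 ≤ (CQ / al) ^ 2 := by
      rw [← sq_abs p]; exact pow_le_pow_left₀ (abs_nonneg _) hple 2
    have hval : m / (4 * CA) ≤ s * p ^ 2 + qq * p + cc := by
      rw [div_le_iff₀ (by positivity)]
      nlinarith [sq_nonneg (2 * s * p + qq), hkey, hmono]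
    have hc0small : c0 * (1 + p ^ 2) ≤ m / (4 * CA) := by
      have h3 : c0 * (1 + p ^ 2) ≤ c0 * (1 + (CQ / al) ^ 2) := by
        apply mul_le_mul_of_nonneg_left _ hc0pos.le
        linarith
      have h4 : c0 * (1 + (CQ / al) ^ 2) ≤ m / (4 * CA) := by
        rw [hc0, div_mul_eq_mul_div, div_le_div_iff₀ hden (by positivity)]
        have : min m (al ^ 2) ≤ m := min_le_left _ _
        nlinarith [hden]
      linarith
    linarith
  · -- large p : (2sp+qq)² ≥ al² p²
    have halp : CQ ≤ al * |p| := by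
      rw [div_lt_iff₀ hal] at hpgt
      linarith [hpgt]
    have hsq : al ^ 2 * p ^ 2 ≤ (2 * s * p + qq) ^ 2 := by
      have h2s : 2 * al * |p| - CQ ≥ al * |p| := by linarith
      have habs : al * |p| ≤ |2 * s * p + qq| := by
        have h5 : |2 * s * p| - |qq| ≤ |2 * s * p + qq| := by
          have h6 : (2 : ℝ) * s * p = (2 * s * p + qq) + (-qq) := by ring
          calc |2 * s * p| - |qq| = |(2 * s * p + qq) + (-qq)| - |qq| := by rw [← h6]
            _ ≤ (|2 * s * p + qq| + |(-qq)|) - |qq| := by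
                linarith [abs_add_le (2 * s * p + qq) (-qq)]
            _ = |2 * s * p + qq| := by rw [abs_neg]; ring
        have h7 : |2 * s * p| = 2 * s * |p| := by
          rw [abs_mul, abs_of_pos (by linarith : (0:ℝ) < 2 * s)]
        nlinarith [abs_nonneg p, h5]
      calc al ^ 2 * p ^ 2 = (al * |p|) ^ 2 := by rw [mul_pow, sq_abs]
        _ ≤ |2 * s * p + qq| ^ 2 := pow_le_pow_left₀ (by positivity) habs 2
        _ = (2 * s * p + qq) ^ 2 := sq_abs _
    have hval : (m + al ^ 2 * p ^ 2) / (4 * CA) ≤ s * p ^ 2 + qq * p + cc := by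
      have e1 : m + al ^ 2 * p ^ 2 ≤ 4 * s * (s * p ^ 2 + qq * p + cc) := by
        linarith [hkey, hmono, hsq]
      have e2 : 0 < s * p ^ 2 + qq * p + cc := by
        by_contra hng
        push_neg at hng
        have : 4 * s * (s * p ^ 2 + qq * p + cc) ≤ 0 :=
          mul_nonpos_of_nonneg_of_nonpos (by linarith) hng
        nlinarith [sq_nonneg p]
      have e3 : 4 * s * (s * p ^ 2 + qq * p + cc) ≤ 4 * CA * (s * p ^ 2 + qq * p + cc) := by
        nlinarith [mul_nonneg (sub_nonneg.2 h2) e2.le]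
      rw [div_le_iff₀ (by positivity)]
      linarith
    have hc0small : c0 * (1 + p ^ 2) ≤ (m + al ^ 2 * p ^ 2) / (4 * CA) := by
      have h8 : c0 ≤ min m (al ^ 2) / (4 * CA) := by
        rw [hc0]
        apply div_le_div_of_nonneg_left (le_min hm.le (by positivity)) (by positivity)
        nlinarith [sq_nonneg (CQ / al)]
      have h9 : c0 * (1 + p ^ 2) ≤ (min m (al ^ 2) / (4 * CA)) * (1 + p ^ 2) :=
        mul_le_mul_of_nonneg_right h8 (by positivity)
      have h10 : (min m (al ^ 2) / (4 * CA)) * (1 + p ^ 2) ≤ (m + al ^ 2 * p ^ 2) / (4 * CA) := by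
        rw [div_mul_eq_mul_div]
        have hm1 : min m (al ^ 2) ≤ m := min_le_left _ _
        have hm2 : min m (al ^ 2) * p ^ 2 ≤ al ^ 2 * p ^ 2 :=
          mul_le_mul_of_nonneg_right (min_le_right _ _) (sq_nonneg p)
        have hm4 : min m (al ^ 2) * (1 + p ^ 2) ≤ m + al ^ 2 * p ^ 2 := by nlinarith
        gcongr
      linarith
    linarith


set_option maxHeartbeats 1000000 in
/-- Pointwise shift estimate, lower version. -/
lemma shift_low_pt {CA CQ CC s qq cc U D p p' r h lam : ℝ}
    (hh : 0 < h) (hh1 : h ≤ 1) (hs0 : 0 ≤ s) (hsA : s ≤ CA)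
    (hq : |qq| ≤ CQ) (hc : |cc| ≤ CC) (hp : |p| ≤ r)
    (hpp : |p' - p| ≤ h) (hlam : 0 ≤ lam)
    (H : lam ≤ s * D + (2 * p * s + qq) * U + (s * p ^ 2 + qq * p + cc)) :
    lam - h * (2 * CA * (1 + r) ^ 2 + CQ * (1 + r) + CC) ≤
      s * ((1 + h) * D + ((1 + h) ^ 2 - (1 + h)) * U ^ 2)
        + (2 * p' * s + qq) * ((1 + h) * U) + (s * p' ^ 2 + qq * p' + cc) := by
  have hr : 0 ≤ r := le_trans (abs_nonneg p) hp
  have hCA : 0 ≤ CA := le_trans hs0 hsA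
  have hCQ : 0 ≤ CQ := le_trans (abs_nonneg _) hq
  have hCC : 0 ≤ CC := le_trans (abs_nonneg _) hc
  set θ := 1 + h with hθ
  set z := U + p with hz
  set e := p' - θ * p with he
  have hident : s * (θ * D + (θ ^ 2 - θ) * U ^ 2) + (2 * p' * s + qq) * (θ * U)
      + (s * p' ^ 2 + qq * p' + cc)
      = θ * (s * D + (2 * p * s + qq) * U + (s * p ^ 2 + qq * p + cc))
      + (s * θ * h * z ^ 2 + 2 * s * θ * e * z + s * e ^ 2 + qq * e - h * cc) := by
    rw [hθ, hz, he]; ring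
  have he_bd : |e| ≤ h * (1 + r) := by
    have : e = (p' - p) - h * p := by rw [he, hθ]; ring
    rw [this]
    calc |p' - p - h * p| ≤ |p' - p| + |h * p| := abs_sub _ _
      _ ≤ h + h * r := by
          rw [abs_mul, abs_of_pos hh]
          exact add_le_add hpp (mul_le_mul_of_nonneg_left hp hh.le)
      _ = h * (1 + r) := by ring
  have he2 : e ^ 2 ≤ (h * (1 + r)) ^ 2 := by
    rw [← sq_abs e]; exact pow_le_pow_left₀ (abs_nonneg _) he_bd 2
  -- main square estimate : h * (sθh z² + 2sθez) ≥ - sθ e²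
  have hsq : 0 ≤ s * θ * (h * z + e) ^ 2 := by positivity
  have hmain : s * θ * h * z ^ 2 + 2 * s * θ * e * z ≥ -(2 * CA * h * (1 + r) ^ 2) := by
    have hexp : h * (s * θ * h * z ^ 2 + 2 * s * θ * e * z) + s * θ * e ^ 2
        = s * θ * (h * z + e) ^ 2 := by ring
    have h1 : s * θ * e ^ 2 ≤ 2 * CA * (h * (1 + r)) ^ 2 := by
      have hsθ : s * θ ≤ 2 * CA := by
        rw [hθ]
        nlinarith [mul_le_mul_of_nonneg_left hh1 hs0]
      exact mul_le_mul hsθ he2 (sq_nonneg e) (by positivity)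
    have h2 : -(2 * CA * (h * (1 + r)) ^ 2) ≤ h * (s * θ * h * z ^ 2 + 2 * s * θ * e * z) := by
      linarith [hsq, hexp]
    have h3 : -(2 * CA * (h * (1 + r)) ^ 2) = h * (-(2 * CA * h * (1 + r) ^ 2)) := by ring
    rw [h3] at h2
    exact le_of_mul_le_mul_left (by linarith [h2]) hh
  have hqq : qq * e ≥ -(CQ * (h * (1 + r))) := by
    have : |qq * e| ≤ CQ * (h * (1 + r)) := by
      rw [abs_mul]
      exact mul_le_mul hq he_bd (abs_nonneg _) hCQ
    linarith [neg_abs_le (qq * e)]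
  have hcc : -h * cc ≥ -(h * CC) := by
    have h1 : cc ≤ CC := le_trans (le_abs_self cc) hc
    have := mul_le_mul_of_nonneg_left h1 hh.le
    linarith
  have hse : 0 ≤ s * e ^ 2 := by positivity
  have hθlam : lam ≤ θ * lam := by
    rw [hθ]
    nlinarith [mul_nonneg hh.le hlam]
  rw [hident]
  have hH' : θ * (s * D + (2 * p * s + qq) * U + (s * p ^ 2 + qq * p + cc)) ≥ θ * lam := by
    apply mul_le_mul_of_nonneg_left H (by rw [hθ]; linarith)
  linarith [hmain, hqq, hcc, hse, hθlam, hH']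

set_option maxHeartbeats 1000000 in
/-- Pointwise shift estimate, upper version. -/
lemma shift_up_pt {CA CQ CC s qq cc U D p p' r h mu : ℝ}
    (hh : 0 < h) (hh1 : h ≤ 1/2) (hs0 : 0 ≤ s) (hsA : s ≤ CA)
    (hq : |qq| ≤ CQ) (hc : |cc| ≤ CC) (hp : |p| ≤ r)
    (hpp : |p' - p| ≤ h) (hmu : 0 ≤ mu)
    (H : s * D + (2 * p * s + qq) * U + (s * p ^ 2 + qq * p + cc) ≤ mu) :
    s * ((1 - h) * D + ((1 - h) ^ 2 - (1 - h)) * U ^ 2)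
        + (2 * p' * s + qq) * ((1 - h) * U) + (s * p' ^ 2 + qq * p' + cc) ≤
      mu + h * (2 * CA * (1 + r) ^ 2 + CQ * (1 + r) + CC) := by
  have hr : 0 ≤ r := le_trans (abs_nonneg p) hp
  have hCA : 0 ≤ CA := le_trans hs0 hsA
  have hCQ : 0 ≤ CQ := le_trans (abs_nonneg _) hq
  have hCC : 0 ≤ CC := le_trans (abs_nonneg _) hc
  set θ := 1 - h with hθ
  have hθpos : 0 < θ := by rw [hθ]; linarith
  have hθ1 : θ ≤ 1 := by rw [hθ]; linarith
  set z := U + p with hz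
  set e := p' - θ * p with he
  have hident : s * (θ * D + (θ ^ 2 - θ) * U ^ 2) + (2 * p' * s + qq) * (θ * U)
      + (s * p' ^ 2 + qq * p' + cc)
      = θ * (s * D + (2 * p * s + qq) * U + (s * p ^ 2 + qq * p + cc))
      + (-(s * θ * h * z ^ 2) + 2 * s * θ * e * z + s * e ^ 2 + qq * e + h * cc) := by
    rw [hθ, hz, he]; ring
  have he_bd : |e| ≤ h * (1 + r) := by
    have : e = (p' - p) + h * p := by rw [he, hθ]; ring
    rw [this]
    calc |p' - p + h * p| ≤ |p' - p| + |h * p| := abs_add_le _ _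
      _ ≤ h + h * r := by
          rw [abs_mul, abs_of_pos hh]
          exact add_le_add hpp (mul_le_mul_of_nonneg_left hp hh.le)
      _ = h * (1 + r) := by ring
  have he2 : e ^ 2 ≤ (h * (1 + r)) ^ 2 := by
    rw [← sq_abs e]; exact pow_le_pow_left₀ (abs_nonneg _) he_bd 2
  -- -sθh z² + 2sθez ≤ sθ e²/h ≤ CA h (1+r)²
  have hmain : -(s * θ * h * z ^ 2) + 2 * s * θ * e * z ≤ CA * h * (1 + r) ^ 2 := by
    have hsq : 0 ≤ s * θ * (h * z - e) ^ 2 := by positivity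
    have hexp : h * (-(s * θ * h * z ^ 2) + 2 * s * θ * e * z) - s * θ * e ^ 2
        = -(s * θ * (h * z - e) ^ 2) := by ring
    have h1 : s * θ * e ^ 2 ≤ CA * (h * (1 + r)) ^ 2 := by
      have hsθ : s * θ ≤ CA := by
        have : s * θ ≤ s * 1 := mul_le_mul_of_nonneg_left hθ1 hs0
        linarith
      exact mul_le_mul hsθ he2 (sq_nonneg e) (by positivity)
    have h2 : h * (-(s * θ * h * z ^ 2) + 2 * s * θ * e * z) ≤ CA * (h * (1 + r)) ^ 2 := by
      linarith [hsq, hexp]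
    have h3 : CA * (h * (1 + r)) ^ 2 = h * (CA * h * (1 + r) ^ 2) := by ring
    rw [h3] at h2
    exact le_of_mul_le_mul_left h2 hh
  have hqq : qq * e ≤ CQ * (h * (1 + r)) := by
    have : |qq * e| ≤ CQ * (h * (1 + r)) := by
      rw [abs_mul]; exact mul_le_mul hq he_bd (abs_nonneg _) hCQ
    linarith [le_abs_self (qq * e)]
  have hcc : h * cc ≤ h * CC := by
    have h1 : cc ≤ CC := by linarith [le_abs_self cc]
    exact mul_le_mul_of_nonneg_left h1 hh.le
  have hse : s * e ^ 2 ≤ CA * (h * (1 + r)) ^ 2 :=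
    mul_le_mul hsA he2 (sq_nonneg e) hCA
  have hse2 : CA * (h * (1 + r)) ^ 2 ≤ CA * h * (1 + r) ^ 2 := by
    have h1 : (h * (1 + r)) ^ 2 = h * (h * (1+r)^2) := by ring
    rw [h1]
    have h2 : h * (1 + r) ^ 2 ≤ 1 * (1 + r) ^ 2 :=
      mul_le_mul_of_nonneg_right (by linarith) (sq_nonneg _)
    nlinarith [mul_le_mul_of_nonneg_left h2 (mul_nonneg hCA hh.le)]
  have hθmu : θ * mu ≤ mu := by
    have : θ * mu ≤ 1 * mu := mul_le_mul_of_nonneg_right hθ1 hmu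
    linarith
  have hH' : θ * (s * D + (2 * p * s + qq) * U + (s * p ^ 2 + qq * p + cc)) ≤ θ * mu :=
    mul_le_mul_of_nonneg_left H hθpos.le
  rw [hident]
  linarith [hmain, hqq, hcc, hse, hse2, hθmu, hH']


/-- pointwise bounds on the zero-order coefficient -/
lemma cf_bounds_pt {CA CQ CC al s qq cc p : ℝ} (hal : 0 < al) (h1 : al ≤ s)
    (h2 : s ≤ CA) (hq : |qq| ≤ CQ) (hc : |cc| ≤ CC) :
    -(CA * p ^ 2 + CQ * |p| + CC) ≤ s * p ^ 2 + qq * p + cc ∧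
    s * p ^ 2 + qq * p + cc ≤ CA * p ^ 2 + CQ * |p| + CC := by
  have hsp0 : 0 ≤ s * p ^ 2 := mul_nonneg (by linarith) (sq_nonneg p)
  have hsp2 : s * p ^ 2 ≤ CA * p ^ 2 := mul_le_mul_of_nonneg_right h2 (sq_nonneg p)
  have hqp : |qq * p| ≤ CQ * |p| := by
    rw [abs_mul]; exact mul_le_mul_of_nonneg_right hq (abs_nonneg p)
  have h3 := le_abs_self (qq * p); have h4 := neg_abs_le (qq * p)
  have h5 := le_abs_self cc; have h6 := neg_abs_le cc
  constructor <;> linarith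

/-- lower shift at the level of test functions -/
lemma shift_mem_lower {R al CA CQ CC r h lam p p' : ℝ} {a q c : ℝ → ℝ}
    (hal : 0 < al) (haal : ∀ x, al ≤ a x) (haA : ∀ x, a x ≤ CA)
    (hqb : ∀ x, |q x| ≤ CQ) (hcb : ∀ x, |c x| ≤ CC)
    (hh : 0 < h) (hh1 : h ≤ 1) (hp : |p| ≤ r) (hpp : |p' - p| ≤ h) (hlam : 0 ≤ lam)
    {φ : ℝ → ℝ} (hφ : AdmissibleOn R φ)
    (hineq : ∀ x ∈ Set.Ioi R, lam * φ x ≤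
      Lop a (fun y => 2 * p * a y + q y) (fun y => a y * p ^ 2 + q y * p + c y) φ x) :
    ∃ ψ, AdmissibleOn R ψ ∧ ∀ x ∈ Set.Ioi R,
      (lam - h * (2 * CA * (1 + r) ^ 2 + CQ * (1 + r) + CC)) * ψ x ≤
        Lop a (fun y => 2 * p' * a y + q y) (fun y => a y * p' ^ 2 + q y * p' + c y) ψ x := by
  have hθ : (0:ℝ) < 1 + h := by linarith
  obtain ⟨hψ, hform⟩ := admissible_pow hθ hφ
  refine ⟨_, hψ, fun x hx => ?_⟩
  obtain ⟨hU, hD⟩ := hform x hx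
  rw [hψ.lop_eq a (fun y => 2 * p' * a y + q y) (fun y => a y * p' ^ 2 + q y * p' + c y) hx]
  have hpos : 0 < Real.exp ((1 + h) * Real.log (φ x)) := Real.exp_pos _
  rw [hU, hD]
  have hratio := ratio_lower hφ hineq hx
  have hshift := shift_low_pt (CA := CA) (CQ := CQ) (CC := CC) (s := a x) (qq := q x)
    (cc := c x) (U := deriv φ x / φ x) (D := deriv (deriv φ) x / φ x)
    (p := p) (p' := p') (r := r) (h := h) (lam := lam) hh hh1
    (le_trans hal.le (haal x)) (haA x) (hqb x) (hcb x) hp hpp hlam hratio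
  have hgoal : lam - h * (2 * CA * (1 + r) ^ 2 + CQ * (1 + r) + CC) ≤
      a x * ((1 + h) * (deriv (deriv φ) x / φ x)
        + ((1 + h) ^ 2 - (1 + h)) * (deriv φ x / φ x) ^ 2)
      + (2 * p' * a x + q x) * ((1 + h) * (deriv φ x / φ x))
      + (a x * p' ^ 2 + q x * p' + c x) := by linarith [hshift]
  calc (lam - h * (2 * CA * (1 + r) ^ 2 + CQ * (1 + r) + CC))
        * Real.exp ((1 + h) * Real.log (φ x))
      ≤ (a x * ((1 + h) * (deriv (deriv φ) x / φ x)
          + ((1 + h) ^ 2 - (1 + h)) * (deriv φ x / φ x) ^ 2)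
        + (2 * p' * a x + q x) * ((1 + h) * (deriv φ x / φ x))
        + (a x * p' ^ 2 + q x * p' + c x)) * Real.exp ((1 + h) * Real.log (φ x)) :=
        mul_le_mul_of_nonneg_right hgoal hpos.le
    _ = Real.exp ((1 + h) * Real.log (φ x))
        * (a x * ((1 + h) * (deriv (deriv φ) x / φ x)
          + ((1 + h) ^ 2 - (1 + h)) * (deriv φ x / φ x) ^ 2)
        + (2 * p' * a x + q x) * ((1 + h) * (deriv φ x / φ x))
        + (a x * p' ^ 2 + q x * p' + c x)) := by ring

/-- upper shift at the level of test functions -/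
lemma shift_mem_upper {R al CA CQ CC r h mu p p' : ℝ} {a q c : ℝ → ℝ}
    (hal : 0 < al) (haal : ∀ x, al ≤ a x) (haA : ∀ x, a x ≤ CA)
    (hqb : ∀ x, |q x| ≤ CQ) (hcb : ∀ x, |c x| ≤ CC)
    (hh : 0 < h) (hh1 : h ≤ 1/2) (hp : |p| ≤ r) (hpp : |p' - p| ≤ h) (hmu : 0 ≤ mu)
    {φ : ℝ → ℝ} (hφ : AdmissibleOn R φ)
    (hineq : ∀ x ∈ Set.Ioi R,
      Lop a (fun y => 2 * p * a y + q y) (fun y => a y * p ^ 2 + q y * p + c y) φ x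
        ≤ mu * φ x) :
    ∃ ψ, AdmissibleOn R ψ ∧ ∀ x ∈ Set.Ioi R,
      Lop a (fun y => 2 * p' * a y + q y) (fun y => a y * p' ^ 2 + q y * p' + c y) ψ x ≤
        (mu + h * (2 * CA * (1 + r) ^ 2 + CQ * (1 + r) + CC)) * ψ x := by
  have hθ : (0:ℝ) < 1 - h := by linarith
  obtain ⟨hψ, hform⟩ := admissible_pow hθ hφ
  refine ⟨_, hψ, fun x hx => ?_⟩
  obtain ⟨hU, hD⟩ := hform x hx
  rw [hψ.lop_eq a (fun y => 2 * p' * a y + q y) (fun y => a y * p' ^ 2 + q y * p' + c y) hx]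
  have hpos : 0 < Real.exp ((1 - h) * Real.log (φ x)) := Real.exp_pos _
  rw [hU, hD]
  have hratio := ratio_upper hφ hineq hx
  have hshift := shift_up_pt (CA := CA) (CQ := CQ) (CC := CC) (s := a x) (qq := q x)
    (cc := c x) (U := deriv φ x / φ x) (D := deriv (deriv φ) x / φ x)
    (p := p) (p' := p') (r := r) (h := h) (mu := mu) hh hh1
    (le_trans hal.le (haal x)) (haA x) (hqb x) (hcb x) hp hpp hmu hratio
  have hgoal : a x * ((1 - h) * (deriv (deriv φ) x / φ x)
        + ((1 - h) ^ 2 - (1 - h)) * (deriv φ x / φ x) ^ 2)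
      + (2 * p' * a x + q x) * ((1 - h) * (deriv φ x / φ x))
      + (a x * p' ^ 2 + q x * p' + c x) ≤
      mu + h * (2 * CA * (1 + r) ^ 2 + CQ * (1 + r) + CC) := by linarith [hshift]
  calc Real.exp ((1 - h) * Real.log (φ x))
        * (a x * ((1 - h) * (deriv (deriv φ) x / φ x)
          + ((1 - h) ^ 2 - (1 - h)) * (deriv φ x / φ x) ^ 2)
        + (2 * p' * a x + q x) * ((1 - h) * (deriv φ x / φ x))
        + (a x * p' ^ 2 + q x * p' + c x))
      ≤ Real.exp ((1 - h) * Real.log (φ x))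
        * (mu + h * (2 * CA * (1 + r) ^ 2 + CQ * (1 + r) + CC)) :=
        mul_le_mul_of_nonneg_left hgoal hpos.le
    _ = (mu + h * (2 * CA * (1 + r) ^ 2 + CQ * (1 + r) + CC))
        * Real.exp ((1 - h) * Real.log (φ x)) := by ring

/-- a one-sided local estimate gives local Lipschitz continuity -/
lemma locallyLipschitz_of_onesided {H : ℝ → ℝ} {CA CQ CC : ℝ}
    (hCA : 0 ≤ CA) (hCQ : 0 ≤ CQ) (hCC : 0 ≤ CC)
    (hb : ∀ r : ℝ, 1 ≤ r → ∀ p p' : ℝ, |p| ≤ r → |p'| ≤ r → 0 < |p' - p| →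
      |p' - p| ≤ 1/2 →
      H p ≤ H p' + |p' - p| * (2 * CA * (1 + r) ^ 2 + CQ * (1 + r) + CC)) :
    LocallyLipschitz H := by
  intro x
  set r := |x| + 1 with hr
  have hr1 : 1 ≤ r := by have := abs_nonneg x; linarith
  set K := 2 * CA * (1 + r) ^ 2 + CQ * (1 + r) + CC with hK
  have hK0 : 0 ≤ K := by positivity
  refine ⟨K.toNNReal, Metric.ball x (1/4), Metric.ball_mem_nhds x (by norm_num), ?_⟩
  apply LipschitzOnWith.of_dist_le_mul
  intro p hp p' hp'
  rw [Real.dist_eq, Real.dist_eq, Real.coe_toNNReal _ hK0]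
  rcases eq_or_ne p p' with rfl | hne
  · simp
  have hd : 0 < |p - p'| := abs_pos.2 (sub_ne_zero.2 hne)
  have hd' : 0 < |p' - p| := by rw [abs_sub_comm]; exact hd
  rw [Metric.mem_ball, Real.dist_eq] at hp hp'
  have hpr : |p| ≤ r := by
    have := abs_sub_abs_le_abs_sub p x
    rw [hr]; linarith [hp]
  have hp'r : |p'| ≤ r := by
    have := abs_sub_abs_le_abs_sub p' x
    rw [hr]; linarith [hp']
  have hsmall : |p' - p| ≤ 1/2 := by
    have h1 : |p' - p| ≤ |p' - x| + |x - p| := abs_sub_le p' x p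
    have h2 : |x - p| = |p - x| := abs_sub_comm _ _
    rw [h2] at h1
    linarith [hp, hp', h1]
  have hsmall' : |p - p'| ≤ 1/2 := by rw [abs_sub_comm]; exact hsmall
  have hb1 := hb r hr1 p p' hpr hp'r hd' hsmall
  have hb2 := hb r hr1 p' p hp'r hpr (by rwa [abs_sub_comm]) hsmall'
  rw [abs_sub_comm p' p] at hb1
  have hb1' : H p ≤ H p' + |p - p'| * K := by rw [hK]; exact hb1
  have hb2' : H p' ≤ H p + |p - p'| * K := by rw [hK]; exact hb2
  rw [abs_le]
  constructor
  · linarith [hb2']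
  · linarith [hb1']


set_option maxHeartbeats 1000000 in
/-- Proposition 2.3. Under the monostability condition
`liminf_{|x|→∞} (4 c a - q²) > 0`, the Hamiltonians
`H̲(p) = lim_{R→∞} λ̲₁(L_p,(R,∞))` and `H̄(p) = lim_{R→∞} λ̄₁(L_p,(R,∞))` are locally
Lipschitz continuous and satisfy `c₀(1+|p|²) ≤ H̲(p) ≤ H̄(p) ≤ C(1+|p|²)` for some
`C ≥ c₀ > 0`. -/
theorem Hamiltonian_properties
    (a q c : ℝ → ℝ)
    (ha_cont : Continuous a) (hq_cont : Continuous q) (hc_cont : Continuous c)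
    (ha_bdd : ∃ M, ∀ x, |a x| ≤ M) (hq_bdd : ∃ M, ∀ x, |q x| ≤ M)
    (hc_bdd : ∃ M, ∀ x, |c x| ≤ M)
    (ha_pos : ∃ m > 0, ∀ x, m ≤ a x)
    (hmono : ∃ m > 0, ∃ R₀ : ℝ, ∀ x : ℝ, R₀ ≤ |x| → m ≤ 4 * c x * a x - q x ^ 2)
    (Hlow Hup : ℝ → ℝ)
    (hHlow : ∀ p : ℝ, Filter.Tendsto
      (fun R => lamLower a (fun x => 2 * p * a x + q x)
        (fun x => a x * p ^ 2 + q x * p + c x) R) Filter.atTop (nhds (Hlow p)))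
    (hHup : ∀ p : ℝ, Filter.Tendsto
      (fun R => lamUpper a (fun x => 2 * p * a x + q x)
        (fun x => a x * p ^ 2 + q x * p + c x) R) Filter.atTop (nhds (Hup p))) :
    LocallyLipschitz Hlow ∧ LocallyLipschitz Hup ∧
    ∃ C c₀ : ℝ, 0 < c₀ ∧ c₀ ≤ C ∧
      ∀ p : ℝ, c₀ * (1 + |p| ^ 2) ≤ Hlow p ∧ Hlow p ≤ Hup p ∧
        Hup p ≤ C * (1 + |p| ^ 2) := by
  classical
  obtain ⟨Ma, hMa⟩ := ha_bdd
  obtain ⟨Mq, hMq⟩ := hq_bdd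
  obtain ⟨Mc, hMc⟩ := hc_bdd
  obtain ⟨al, hal, haal⟩ := ha_pos
  obtain ⟨m, hm, R₀, hR₀⟩ := hmono
  set CA := max Ma al with hCAdef
  set CQ := max Mq 0 with hCQdef
  set CC := max Mc 0 with hCCdef
  have halCA : al ≤ CA := le_max_right _ _
  have hCApos : 0 < CA := lt_of_lt_of_le hal halCA
  have haA : ∀ x, a x ≤ CA :=
    fun x => le_trans (le_abs_self _) (le_trans (hMa x) (le_max_left _ _))
  have hqb : ∀ x, |q x| ≤ CQ := fun x => le_trans (hMq x) (le_max_left _ _)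
  have hcb : ∀ x, |c x| ≤ CC := fun x => le_trans (hMc x) (le_max_left _ _)
  have hCQ0 : (0:ℝ) ≤ CQ := le_max_right _ _
  have hCC0 : (0:ℝ) ≤ CC := le_max_right _ _
  set c0 := min m (al ^ 2) / (4 * CA * (1 + (CQ / al) ^ 2)) with hc0def
  have hc0pos : 0 < c0 := div_pos (lt_min hm (by positivity)) (by positivity)
  set R₁ := max R₀ 0 with hR₁def
  -- the admissible sets
  set Sl : ℝ → ℝ → Set ℝ := fun p R => {lam : ℝ | ∃ φ, AdmissibleOn R φ ∧
    ∀ x ∈ Set.Ioi R, lam * φ x ≤ Lop a (fun y => 2 * p * a y + q y)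
      (fun y => a y * p ^ 2 + q y * p + c y) φ x} with hSl
  set Tl : ℝ → ℝ → Set ℝ := fun p R => {lam : ℝ | ∃ φ, AdmissibleOn R φ ∧
    ∀ x ∈ Set.Ioi R, Lop a (fun y => 2 * p * a y + q y)
      (fun y => a y * p ^ 2 + q y * p + c y) φ x ≤ lam * φ x} with hTl
  -- bound for the first order coefficient
  have hqfb : ∀ (p : ℝ) (x : ℝ), |2 * p * a x + q x| ≤ 2 * |p| * CA + CQ := by
    intro p x
    have h1 : |2 * p * a x| = 2 * |p| * |a x| := by
      rw [abs_mul, abs_mul, abs_two]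
    have h2 : |a x| ≤ CA := by
      rw [abs_of_pos (lt_of_lt_of_le hal (haal x))]; exact haA x
    calc |2 * p * a x + q x| ≤ |2 * p * a x| + |q x| := abs_add_le _ _
      _ ≤ 2 * |p| * CA + CQ := by
          rw [h1]
          exact add_le_add (mul_le_mul_of_nonneg_left h2 (by positivity)) (hqb x)
  -- basic memberships
  have hTmem : ∀ (p R : ℝ), (CA * p ^ 2 + CQ * |p| + CC) ∈ Tl p R := by
    intro p R
    refine ⟨fun _ => 1, admissible_one, fun x hx => ?_⟩
    rw [lop_one, mul_one]
    exact (cf_bounds_pt hal (haal x) (haA x) (hqb x) (hcb x)).2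
  have hSmemNeg : ∀ (p R : ℝ), (-(CA * p ^ 2 + CQ * |p| + CC)) ∈ Sl p R := by
    intro p R
    refine ⟨fun _ => 1, admissible_one, fun x hx => ?_⟩
    rw [lop_one, mul_one]
    exact (cf_bounds_pt hal (haal x) (haA x) (hqb x) (hcb x)).1
  have hcomp : ∀ (p R : ℝ), ∀ lam ∈ Sl p R, ∀ mu ∈ Tl p R, lam ≤ mu := by
    intro p R lam hl mu hmu
    obtain ⟨φ, hφ, hφin⟩ := hl
    obtain ⟨ψ, hψ, hψin⟩ := hmu
    exact comparison_aux_s6 hal (fun x _ => ⟨haal x, haA x⟩) (fun x _ => hqfb p x)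
      hφ hψ hφin hψin
  have hSbdd : ∀ (p R : ℝ), BddAbove (Sl p R) :=
    fun p R => ⟨_, fun lam hl => hcomp p R lam hl _ (hTmem p R)⟩
  have hTbdd : ∀ (p R : ℝ), BddBelow (Tl p R) :=
    fun p R => ⟨_, fun mu hmu => hcomp p R _ (hSmemNeg p R) mu hmu⟩
  have hSne : ∀ (p R : ℝ), (Sl p R).Nonempty := fun p R => ⟨_, hSmemNeg p R⟩
  have hTne : ∀ (p R : ℝ), (Tl p R).Nonempty := fun p R => ⟨_, hTmem p R⟩
  have hSmemc0 : ∀ (p R : ℝ), R₁ ≤ R → (c0 * (1 + p ^ 2)) ∈ Sl p R := by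
    intro p R hR
    refine ⟨fun _ => 1, admissible_one, fun x hx => ?_⟩
    rw [lop_one, mul_one]
    have hx0 : 0 < x := lt_of_le_of_lt (le_trans (le_max_right R₀ 0) hR) hx
    have hxR0 : R₀ ≤ |x| := by
      rw [abs_of_pos hx0]
      exact le_trans (le_max_left R₀ 0) (le_trans hR (le_of_lt hx))
    exact quad_lower_pt hal (haal x) (haA x) (hqb x) hm (hR₀ x hxR0)
  have hc0p2 : ∀ p : ℝ, 0 ≤ c0 * (1 + p ^ 2) :=
    fun p => mul_nonneg hc0pos.le (by nlinarith [sq_nonneg p])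
  -- identification with lamLower / lamUpper
  have hLloweq : ∀ (p R : ℝ), lamLower a (fun x => 2 * p * a x + q x)
      (fun x => a x * p ^ 2 + q x * p + c x) R = sSup (Sl p R) := fun p R => rfl
  have hLupeq : ∀ (p R : ℝ), lamUpper a (fun x => 2 * p * a x + q x)
      (fun x => a x * p ^ 2 + q x * p + c x) R = sInf (Tl p R) := fun p R => rfl
  -- the three quantitative bounds
  have hHlow_ge : ∀ p : ℝ, c0 * (1 + p ^ 2) ≤ Hlow p := by
    intro p
    refine ge_of_tendsto (hHlow p) ?_
    filter_upwards [Filter.eventually_ge_atTop R₁] with R hR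
    exact le_csSup (hSbdd p R) (hSmemc0 p R hR)
  have hHlowup : ∀ p : ℝ, Hlow p ≤ Hup p := by
    intro p
    refine le_of_tendsto_of_tendsto' (hHlow p) (hHup p) (fun R => ?_)
    exact csSup_le (hSne p R)
      (fun lam hl => le_csInf (hTne p R) (fun mu hmu => hcomp p R lam hl mu hmu))
  have hHup_le : ∀ p : ℝ, Hup p ≤ CA * p ^ 2 + CQ * |p| + CC := by
    intro p
    refine le_of_tendsto (hHup p) (Filter.Eventually.of_forall (fun R => ?_))
    exact csInf_le (hTbdd p R) (hTmem p R)
  -- one-sided local Lipschitz estimates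
  have honeside_low : ∀ r : ℝ, 1 ≤ r → ∀ p p' : ℝ, |p| ≤ r → |p'| ≤ r →
      0 < |p' - p| → |p' - p| ≤ 1/2 →
      Hlow p ≤ Hlow p' + |p' - p| * (2 * CA * (1 + r) ^ 2 + CQ * (1 + r) + CC) := by
    intro r hr p p' hp hp' hd hsm
    have hK0 : 0 ≤ 2 * CA * (1 + r) ^ 2 + CQ * (1 + r) + CC := by
      have h1 : (0:ℝ) ≤ 2 * CA * (1 + r) ^ 2 :=
        mul_nonneg (by linarith) (sq_nonneg _)
      have h2 : (0:ℝ) ≤ CQ * (1 + r) := mul_nonneg hCQ0 (by linarith)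
      linarith
    have hstep : ∀ R : ℝ, R₁ ≤ R → sSup (Sl p R) ≤ sSup (Sl p' R)
        + |p' - p| * (2 * CA * (1 + r) ^ 2 + CQ * (1 + r) + CC) := by
      intro R hR
      apply csSup_le (hSne p R)
      intro lam hlam
      rcases le_or_gt lam 0 with hneg | hpos
      · have h1 : 0 ≤ sSup (Sl p' R) :=
          le_trans (hc0p2 p') (le_csSup (hSbdd p' R) (hSmemc0 p' R hR))
        nlinarith [mul_nonneg (abs_nonneg (p' - p)) hK0]
      · obtain ⟨φ, hφ, hineq⟩ := hlam
        obtain ⟨ψ, hψ, hineq'⟩ := shift_mem_lower hal haal haA hqb hcb hd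
          (le_trans hsm (by norm_num)) hp le_rfl hpos.le hφ hineq
        have hmem : lam - |p' - p| * (2 * CA * (1 + r) ^ 2 + CQ * (1 + r) + CC)
            ∈ Sl p' R := ⟨ψ, hψ, hineq'⟩
        have := le_csSup (hSbdd p' R) hmem
        linarith
    refine le_of_tendsto_of_tendsto (hHlow p)
      ((hHlow p').add_const (|p' - p| * (2 * CA * (1 + r) ^ 2 + CQ * (1 + r) + CC))) ?_
    exact Filter.eventually_atTop.2 ⟨R₁, fun R hR => hstep R hR⟩
  have honeside_up : ∀ r : ℝ, 1 ≤ r → ∀ p p' : ℝ, |p| ≤ r → |p'| ≤ r →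
      0 < |p' - p| → |p' - p| ≤ 1/2 →
      Hup p ≤ Hup p' + |p' - p| * (2 * CA * (1 + r) ^ 2 + CQ * (1 + r) + CC) := by
    intro r hr p p' hp hp' hd hsm
    have hstep : ∀ R : ℝ, R₁ ≤ R → sInf (Tl p R) ≤ sInf (Tl p' R)
        + |p' - p| * (2 * CA * (1 + r) ^ 2 + CQ * (1 + r) + CC) := by
      intro R hR
      rw [← sub_le_iff_le_add]
      apply le_csInf (hTne p' R)
      intro mu hmu
      have hmu0 : 0 ≤ mu :=
        le_trans (hc0p2 p') (hcomp p' R _ (hSmemc0 p' R hR) mu hmu)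
      obtain ⟨φ, hφ, hineq⟩ := hmu
      have hd2 : 0 < |p - p'| := by rw [abs_sub_comm]; exact hd
      have hpp2 : |p - p'| ≤ |p' - p| := by rw [abs_sub_comm]
      obtain ⟨ψ, hψ, hineq'⟩ := shift_mem_upper hal haal haA hqb hcb hd hsm
        hp' hpp2 hmu0 hφ hineq
      have hmem : mu + |p' - p| * (2 * CA * (1 + r) ^ 2 + CQ * (1 + r) + CC)
          ∈ Tl p R := ⟨ψ, hψ, hineq'⟩
      have := csInf_le (hTbdd p R) hmem
      linarith
    refine le_of_tendsto_of_tendsto (hHup p)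
      ((hHup p').add_const (|p' - p| * (2 * CA * (1 + r) ^ 2 + CQ * (1 + r) + CC))) ?_
    exact Filter.eventually_atTop.2 ⟨R₁, fun R hR => hstep R hR⟩
  refine ⟨locallyLipschitz_of_onesided hCApos.le hCQ0 hCC0 honeside_low,
    locallyLipschitz_of_onesided hCApos.le hCQ0 hCC0 honeside_up,
    CA + CQ + CC + c0, c0, hc0pos, by linarith [hCApos.le, hCQ0, hCC0], ?_⟩
  intro p
  refine ⟨?_, hHlowup p, ?_⟩
  · rw [sq_abs]; exact hHlow_ge p
  · have habs : |p| ≤ 1 + p ^ 2 := by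
      nlinarith [sq_nonneg (|p| - 1), sq_abs p, abs_nonneg p]
    have h1 : CA * p ^ 2 ≤ CA * (1 + p ^ 2) := by nlinarith [hCApos.le]
    have h2 : CQ * |p| ≤ CQ * (1 + p ^ 2) := mul_le_mul_of_nonneg_left habs hCQ0
    have h3 : 0 ≤ c0 * (1 + p ^ 2) := hc0p2 p
    have h4 : 0 ≤ CC * p ^ 2 := mul_nonneg hCC0 (sq_nonneg p)
    have h5 := hHup_le p
    rw [sq_abs]
    nlinarith [h1, h2, h3, h4, h5]
end

section
/- Assume the standing hypotheses on a, q, f. Let u₀ : ℝ → ℝ be measurable and compactly supported with 0 ≤ u₀ ≤ 1 and u₀ ≢ 0, and let u be a classical solution of the Cauchy problem ∂_t u = a(x)∂_xx u + q(x)∂_x u + f(x,u) on (0,∞)×ℝ with u(0,·) = u₀ and 0 ≤ u ≤ 1. Then for every w > w̄, lim_{t→+∞} sup_{x ≥ wt} |u(t,x)| = 0. -/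
set_option maxHeartbeats 1000000


open Real Filter Set

/-- Standing hypotheses on the coefficients `a`, `q` and the nonlinearity `f`
(`fs x s` denotes the partial derivative `f_s'(x,s)`). -/
def StandingHyp (a q : ℝ → ℝ) (f fs : ℝ → ℝ → ℝ) (γ : ℝ) : Prop :=
  (0 < γ ∧ γ < 1) ∧
  (UniformContinuous a ∧ ∃ M, ∀ x, |a x| ≤ M) ∧
  (UniformContinuous q ∧ ∃ M, ∀ x, |q x| ≤ M) ∧
  (∃ m > 0, ∀ x, m ≤ a x) ∧
  (∀ ε > 0, ∃ δ > 0, ∀ x y : ℝ, |x - y| < δ → ∀ s ∈ Set.Icc (0:ℝ) 1, |f x s - f y s| < ε) ∧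
  (∃ M, ∀ x : ℝ, ∀ s ∈ Set.Icc (0:ℝ) 1, |f x s| ≤ M) ∧
  (∀ x : ℝ, ∀ s ∈ Set.Icc (0:ℝ) 1, HasDerivAt (f x) (fs x s) s) ∧
  (∃ C, ∀ x : ℝ, ∀ s ∈ Set.Icc (0:ℝ) 1, ∀ t ∈ Set.Icc (0:ℝ) 1,
      |fs x s - fs x t| ≤ C * |s - t| ^ γ) ∧
  (∀ x : ℝ, f x 0 = 0 ∧ f x 1 = 0) ∧
  (∀ s ∈ Set.Ioo (0:ℝ) 1, ∃ m > 0, ∀ x : ℝ, m ≤ f x s) ∧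
  (∀ x : ℝ, ∀ s ∈ Set.Icc (0:ℝ) 1, f x s ≤ fs x 0 * s) ∧
  (∃ m > 0, ∃ R : ℝ, ∀ x : ℝ, R ≤ |x| → m ≤ 4 * fs x 0 * a x - q x ^ 2)

/-- A classical solution of `∂_t u = a ∂_xx u + q ∂_x u + f(x,u)` on `(0,∞) × ℝ`,
continuous on `[0,∞) × ℝ`, `C¹` in `t` and `C²` in `x` on `(0,∞) × ℝ`. -/
def ClassicalSolution (a q : ℝ → ℝ) (f : ℝ → ℝ → ℝ) (u ut ux uxx : ℝ → ℝ → ℝ) : Prop :=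
  ContinuousOn (fun pr : ℝ × ℝ => u pr.1 pr.2) (Set.Ici 0 ×ˢ Set.univ) ∧
  (∀ t > (0:ℝ), ∀ x : ℝ,
    HasDerivAt (fun τ => u τ x) (ut t x) t ∧
    HasDerivAt (fun y => u t y) (ux t x) x ∧
    HasDerivAt (fun y => ux t y) (uxx t x) x ∧
    ut t x = a x * uxx t x + q x * ux t x + f x (u t x)) ∧
  ContinuousOn (fun pr : ℝ × ℝ => ut pr.1 pr.2) (Set.Ioi 0 ×ˢ Set.univ) ∧
  ContinuousOn (fun pr : ℝ × ℝ => ux pr.1 pr.2) (Set.Ioi 0 ×ˢ Set.univ) ∧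
  ContinuousOn (fun pr : ℝ × ℝ => uxx pr.1 pr.2) (Set.Ioi 0 ×ˢ Set.univ)

private lemma aux_deriv_nonpos {f : ℝ → ℝ} {d t₀ : ℝ} (ht : 0 < t₀)
    (hd : HasDerivAt f d t₀) (hmin : ∀ t ∈ Set.Icc 0 t₀, f t₀ ≤ f t) : d ≤ 0 := by
  have h2 : Tendsto (slope f t₀) (nhdsWithin t₀ (Iio t₀)) (nhds d) :=
    (hasDerivAt_iff_tendsto_slope.mp hd).mono_left
      (nhdsWithin_mono _ (fun x hx => ne_of_lt hx))
  refine le_of_tendsto h2 ?_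
  filter_upwards [Ioo_mem_nhdsLT_of_mem (show t₀ ∈ Set.Ioc 0 t₀ from ⟨ht, le_refl _⟩)] with t htm
  have h3 : f t₀ ≤ f t := hmin t ⟨htm.1.le, htm.2.le⟩
  have h4 : t - t₀ < 0 := by linarith [htm.2]
  rw [slope_def_field]
  exact div_nonpos_of_nonneg_of_nonpos (by linarith) h4.le

private lemma aux_second_deriv_nonneg {g g' : ℝ → ℝ} {d x₀ δ : ℝ} (hδ : 0 < δ)
    (hg : ∀ x ∈ Set.Ioo (x₀ - δ) (x₀ + δ), HasDerivAt g (g' x) x)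
    (hg' : HasDerivAt g' d x₀) (h0 : g' x₀ = 0)
    (hmin : ∀ x ∈ Set.Ioo (x₀ - δ) (x₀ + δ), g x₀ ≤ g x) : 0 ≤ d := by
  by_contra hd
  push_neg at hd
  have h2 : Tendsto (slope g' x₀) (nhdsWithin x₀ (Ioi x₀)) (nhds d) :=
    (hasDerivAt_iff_tendsto_slope.mp hg').mono_left
      (nhdsWithin_mono _ (fun x hx => ne_of_gt hx))
  have hev : ∀ᶠ x in nhdsWithin x₀ (Ioi x₀), slope g' x₀ x < d / 2 :=
    h2.eventually_lt_const (by linarith)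
  obtain ⟨v, hv, hsub⟩ := mem_nhdsGT_iff_exists_Ioo_subset.mp hev
  have hvx : x₀ < v := hv
  set x₁ := (x₀ + min v (x₀ + δ)) / 2 with hx₁def
  have hmin2 : x₀ < min v (x₀ + δ) := lt_min hvx (by linarith)
  have hx₁1 : x₀ < x₁ := by rw [hx₁def]; linarith
  have hx₁2 : x₁ < v := by
    have := min_le_left v (x₀ + δ); rw [hx₁def]; linarith
  have hx₁3 : x₁ < x₀ + δ := by
    have := min_le_right v (x₀ + δ); rw [hx₁def]; linarith
  have hgneg : ∀ x, x₀ < x → x ≤ x₁ → g' x < 0 := by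
    intro x h1 h2'
    have hx : x ∈ Set.Ioo x₀ v := ⟨h1, lt_of_le_of_lt h2' hx₁2⟩
    have hslope : slope g' x₀ x < d / 2 := hsub hx
    rw [slope_def_field, h0, sub_zero] at hslope
    have hxp : 0 < x - x₀ := by linarith
    have : g' x < d / 2 * (x - x₀) := by
      rw [div_lt_iff₀ hxp] at hslope; linarith
    nlinarith
  have hsubIcc : Set.Icc x₀ x₁ ⊆ Set.Ioo (x₀ - δ) (x₀ + δ) := by
    intro y hy; exact ⟨by linarith [hy.1], by linarith [hy.2]⟩
  have hcont : ContinuousOn g (Set.Icc x₀ x₁) := fun y hy =>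
    ((hg y (hsubIcc hy)).continuousAt).continuousWithinAt
  obtain ⟨ξ, hξ, hξeq⟩ := exists_hasDerivAt_eq_slope g g' hx₁1 hcont
    (fun y hy => hg y (hsubIcc ⟨hy.1.le, hy.2.le⟩))
  have hgξ : g' ξ < 0 := hgneg ξ hξ.1 hξ.2.le
  rw [hξeq] at hgξ
  have hnum : g x₁ - g x₀ < 0 := by
    have hden : 0 < x₁ - x₀ := by linarith
    rcases div_neg_iff.mp hgξ with ⟨h1, h2'⟩ | ⟨h1, h2'⟩
    · linarith
    · linarith
  have := hmin x₁ ⟨by linarith, hx₁3⟩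
  linarith

private lemma aux_c2_derivs {φ : ℝ → ℝ} {R : ℝ} (h : ContDiffOn ℝ 2 φ (Set.Ioi R)) :
    ∀ x ∈ Set.Ioi R, HasDerivAt φ (deriv φ x) x ∧ HasDerivAt (deriv φ) (deriv (deriv φ) x) x := by
  have hopen : IsOpen (Set.Ioi R) := isOpen_Ioi
  have h1 : ContDiffOn ℝ 1 (deriv φ) (Set.Ioi R) :=
    h.deriv_of_isOpen hopen (by norm_num)
  intro x hx
  constructor
  · exact ((h.differentiableOn (by norm_num)).differentiableAt (hopen.mem_nhds hx)).hasDerivAt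
  · exact ((h1.differentiableOn (by norm_num)).differentiableAt (hopen.mem_nhds hx)).hasDerivAt

private lemma aux_comparison (aa qq cc : ℝ → ℝ) (Ma Mq Mc R : ℝ)
    (hapos : ∀ x, 0 < aa x) (haM : ∀ x, aa x ≤ Ma) (hqM : ∀ x, |qq x| ≤ Mq)
    (hcM : ∀ x, |cc x| ≤ Mc)
    (z zt zx zxx : ℝ → ℝ → ℝ)
    (hzcont : ContinuousOn (fun pr : ℝ × ℝ => z pr.1 pr.2) (Set.Ici 0 ×ˢ Set.Ici R))
    (hz : ∀ t, 0 < t → ∀ x, R < x →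
      HasDerivAt (fun τ => z τ x) (zt t x) t ∧ HasDerivAt (fun y => z t y) (zx t x) x ∧
      HasDerivAt (fun y => zx t y) (zxx t x) x ∧
      aa x * zxx t x + qq x * zx t x + cc x * z t x ≤ zt t x)
    (hbdd : ∀ t, 0 ≤ t → ∀ x, R ≤ x → -1 ≤ z t x)
    (h0 : ∀ x, R ≤ x → 0 ≤ z 0 x) (hRb : ∀ t, 0 ≤ t → 0 ≤ z t R) :
    ∀ t, 0 ≤ t → ∀ x, R ≤ x → 0 ≤ z t x := by
  intro T hT xs hxs
  rcases eq_or_lt_of_le hT with hT0 | hT0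
  · exact hT0 ▸ h0 xs hxs
  have hMa0 : 0 < Ma := lt_of_lt_of_le (hapos 0) (haM 0)
  have hMq0 : 0 ≤ Mq := le_trans (abs_nonneg _) (hqM 0)
  have hMc0 : 0 ≤ Mc := le_trans (abs_nonneg _) (hcM 0)
  have hK0 : 0 < Mc + 1 := by linarith
  have hμ0 : 0 ≤ Ma + Mq := by linarith
  have main : ∀ η, 0 < η →
      0 ≤ Real.exp (-(Mc+1) * T) * z T xs + η * Real.exp ((Ma+Mq) * T) * Real.cosh (xs - R) := by
    intro η hη
    set X : ℝ := max (xs + 1) (R + max 1 (2 / η)) with hXdef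
    have hXxs : xs ≤ X := le_trans (by linarith) (le_max_left _ _)
    have hXR1 : R + 1 ≤ X := le_trans (by simp [le_max_left]) (le_max_right _ _)
    have hXR2 : 2 / η ≤ X - R := by
      have h1 := le_max_right (xs + 1) (R + max 1 (2 / η))
      have h2 := le_max_right (1:ℝ) (2 / η)
      rw [hXdef]; linarith
    have hcoshX : 1 / η ≤ Real.cosh (X - R) := by
      have h2 : (X - R) + 1 ≤ Real.exp (X - R) := Real.add_one_le_exp _
      have h4 : 0 < Real.exp (-(X - R)) := Real.exp_pos _
      rw [Real.cosh_eq]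
      have h5 : 2 / η = 2 * (1/η) := by ring
      rw [h5] at hXR2
      linarith
    have hDcompact : IsCompact (Set.Icc (0:ℝ) T ×ˢ Set.Icc R X) := (isCompact_Icc).prod isCompact_Icc
    have hDne : (Set.Icc (0:ℝ) T ×ˢ Set.Icc R X).Nonempty := ⟨(T, xs), ⟨⟨hT, le_refl T⟩, ⟨hxs, hXxs⟩⟩⟩
    have hWcont : ContinuousOn
        (fun pr : ℝ × ℝ => Real.exp (-(Mc+1) * pr.1) * z pr.1 pr.2
          + η * Real.exp ((Ma+Mq) * pr.1) * Real.cosh (pr.2 - R)) (Set.Icc (0:ℝ) T ×ˢ Set.Icc R X) := by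
      apply ContinuousOn.add
      · exact (Continuous.continuousOn (by fun_prop)).mul
          (hzcont.mono (fun pr hpr => ⟨hpr.1.1, hpr.2.1⟩))
      · exact Continuous.continuousOn (by fun_prop)
    obtain ⟨⟨t₀, x₀⟩, hmemD, hminD⟩ := hDcompact.exists_isMinOn hDne hWcont
    have hmin' : ∀ t ∈ Set.Icc (0:ℝ) T, ∀ x ∈ Set.Icc R X,
        Real.exp (-(Mc+1) * t₀) * z t₀ x₀ + η * Real.exp ((Ma+Mq) * t₀) * Real.cosh (x₀ - R)
        ≤ Real.exp (-(Mc+1) * t) * z t x + η * Real.exp ((Ma+Mq) * t) * Real.cosh (x - R) := by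
      intro t htI x hxI
      exact isMinOn_iff.mp hminD (t, x) (Set.mk_mem_prod htI hxI)
    have ht₀mem : t₀ ∈ Set.Icc (0:ℝ) T := hmemD.1
    have hx₀mem : x₀ ∈ Set.Icc R X := hmemD.2
    have hstep : 0 ≤ Real.exp (-(Mc+1) * t₀) * z t₀ x₀ + η * Real.exp ((Ma+Mq) * t₀) * Real.cosh (x₀ - R) := by
      by_contra hneg
      push_neg at hneg
      have hch1 : 1 ≤ Real.cosh (x₀ - R) := Real.one_le_cosh _
      have hchpos : 0 < Real.cosh (x₀ - R) := by linarith
      have hexpμt : 1 ≤ Real.exp ((Ma+Mq) * t₀) := Real.one_le_exp (mul_nonneg hμ0 ht₀mem.1)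
      have hexpKt : Real.exp (-(Mc+1) * t₀) ≤ 1 := by
        rw [Real.exp_le_one_iff]
        nlinarith [ht₀mem.1]
      have hexpKtpos : 0 < Real.exp (-(Mc+1) * t₀) := Real.exp_pos _
      have hFpos : 0 < η * Real.exp ((Ma+Mq) * t₀) * Real.cosh (x₀ - R) :=
        mul_pos (mul_pos hη (Real.exp_pos _)) hchpos
      have ht₀pos : 0 < t₀ := by
        rcases eq_or_lt_of_le ht₀mem.1 with h | h
        · exfalso
          have hz0 : 0 ≤ z t₀ x₀ := by rw [← h]; exact h0 x₀ hx₀mem.1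
          nlinarith [mul_nonneg hexpKtpos.le hz0]
        · exact h
      have hx₀R : R < x₀ := by
        rcases eq_or_lt_of_le hx₀mem.1 with h | h
        · exfalso
          have hz0 : 0 ≤ z t₀ x₀ := by rw [← h]; exact hRb t₀ ht₀mem.1
          nlinarith [mul_nonneg hexpKtpos.le hz0]
        · exact h
      have hx₀X : x₀ < X := by
        rcases eq_or_lt_of_le hx₀mem.2 with h | h
        · exfalso
          have hzb : -1 ≤ z t₀ x₀ := hbdd t₀ ht₀mem.1 x₀ hx₀mem.1
          have h1 : -1 ≤ Real.exp (-(Mc+1) * t₀) * z t₀ x₀ := by nlinarith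
          have h7 : 1 ≤ η * Real.cosh (X - R) := by
            have h8 : η * (1/η) ≤ η * Real.cosh (X - R) := mul_le_mul_of_nonneg_left hcoshX hη.le
            have h9 : η * (1/η) = 1 := by field_simp
            linarith
          have h10 : η * Real.cosh (X - R) * 1 ≤ η * Real.cosh (X - R) * Real.exp ((Ma+Mq) * t₀) :=
            mul_le_mul_of_nonneg_left hexpμt (by nlinarith [Real.one_le_cosh (X - R)])
          have h11 : η * Real.exp ((Ma+Mq) * t₀) * Real.cosh (x₀ - R) ≥ 1 := by
            rw [h]; nlinarith
          linarith
        · exact h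
      obtain ⟨hzt, hzx, hzxx, hpde⟩ := hz t₀ ht₀pos x₀ hx₀R
      have hWt : HasDerivAt (fun τ => Real.exp (-(Mc+1) * τ) * z τ x₀ + η * Real.exp ((Ma+Mq) * τ) * Real.cosh (x₀ - R))
          (-(Mc+1) * Real.exp (-(Mc+1) * t₀) * z t₀ x₀ + Real.exp (-(Mc+1) * t₀) * zt t₀ x₀
            + η * Real.exp ((Ma+Mq) * t₀) * (Ma+Mq) * Real.cosh (x₀ - R)) t₀ := by
        have h1 : HasDerivAt (fun τ : ℝ => Real.exp (-(Mc+1) * τ)) (Real.exp (-(Mc+1) * t₀) * (-(Mc+1) * 1)) t₀ :=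
          ((hasDerivAt_id t₀).const_mul (-(Mc+1))).exp
        have h2 : HasDerivAt (fun τ : ℝ => Real.exp ((Ma+Mq) * τ)) (Real.exp ((Ma+Mq) * t₀) * ((Ma+Mq) * 1)) t₀ :=
          ((hasDerivAt_id t₀).const_mul (Ma+Mq)).exp
        have h3 := (h1.mul hzt).add ((h2.const_mul η).mul_const (Real.cosh (x₀ - R)))
        refine h3.congr_deriv ?_
        ring
      have hWtle : -(Mc+1) * Real.exp (-(Mc+1) * t₀) * z t₀ x₀ + Real.exp (-(Mc+1) * t₀) * zt t₀ x₀
          + η * Real.exp ((Ma+Mq) * t₀) * (Ma+Mq) * Real.cosh (x₀ - R) ≤ 0 := by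
        apply aux_deriv_nonpos ht₀pos hWt
        intro t htI
        exact hmin' t ⟨htI.1, le_trans htI.2 ht₀mem.2⟩ x₀ hx₀mem
      have hWx : ∀ y, R < y → HasDerivAt
          (fun y' => Real.exp (-(Mc+1) * t₀) * z t₀ y' + η * Real.exp ((Ma+Mq) * t₀) * Real.cosh (y' - R))
          (Real.exp (-(Mc+1) * t₀) * zx t₀ y + η * Real.exp ((Ma+Mq) * t₀) * Real.sinh (y - R)) y := by
        intro y hy
        have h1 := ((hz t₀ ht₀pos y hy).2.1).const_mul (Real.exp (-(Mc+1) * t₀))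
        have h2 := (((hasDerivAt_id y).sub_const R).cosh).const_mul (η * Real.exp ((Ma+Mq) * t₀))
        have h3 := h1.add h2
        simp only [id_eq, mul_one] at h3
        exact h3
      have hWxx : HasDerivAt
          (fun y => Real.exp (-(Mc+1) * t₀) * zx t₀ y + η * Real.exp ((Ma+Mq) * t₀) * Real.sinh (y - R))
          (Real.exp (-(Mc+1) * t₀) * zxx t₀ x₀ + η * Real.exp ((Ma+Mq) * t₀) * Real.cosh (x₀ - R)) x₀ := by
        have h1 := hzxx.const_mul (Real.exp (-(Mc+1) * t₀))
        have h2 := (((hasDerivAt_id x₀).sub_const R).sinh).const_mul (η * Real.exp ((Ma+Mq) * t₀))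
        have h3 := h1.add h2
        simp only [id_eq, mul_one] at h3
        exact h3
      have hlocmin : IsLocalMin
          (fun y => Real.exp (-(Mc+1) * t₀) * z t₀ y + η * Real.exp ((Ma+Mq) * t₀) * Real.cosh (y - R)) x₀ := by
        have hIccnb : Set.Icc R X ∈ nhds x₀ := Icc_mem_nhds hx₀R hx₀X
        exact Filter.eventually_of_mem hIccnb (fun y hy => hmin' t₀ ht₀mem y hy)
      have hWxzero : Real.exp (-(Mc+1) * t₀) * zx t₀ x₀ + η * Real.exp ((Ma+Mq) * t₀) * Real.sinh (x₀ - R) = 0 :=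
        hlocmin.hasDerivAt_eq_zero (hWx x₀ hx₀R)
      have hδpos : 0 < min (x₀ - R) (X - x₀) := lt_min (by linarith) (by linarith)
      have hWxxnn : 0 ≤ Real.exp (-(Mc+1) * t₀) * zxx t₀ x₀ + η * Real.exp ((Ma+Mq) * t₀) * Real.cosh (x₀ - R) := by
        apply aux_second_deriv_nonneg
          (g := fun y => Real.exp (-(Mc+1) * t₀) * z t₀ y + η * Real.exp ((Ma+Mq) * t₀) * Real.cosh (y - R))
          (g' := fun y => Real.exp (-(Mc+1) * t₀) * zx t₀ y + η * Real.exp ((Ma+Mq) * t₀) * Real.sinh (y - R))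
          hδpos ?_ hWxx hWxzero ?_
        · intro y hy
          have hy1 : R < y := by
            have := min_le_left (x₀ - R) (X - x₀); linarith [hy.1]
          exact hWx y hy1
        · intro y hy
          have hy1 : R ≤ y := by
            have := min_le_left (x₀ - R) (X - x₀); linarith [hy.1]
          have hy2 : y ≤ X := by
            have := min_le_right (x₀ - R) (X - x₀); linarith [hy.2]
          exact hmin' t₀ ht₀mem y ⟨hy1, hy2⟩
      -- final contradiction
      have hchsq : Real.cosh (x₀ - R) ^ 2 - Real.sinh (x₀ - R) ^ 2 = 1 :=
        Real.cosh_sq_sub_sinh_sq (x₀ - R)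
      have hsh1 : Real.sinh (x₀ - R) ≤ Real.cosh (x₀ - R) := by nlinarith
      have hsh2 : -Real.cosh (x₀ - R) ≤ Real.sinh (x₀ - R) := by nlinarith
      have hQ := abs_le.mp (hqM x₀)
      have hCc := abs_le.mp (hcM x₀)
      have hA := hapos x₀
      have hAM := haM x₀
      have g1 : Real.exp (-(Mc+1) * t₀) * zt t₀ x₀ ≤ (Mc+1) * (Real.exp (-(Mc+1) * t₀) * z t₀ x₀)
          - η * Real.exp ((Ma+Mq) * t₀) * (Ma+Mq) * Real.cosh (x₀ - R) := by linarith [hWtle]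
      have g2 : Real.exp (-(Mc+1) * t₀) * zx t₀ x₀ = -(η * Real.exp ((Ma+Mq) * t₀) * Real.sinh (x₀ - R)) := by
        linarith [hWxzero]
      have g3 : -(η * Real.exp ((Ma+Mq) * t₀) * Real.cosh (x₀ - R)) ≤ Real.exp (-(Mc+1) * t₀) * zxx t₀ x₀ := by
        linarith [hWxxnn]
      have g4 := mul_le_mul_of_nonneg_left hpde hexpKtpos.le
      have g5 : -(Ma * (η * Real.exp ((Ma+Mq) * t₀) * Real.cosh (x₀ - R)))
          ≤ aa x₀ * (Real.exp (-(Mc+1) * t₀) * zxx t₀ x₀) := by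
        have h1 : aa x₀ * (-(η * Real.exp ((Ma+Mq) * t₀) * Real.cosh (x₀ - R)))
            ≤ aa x₀ * (Real.exp (-(Mc+1) * t₀) * zxx t₀ x₀) := mul_le_mul_of_nonneg_left g3 hA.le
        have h2 : Ma * (-(η * Real.exp ((Ma+Mq) * t₀) * Real.cosh (x₀ - R)))
            ≤ aa x₀ * (-(η * Real.exp ((Ma+Mq) * t₀) * Real.cosh (x₀ - R))) :=
          mul_le_mul_of_nonpos_right hAM (by linarith)
        linarith
      have g6 : -(Mq * (η * Real.exp ((Ma+Mq) * t₀) * Real.cosh (x₀ - R)))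
          ≤ qq x₀ * (Real.exp (-(Mc+1) * t₀) * zx t₀ x₀) := by
        rw [g2]
        have h1 : qq x₀ * Real.sinh (x₀ - R) ≤ Mq * Real.cosh (x₀ - R) := by
          nlinarith [mul_nonneg (by linarith : (0:ℝ) ≤ Mq - qq x₀) (by linarith : (0:ℝ) ≤ Real.cosh (x₀ - R) + Real.sinh (x₀ - R)),
            mul_nonneg (by linarith : (0:ℝ) ≤ Mq + qq x₀) (by linarith : (0:ℝ) ≤ Real.cosh (x₀ - R) - Real.sinh (x₀ - R))]
        nlinarith [mul_le_mul_of_nonneg_left h1 (mul_pos hη (Real.exp_pos ((Ma+Mq) * t₀))).le]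
      have g7 : cc x₀ * (Real.exp (-(Mc+1) * t₀) * z t₀ x₀) ≤ (Mc+1) * (Real.exp (-(Mc+1) * t₀) * z t₀ x₀) := by
        nlinarith [g4, g1, g5, g6]
      have g8 : Real.exp (-(Mc+1) * t₀) * z t₀ x₀ < -(η * Real.exp ((Ma+Mq) * t₀) * Real.cosh (x₀ - R)) := by
        linarith [hneg]
      have g9 : (1:ℝ) ≤ (Mc+1) - cc x₀ := by linarith [hCc.2]
      have g10 : ((Mc+1) - cc x₀) * (Real.exp (-(Mc+1) * t₀) * z t₀ x₀)
          ≤ ((Mc+1) - cc x₀) * (-(η * Real.exp ((Ma+Mq) * t₀) * Real.cosh (x₀ - R))) :=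
        mul_le_mul_of_nonneg_left g8.le (by linarith)
      have g11 : ((Mc+1) - cc x₀) * (-(η * Real.exp ((Ma+Mq) * t₀) * Real.cosh (x₀ - R)))
          ≤ 1 * (-(η * Real.exp ((Ma+Mq) * t₀) * Real.cosh (x₀ - R))) :=
        mul_le_mul_of_nonpos_right g9 (by linarith)
      nlinarith [g7, g10, g11, hFpos]
    calc (0:ℝ) ≤ _ := hstep
      _ ≤ _ := hmin' T ⟨hT, le_refl T⟩ xs ⟨hxs, hXxs⟩
  by_contra hzneg
  push_neg at hzneg
  have hA0 : Real.exp (-(Mc+1) * T) * z T xs < 0 := mul_neg_of_pos_of_neg (Real.exp_pos _) hzneg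
  have hB0 : 0 < Real.exp ((Ma+Mq) * T) * Real.cosh (xs - R) := by positivity
  have hη : 0 < -(Real.exp (-(Mc+1) * T) * z T xs) / (2 * (Real.exp ((Ma+Mq) * T) * Real.cosh (xs - R))) :=
    div_pos (by linarith) (by linarith)
  have hmm := main _ hη
  have heq : -(Real.exp (-(Mc+1) * T) * z T xs) / (2 * (Real.exp ((Ma+Mq) * T) * Real.cosh (xs - R)))
      * Real.exp ((Ma+Mq) * T) * Real.cosh (xs - R) = -(Real.exp (-(Mc+1) * T) * z T xs) / 2 := by
    field_simp
  rw [heq] at hmm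
  linarith

private lemma aux_lam_pos (aa bb cc : ℝ → ℝ) (Ma m₁ R lam : ℝ) (hMa0 : 0 < Ma)
    (hapos : ∀ x, 0 < aa x) (haM : ∀ x, aa x ≤ Ma) (hm₁ : 0 < m₁)
    (hdisc : ∀ x ∈ Set.Ioi R, m₁ ≤ 4 * aa x * cc x - bb x ^ 2)
    (φ : ℝ → ℝ) (hadm : AdmissibleOn R φ)
    (hineq : ∀ x ∈ Set.Ioi R, Lop aa bb cc φ x ≤ lam * φ x) :
    0 < lam := by
  by_contra hlam
  push_neg at hlam
  obtain ⟨hC1, hC2, hpos, ⟨M, hM⟩, hlog⟩ := hadm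
  have hder := aux_c2_derivs hC2
  have hδ : 0 < m₁ / (4 * Ma ^ 2) := by positivity
  have hM0 : 0 ≤ M :=
    le_trans (abs_nonneg _) (hM (R + 1) (Set.mem_Ioi.mpr (by linarith)))
  have hrd : ∀ x ∈ Set.Ioi R, HasDerivAt (fun y => deriv φ y / φ y)
      ((deriv (deriv φ) x * φ x - deriv φ x * deriv φ x) / φ x ^ 2) x := by
    intro x hx
    exact ((hder x hx).2).div ((hder x hx).1) (ne_of_gt (hpos x (Set.mem_Ici.mpr (le_of_lt hx))))
  have hdle : ∀ x ∈ Set.Ioi R,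
      (deriv (deriv φ) x * φ x - deriv φ x * deriv φ x) / φ x ^ 2 ≤ -(m₁ / (4 * Ma ^ 2)) := by
    intro x hx
    have hP : 0 < φ x := hpos x (Set.mem_Ici.mpr (le_of_lt hx))
    have h1 : aa x * deriv (deriv φ) x + bb x * deriv φ x + cc x * φ x ≤ lam * φ x := hineq x hx
    have h1' : aa x * deriv (deriv φ) x + bb x * deriv φ x + cc x * φ x ≤ 0 :=
      le_trans h1 (mul_nonpos_of_nonpos_of_nonneg hlam hP.le)
    have h2 := hdisc x hx
    have ha := hapos x
    have haM' := haM x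
    have key : 4 * aa x ^ 2 * (deriv (deriv φ) x * φ x - deriv φ x * deriv φ x)
        ≤ -(m₁ * φ x ^ 2) := by
      nlinarith [sq_nonneg (2 * aa x * deriv φ x + bb x * φ x),
        mul_le_mul_of_nonneg_left h1' (by positivity : (0:ℝ) ≤ 4 * aa x * φ x),
        mul_le_mul_of_nonneg_right h2 (sq_nonneg (φ x))]
    have h4 : (deriv (deriv φ) x * φ x - deriv φ x * deriv φ x) / φ x ^ 2
        ≤ -(m₁ / (4 * aa x ^ 2)) := by
      rw [div_le_iff₀ (by positivity : (0:ℝ) < φ x ^ 2),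
        show -(m₁ / (4 * aa x ^ 2)) * φ x ^ 2 = -(m₁ * φ x ^ 2) / (4 * aa x ^ 2) by ring,
        le_div_iff₀ (by positivity : (0:ℝ) < 4 * aa x ^ 2)]
      linarith [key]
    have h5 : m₁ / (4 * Ma ^ 2) ≤ m₁ / (4 * aa x ^ 2) := by
      apply div_le_div_of_nonneg_left hm₁.le (by positivity : (0:ℝ) < 4 * aa x ^ 2)
      nlinarith
    linarith
  set XX := R + 1 + (2 * M + 1) / (m₁ / (4 * Ma ^ 2)) with hXXdef
  have hlt : R + 1 < XX := by
    have : 0 < (2 * M + 1) / (m₁ / (4 * Ma ^ 2)) := by positivity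
    rw [hXXdef]; linarith
  have hcont : ContinuousOn (fun y => deriv φ y / φ y) (Set.Icc (R + 1) XX) := by
    intro y hy
    have hyI : y ∈ Set.Ioi R := Set.mem_Ioi.mpr (by linarith [hy.1])
    exact ((hrd y hyI).continuousAt).continuousWithinAt
  obtain ⟨ξ, hξ, hξeq⟩ := exists_hasDerivAt_eq_slope (fun y => deriv φ y / φ y)
      (fun x => (deriv (deriv φ) x * φ x - deriv φ x * deriv φ x) / φ x ^ 2) hlt hcont
      (fun x hx => hrd x (Set.mem_Ioi.mpr (by linarith [hx.1])))
  have hξIoi : ξ ∈ Set.Ioi R := Set.mem_Ioi.mpr (by linarith [hξ.1])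
  have hdξ := hdle ξ hξIoi
  have hξeq' : (deriv (deriv φ) ξ * φ ξ - deriv φ ξ * deriv φ ξ) / φ ξ ^ 2
      = (deriv φ XX / φ XX - deriv φ (R + 1) / φ (R + 1)) / (XX - (R + 1)) := by
    simpa using hξeq
  rw [hξeq'] at hdξ
  have hb1 := abs_le.mp (hM XX (Set.mem_Ioi.mpr (by linarith)))
  have hb2 := abs_le.mp (hM (R + 1) (Set.mem_Ioi.mpr (by linarith)))
  have hden : XX - (R + 1) = (2 * M + 1) / (m₁ / (4 * Ma ^ 2)) := by rw [hXXdef]; ring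
  rw [hden, div_le_iff₀ (by positivity : (0:ℝ) < (2 * M + 1) / (m₁ / (4 * Ma ^ 2)))] at hdξ
  have hfin : -(m₁ / (4 * Ma ^ 2)) * ((2 * M + 1) / (m₁ / (4 * Ma ^ 2))) = -(2 * M + 1) := by
    field_simp
  rw [hfin] at hdξ
  linarith [hb1.1, hb2.2]

/-- Theorem 2.4, part 1. For every speed `w > w̄`, where
`w̄ = inf_{p>0} H̄(-p)/p`, the solution of the Cauchy problem satisfies
`lim_{t→+∞} sup_{x ≥ wt} |u(t,x)| = 0`. -/
theorem spreading_upper_bound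
    (a q : ℝ → ℝ) (f fs : ℝ → ℝ → ℝ) (γ : ℝ)
    (hst : StandingHyp a q f fs γ)
    (u₀ : ℝ → ℝ) (hu₀_meas : Measurable u₀) (hu₀_supp : HasCompactSupport u₀)
    (hu₀_01 : ∀ x, u₀ x ∈ Set.Icc (0:ℝ) 1) (hu₀_ne : ∃ x, u₀ x ≠ 0)
    (u ut ux uxx : ℝ → ℝ → ℝ)
    (hsol : ClassicalSolution a q f u ut ux uxx)
    (hinit : ∀ x, u 0 x = u₀ x)
    (hu01 : ∀ t ≥ (0:ℝ), ∀ x : ℝ, u t x ∈ Set.Icc (0:ℝ) 1)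
    (Hup : ℝ → ℝ)
    (hHup : ∀ p : ℝ, Filter.Tendsto
      (fun R => lamUpper a (fun x => 2 * p * a x + q x)
        (fun x => a x * p ^ 2 + q x * p + fs x 0) R) Filter.atTop (nhds (Hup p)))
    (w : ℝ) (hw : sInf {v : ℝ | ∃ p > 0, v = Hup (-p) / p} < w) :
    ∀ ε > 0, ∃ T : ℝ, ∀ t ≥ T, ∀ x : ℝ, w * t ≤ x → |u t x| ≤ ε := by
  obtain ⟨⟨hγ0, hγ1⟩, ⟨-, Ma, hMa⟩, ⟨-, Mq, hMq⟩, ⟨ma, hma0, hma⟩, -, ⟨Mf, hMf⟩, hfd,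
    ⟨CH, hCH⟩, hf01, -, hfle, ⟨m₁, hm₁0, R₁, hR₁⟩⟩ := hst
  have hapos : ∀ x, 0 < a x := fun x => lt_of_lt_of_le hma0 (hma x)
  have haM : ∀ x, a x ≤ Ma := fun x => (abs_le.mp (hMa x)).2
  have hMa0 : 0 < Ma := lt_of_lt_of_le (hapos 0) (haM 0)
  have hMq0 : 0 ≤ Mq := le_trans (abs_nonneg _) (hMq 0)
  -- Hölder constant bounds fs · 0
  have hCH0 : 0 ≤ CH := by
    have h := hCH 0 0 ⟨le_refl 0, zero_le_one⟩ 1 ⟨zero_le_one, le_refl 1⟩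
    have h2 : |(0:ℝ) - 1| = 1 := by norm_num
    rw [h2, Real.one_rpow, mul_one] at h
    exact le_trans (abs_nonneg _) h
  have hfs0 : ∀ x, |fs x 0| ≤ CH := by
    intro x
    have hcont : ContinuousOn (f x) (Set.Icc (0:ℝ) 1) :=
      fun s hs => ((hfd x s hs).continuousAt).continuousWithinAt
    obtain ⟨c₁, hc₁, hc₁eq⟩ := exists_hasDerivAt_eq_slope (f x) (fun s => fs x s) one_pos hcont
      (fun s hs => hfd x s ⟨hs.1.le, hs.2.le⟩)
    have hzero : fs x c₁ = 0 := by
      rw [hc₁eq, (hf01 x).1, (hf01 x).2]; norm_num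
    have hH := hCH x 0 ⟨le_refl 0, zero_le_one⟩ c₁ ⟨hc₁.1.le, hc₁.2.le⟩
    rw [hzero, sub_zero] at hH
    calc |fs x 0| ≤ CH * |(0:ℝ) - c₁| ^ γ := hH
      _ ≤ CH * 1 := by
          apply mul_le_mul_of_nonneg_left _ hCH0
          apply Real.rpow_le_one (abs_nonneg _) _ hγ0.le
          rw [zero_sub, abs_neg, abs_of_pos hc₁.1]
          exact hc₁.2.le
      _ = CH := mul_one CH
  -- extract p₀
  have hS0ne : Set.Nonempty {v : ℝ | ∃ p > 0, v = Hup (-p) / p} :=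
    ⟨Hup (-1) / 1, 1, one_pos, rfl⟩
  have hex : ∃ v ∈ {v : ℝ | ∃ p > 0, v = Hup (-p) / p}, v < w := by
    by_cases hbb : BddBelow {v : ℝ | ∃ p > 0, v = Hup (-p) / p}
    · exact (csInf_lt_iff hbb hS0ne).mp hw
    · obtain ⟨v, hv, hlt⟩ := not_bddBelow_iff.mp hbb w
      exact ⟨v, hv, hlt⟩
  obtain ⟨v, ⟨p₀, hp₀, hveq⟩, hvw⟩ := hex
  have hHw : Hup (-p₀) < w * p₀ := by
    rw [hveq] at hvw
    rw [div_lt_iff₀ hp₀] at hvw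
    linarith [hvw]
  -- λ' strictly between Hup (-p₀) and w * p₀
  have hlamA : Hup (-p₀) < (Hup (-p₀) + w * p₀) / 2 := by linarith
  have hlamB : (Hup (-p₀) + w * p₀) / 2 < w * p₀ := by linarith
  have hev1 := Filter.Tendsto.eventually_lt_const hlamA (hHup (-p₀))
  -- support bound
  obtain ⟨S, hS⟩ : ∃ S, ∀ x, S ≤ |x| → u₀ x = 0 := by
    obtain ⟨r, hr⟩ := hu₀_supp.isBounded.subset_closedBall 0
    refine ⟨r + 1, fun x hx => image_eq_zero_of_notMem_tsupport (fun hmem => ?_)⟩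
    have := hr hmem
    rw [Metric.mem_closedBall, Real.dist_eq, sub_zero] at this
    linarith
  -- choose R
  obtain ⟨R, hRlam, hRge⟩ := (hev1.and (Filter.eventually_ge_atTop (max (max R₁ S) 1))).exists
  have hR1 : (1:ℝ) ≤ R := le_trans (le_max_right _ _) hRge
  have hRR₁ : R₁ ≤ R := le_trans (le_trans (le_max_left _ _) (le_max_left _ _)) hRge
  have hRS : S ≤ R := le_trans (le_trans (le_max_right _ _) (le_max_left _ _)) hRge
  -- the set SR is nonempty (constant function 1)
  have hone_adm : AdmissibleOn R (fun _ => (1:ℝ)) := by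
    refine ⟨contDiffOn_const, contDiffOn_const, fun _ _ => one_pos, ⟨0, fun x _ => ?_⟩, ?_⟩
    · simp [deriv_const']
    · simp only [Real.log_one, zero_div]
      exact tendsto_const_nhds
  have hone_mem : (Ma * p₀ ^ 2 + Mq * p₀ + CH) ∈
      {lam : ℝ | ∃ φ, AdmissibleOn R φ ∧ ∀ x ∈ Set.Ioi R,
        Lop a (fun x => 2 * (-p₀) * a x + q x)
          (fun x => a x * (-p₀) ^ 2 + q x * (-p₀) + fs x 0) φ x ≤ lam * φ x} := by
    refine ⟨fun _ => (1:ℝ), hone_adm, fun x _ => ?_⟩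
    have h1 : Lop a (fun x => 2 * (-p₀) * a x + q x)
        (fun x => a x * (-p₀) ^ 2 + q x * (-p₀) + fs x 0) (fun _ => (1:ℝ)) x
        = a x * (-p₀) ^ 2 + q x * (-p₀) + fs x 0 := by
      simp [Lop, deriv_const']
    rw [h1, mul_one]
    have h2 : (-p₀) ^ 2 = p₀ ^ 2 := by ring
    rw [h2]
    have h3 : a x * p₀ ^ 2 ≤ Ma * p₀ ^ 2 :=
      mul_le_mul_of_nonneg_right (haM x) (sq_nonneg p₀)
    have h4 : -Mq ≤ q x := (abs_le.mp (hMq x)).1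
    have h5 : q x * (-p₀) ≤ Mq * p₀ := by nlinarith
    have h6 : fs x 0 ≤ CH := (abs_le.mp (hfs0 x)).2
    linarith
  have hSRne : Set.Nonempty {lam : ℝ | ∃ φ, AdmissibleOn R φ ∧ ∀ x ∈ Set.Ioi R,
      Lop a (fun x => 2 * (-p₀) * a x + q x)
        (fun x => a x * (-p₀) ^ 2 + q x * (-p₀) + fs x 0) φ x ≤ lam * φ x} :=
    ⟨_, hone_mem⟩
  -- extract lam and φ
  have hRlam' : sInf {lam : ℝ | ∃ φ, AdmissibleOn R φ ∧ ∀ x ∈ Set.Ioi R,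
      Lop a (fun x => 2 * (-p₀) * a x + q x)
        (fun x => a x * (-p₀) ^ 2 + q x * (-p₀) + fs x 0) φ x ≤ lam * φ x}
      < (Hup (-p₀) + w * p₀) / 2 := hRlam
  have hexlam : ∃ lam ∈ {lam : ℝ | ∃ φ, AdmissibleOn R φ ∧ ∀ x ∈ Set.Ioi R,
      Lop a (fun x => 2 * (-p₀) * a x + q x)
        (fun x => a x * (-p₀) ^ 2 + q x * (-p₀) + fs x 0) φ x ≤ lam * φ x},
      lam < (Hup (-p₀) + w * p₀) / 2 := by
    by_cases hbb : BddBelow {lam : ℝ | ∃ φ, AdmissibleOn R φ ∧ ∀ x ∈ Set.Ioi R,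
        Lop a (fun x => 2 * (-p₀) * a x + q x)
          (fun x => a x * (-p₀) ^ 2 + q x * (-p₀) + fs x 0) φ x ≤ lam * φ x}
    · exact (csInf_lt_iff hbb hSRne).mp hRlam'
    · obtain ⟨v', hv', hlt'⟩ := not_bddBelow_iff.mp hbb ((Hup (-p₀) + w * p₀) / 2)
      exact ⟨v', hv', hlt'⟩
  obtain ⟨lam, ⟨φ, hadm, hineq⟩, hlamlt⟩ := hexlam
  have hlamw : lam < w * p₀ := lt_trans hlamlt hlamB
  -- positivity of lam
  have hdisc : ∀ x ∈ Set.Ioi R, m₁ ≤ 4 * a x *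
      ((fun x => a x * (-p₀) ^ 2 + q x * (-p₀) + fs x 0) x)
      - ((fun x => 2 * (-p₀) * a x + q x) x) ^ 2 := by
    intro x hx
    have hxR : R < x := hx
    have hx1 : R₁ ≤ |x| := by
      rw [abs_of_pos (by linarith : (0:ℝ) < x)]
      linarith
    have h := hR₁ x hx1
    have heq : 4 * a x * (a x * (-p₀) ^ 2 + q x * (-p₀) + fs x 0)
        - (2 * (-p₀) * a x + q x) ^ 2 = 4 * fs x 0 * a x - q x ^ 2 := by ring
    simp only []
    rw [heq]
    exact h
  have hlampos : 0 < lam :=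
    aux_lam_pos a _ _ Ma m₁ R lam hMa0 hapos haM hm₁0 hdisc φ hadm hineq
  -- destructure admissibility
  obtain ⟨hC1, hC2, hpos, hMb, hlog⟩ := hadm
  have hφcont : ContinuousOn φ (Set.Ici R) := hC1.continuousOn
  have hder := aux_c2_derivs hC2
  have hψRpos : 0 < Real.exp (-p₀ * R) * φ R :=
    mul_pos (Real.exp_pos _) (hpos R (le_refl R))
  -- derivative facts for ψ
  have hψd : ∀ x ∈ Set.Ioi R, HasDerivAt (fun y => Real.exp (-p₀ * y) * φ y)
      (Real.exp (-p₀ * x) * (deriv φ x - p₀ * φ x)) x := by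
    intro x hx
    have h1 : HasDerivAt (fun y : ℝ => Real.exp (-p₀ * y)) (Real.exp (-p₀ * x) * (-p₀ * 1)) x :=
      ((hasDerivAt_id x).const_mul (-p₀)).exp
    have h2 := h1.mul (hder x hx).1
    refine h2.congr_deriv ?_
    ring
  have hψ1d : ∀ x ∈ Set.Ioi R, HasDerivAt (fun y => Real.exp (-p₀ * y) * (deriv φ y - p₀ * φ y))
      (Real.exp (-p₀ * x) * (deriv (deriv φ) x - 2 * p₀ * deriv φ x + p₀ ^ 2 * φ x)) x := by
    intro x hx
    have h1 : HasDerivAt (fun y : ℝ => Real.exp (-p₀ * y)) (Real.exp (-p₀ * x) * (-p₀ * 1)) x :=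
      ((hasDerivAt_id x).const_mul (-p₀)).exp
    have h2 : HasDerivAt (fun y => deriv φ y - p₀ * φ y)
        (deriv (deriv φ) x - p₀ * deriv φ x) x :=
      (hder x hx).2.sub ((hder x hx).1.const_mul p₀)
    have h3 := h1.mul h2
    refine h3.congr_deriv ?_
    ring
  -- supersolution inequality for ψ
  have hsup : ∀ x ∈ Set.Ioi R,
      a x * (Real.exp (-p₀ * x) * (deriv (deriv φ) x - 2 * p₀ * deriv φ x + p₀ ^ 2 * φ x))
      + q x * (Real.exp (-p₀ * x) * (deriv φ x - p₀ * φ x))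
      + fs x 0 * (Real.exp (-p₀ * x) * φ x) ≤ lam * (Real.exp (-p₀ * x) * φ x) := by
    intro x hx
    have h1 := hineq x hx
    have h2 : Real.exp (-p₀ * x) * Lop a (fun x => 2 * (-p₀) * a x + q x)
        (fun x => a x * (-p₀) ^ 2 + q x * (-p₀) + fs x 0) φ x
        ≤ Real.exp (-p₀ * x) * (lam * φ x) :=
      mul_le_mul_of_nonneg_left h1 (Real.exp_pos _).le
    have hLHS : a x * (Real.exp (-p₀ * x) * (deriv (deriv φ) x - 2 * p₀ * deriv φ x + p₀ ^ 2 * φ x))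
        + q x * (Real.exp (-p₀ * x) * (deriv φ x - p₀ * φ x))
        + fs x 0 * (Real.exp (-p₀ * x) * φ x)
        = Real.exp (-p₀ * x) * Lop a (fun x => 2 * (-p₀) * a x + q x)
          (fun x => a x * (-p₀) ^ 2 + q x * (-p₀) + fs x 0) φ x := by
      simp only [Lop]
      ring
    rw [hLHS, show lam * (Real.exp (-p₀ * x) * φ x) = Real.exp (-p₀ * x) * (lam * φ x) by ring]
    exact h2
  obtain ⟨hucont, hueq, -, -, -⟩ := hsol
  -- comparison
  have hcomp : ∀ t, 0 ≤ t → ∀ x, R ≤ x →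
      0 ≤ (1 / (Real.exp (-p₀ * R) * φ R)) * Real.exp (lam * t) * (Real.exp (-p₀ * x) * φ x)
        - u t x := by
    apply aux_comparison a q (fun x => fs x 0) Ma Mq CH R hapos haM hMq hfs0
      (fun t x => (1 / (Real.exp (-p₀ * R) * φ R)) * Real.exp (lam * t) * (Real.exp (-p₀ * x) * φ x) - u t x)
      (fun t x => (1 / (Real.exp (-p₀ * R) * φ R)) * (Real.exp (lam * t) * lam) * (Real.exp (-p₀ * x) * φ x) - ut t x)
      (fun t x => (1 / (Real.exp (-p₀ * R) * φ R)) * Real.exp (lam * t) * (Real.exp (-p₀ * x) * (deriv φ x - p₀ * φ x)) - ux t x)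
      (fun t x => (1 / (Real.exp (-p₀ * R) * φ R)) * Real.exp (lam * t) * (Real.exp (-p₀ * x) * (deriv (deriv φ) x - 2 * p₀ * deriv φ x + p₀ ^ 2 * φ x)) - uxx t x)
    -- continuity
    · apply ContinuousOn.sub
      · have h1 : ContinuousOn (fun pr : ℝ × ℝ => Real.exp (-p₀ * pr.2) * φ pr.2)
            (Set.Ici (0:ℝ) ×ˢ Set.Ici R) := by
          apply ContinuousOn.mul
          · exact Continuous.continuousOn (by fun_prop)
          · exact hφcont.comp continuous_snd.continuousOn (fun pr hpr => hpr.2)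
        exact (Continuous.continuousOn (by fun_prop :
          Continuous fun pr : ℝ × ℝ => (1 / (Real.exp (-p₀ * R) * φ R)) * Real.exp (lam * pr.1))).mul h1
      · exact hucont.mono (fun pr hpr => ⟨hpr.1, trivial⟩)
    -- PDE inequality
    · intro t ht x hx
      obtain ⟨hut, hux, huxx, heq⟩ := hueq t ht x
      have hE : HasDerivAt (fun τ : ℝ => Real.exp (lam * τ)) (Real.exp (lam * t) * (lam * 1)) t :=
        ((hasDerivAt_id t).const_mul lam).exp
      refine ⟨?_, ?_, ?_, ?_⟩
      · have h1 := ((hE.const_mul (1 / (Real.exp (-p₀ * R) * φ R))).mul_const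
          (Real.exp (-p₀ * x) * φ x)).sub hut
        refine h1.congr_deriv ?_
        ring
      · exact ((hψd x hx).const_mul
          ((1 / (Real.exp (-p₀ * R) * φ R)) * Real.exp (lam * t))).sub hux
      · exact ((hψ1d x hx).const_mul
          ((1 / (Real.exp (-p₀ * R) * φ R)) * Real.exp (lam * t))).sub huxx
      · have hCepos : (0:ℝ) ≤ (1 / (Real.exp (-p₀ * R) * φ R)) * Real.exp (lam * t) := by
          positivity
        have h2 := mul_le_mul_of_nonneg_left (hsup x hx) hCepos
        have h3 : f x (u t x) ≤ fs x 0 * u t x := hfle x (u t x) (hu01 t ht.le x)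
        nlinarith [h2, heq]
    -- bounded below by -1
    · intro t ht x hx
      have hψx : 0 ≤ Real.exp (-p₀ * x) * φ x :=
        (mul_pos (Real.exp_pos _) (hpos x hx)).le
      have h1 : 0 ≤ (1 / (Real.exp (-p₀ * R) * φ R)) * Real.exp (lam * t) * (Real.exp (-p₀ * x) * φ x) :=
        mul_nonneg (by positivity) hψx
      have h2 := (hu01 t ht x).2
      linarith
    -- initial condition
    · intro x hx
      have hu0 : u 0 x = 0 := by
        rw [hinit x]
        apply hS
        rw [abs_of_pos (by linarith : (0:ℝ) < x)]
        linarith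
      rw [hu0]
      have hψx : 0 ≤ Real.exp (-p₀ * x) * φ x :=
        (mul_pos (Real.exp_pos _) (hpos x (le_trans (by linarith : R ≤ R) hx))).le
      have := mul_nonneg (by positivity : (0:ℝ) ≤ (1 / (Real.exp (-p₀ * R) * φ R)) * Real.exp (lam * 0)) hψx
      linarith
    -- boundary x = R
    · intro t ht
      have h1 : (1 / (Real.exp (-p₀ * R) * φ R)) * Real.exp (lam * t) * (Real.exp (-p₀ * R) * φ R)
          = Real.exp (lam * t) := by
        field_simp
        exact div_self (ne_of_gt (hpos R (le_refl R)))
      have h2 : (1:ℝ) ≤ Real.exp (lam * t) := Real.one_le_exp (by positivity)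
      have h3 := (hu01 t ht R).2
      rw [h1]
      linarith
  -- conclusion
  intro ε hε
  have hwpos : 0 < w := by nlinarith
  have hη₀pos : 0 < (w * p₀ - lam) / (2 * w) := div_pos (by linarith) (by linarith)
  have hp₀η₀ : 0 < p₀ - (w * p₀ - lam) / (2 * w) := by
    rw [lt_sub_iff_add_lt, zero_add, div_lt_iff₀ (by linarith : (0:ℝ) < 2 * w)]
    nlinarith
  have hβ : 0 < (p₀ - (w * p₀ - lam) / (2 * w)) * w - lam := by
    have h1 : (p₀ - (w * p₀ - lam) / (2 * w)) * w = w * p₀ - (w * p₀ - lam) / 2 := by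
      field_simp
    rw [h1]
    linarith
  have hev2 : ∀ᶠ x in Filter.atTop, |Real.log (φ x) / x| < (w * p₀ - lam) / (2 * w) := by
    have h := Metric.tendsto_nhds.mp hlog ((w * p₀ - lam) / (2 * w)) hη₀pos
    exact h.mono (fun x hx => by rw [Real.dist_eq, sub_zero] at hx; exact hx)
  obtain ⟨X₁, hX₁⟩ := Filter.eventually_atTop.mp
    (hev2.and (Filter.eventually_ge_atTop (max R 1)))
  have hbound : ∀ x, X₁ ≤ x → φ x ≤ Real.exp ((w * p₀ - lam) / (2 * w) * x) := by
    intro x hx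
    obtain ⟨h1, h2⟩ := hX₁ x hx
    have hx1 : (1:ℝ) ≤ x := le_trans (le_max_right R 1) h2
    have hφx : 0 < φ x := hpos x (le_trans (le_max_left R 1) h2)
    have h3 : Real.log (φ x) / x ≤ (w * p₀ - lam) / (2 * w) := (abs_lt.mp h1).2.le
    rw [div_le_iff₀ (by linarith : (0:ℝ) < x)] at h3
    calc φ x = Real.exp (Real.log (φ x)) := (Real.exp_log hφx).symm
      _ ≤ Real.exp ((w * p₀ - lam) / (2 * w) * x) := Real.exp_le_exp.mpr (by linarith)
  have hdecay : Filter.Tendsto (fun t => (1 / (Real.exp (-p₀ * R) * φ R))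
      * Real.exp (-(((p₀ - (w * p₀ - lam) / (2 * w)) * w - lam) * t))) Filter.atTop (nhds 0) := by
    have h1 : Filter.Tendsto (fun t : ℝ => ((p₀ - (w * p₀ - lam) / (2 * w)) * w - lam) * t)
        Filter.atTop Filter.atTop := Filter.Tendsto.const_mul_atTop hβ Filter.tendsto_id
    have h2 : Filter.Tendsto (fun t : ℝ => -(((p₀ - (w * p₀ - lam) / (2 * w)) * w - lam) * t))
        Filter.atTop Filter.atBot := tendsto_neg_atTop_atBot.comp h1
    have h3 := Real.tendsto_exp_atBot.comp h2
    have h4 := h3.const_mul (1 / (Real.exp (-p₀ * R) * φ R))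
    simpa using h4
  obtain ⟨T₁, hT₁⟩ := Filter.eventually_atTop.mp (hdecay.eventually_lt_const hε)
  refine ⟨max T₁ (max X₁ 1 / w), ?_⟩
  intro t ht x hwx
  have ht₁ : T₁ ≤ t := le_trans (le_max_left _ _) ht
  have ht₂ : max X₁ 1 / w ≤ t := le_trans (le_max_right _ _) ht
  have hwt : max X₁ 1 ≤ w * t := by
    rw [div_le_iff₀ hwpos] at ht₂
    linarith
  have htpos : 0 < t := by nlinarith [le_trans (le_max_right X₁ 1) hwt]
  have hxX₁ : X₁ ≤ x := le_trans (le_trans (le_max_left _ _) hwt) hwx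
  have hxR : R ≤ x := by
    have := (hX₁ x hxX₁).2
    linarith [le_trans (le_max_left R 1) this]
  have hu_le : u t x ≤ (1 / (Real.exp (-p₀ * R) * φ R)) * Real.exp (lam * t)
      * (Real.exp (-p₀ * x) * φ x) := by
    linarith [hcomp t htpos.le x hxR]
  have hu0 : 0 ≤ u t x := (hu01 t htpos.le x).1
  have hψle : Real.exp (-p₀ * x) * φ x
      ≤ Real.exp (-p₀ * x) * Real.exp ((w * p₀ - lam) / (2 * w) * x) :=
    mul_le_mul_of_nonneg_left (hbound x hxX₁) (Real.exp_pos _).le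
  have hexpeq : Real.exp (lam * t) * (Real.exp (-p₀ * x) * Real.exp ((w * p₀ - lam) / (2 * w) * x))
      = Real.exp (lam * t - (p₀ - (w * p₀ - lam) / (2 * w)) * x) := by
    rw [← Real.exp_add, ← Real.exp_add]
    ring_nf
  have h3 : lam * t - (p₀ - (w * p₀ - lam) / (2 * w)) * x
      ≤ -(((p₀ - (w * p₀ - lam) / (2 * w)) * w - lam) * t) := by
    nlinarith [mul_le_mul_of_nonneg_left hwx hp₀η₀.le]
  have hCpos : (0:ℝ) < 1 / (Real.exp (-p₀ * R) * φ R) := by positivity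
  have hchain : (1 / (Real.exp (-p₀ * R) * φ R)) * Real.exp (lam * t)
      * (Real.exp (-p₀ * x) * φ x)
      ≤ (1 / (Real.exp (-p₀ * R) * φ R))
        * Real.exp (-(((p₀ - (w * p₀ - lam) / (2 * w)) * w - lam) * t)) := by
    have h1 := mul_le_mul_of_nonneg_left hψle
      (by positivity : (0:ℝ) ≤ (1 / (Real.exp (-p₀ * R) * φ R)) * Real.exp (lam * t))
    have h2 := mul_le_mul_of_nonneg_left (Real.exp_le_exp.mpr h3) hCpos.le
    calc (1 / (Real.exp (-p₀ * R) * φ R)) * Real.exp (lam * t) * (Real.exp (-p₀ * x) * φ x)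
        ≤ (1 / (Real.exp (-p₀ * R) * φ R)) * Real.exp (lam * t)
          * (Real.exp (-p₀ * x) * Real.exp ((w * p₀ - lam) / (2 * w) * x)) := by
          rw [mul_assoc, mul_assoc] at h1 ⊢
          exact h1
      _ = (1 / (Real.exp (-p₀ * R) * φ R))
          * Real.exp (lam * t - (p₀ - (w * p₀ - lam) / (2 * w)) * x) := by
          rw [mul_assoc, hexpeq]
      _ ≤ (1 / (Real.exp (-p₀ * R) * φ R))
          * Real.exp (-(((p₀ - (w * p₀ - lam) / (2 * w)) * w - lam) * t)) := h2
  rw [abs_of_nonneg hu0]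
  linarith [hT₁ t ht₁, hu_le, hchain]
end
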